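/- arXiv:2408.10452 — 6 statements merged into one kernel-verified Lean document; each statement's English description precedes it below -/
import Mathlib

section
/- For any finite graph G on n vertices, B(G) = n−1 if and only if Δ(G) = n−1 (i.e., G has a universal vertex). -/
open SimpleGraph

/-- A token may stay in place or move along an edge. -/
def stepRel {V : Type*} (G : SimpleGraph V) (x y : V) : Prop := x = y ∨ G.Adj x y

/-- The sequence of positions in the pursuit game: `(gamePlay ...) n` is the pair
(pursuer positions, evader position) after `n` full rounds; at time `0` the pursuers
have been placed (`binit`) and then the evader placed (`pinit binit`). In each round,
the pursuers move first (via `bmove`, seeing the current state), then the evader moves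
(via `pmove`, seeing the pursuers' new positions and his own position). -/
def gamePlay {V : Type*} {k : ℕ} (binit : Fin k → V) (bmove : (Fin k → V) → V → Fin k → V)
    (pinit : (Fin k → V) → V) (pmove : (Fin k → V) → V → V) : ℕ → (Fin k → V) × V
  | 0 => (binit, pinit binit)
  | n + 1 =>
      let s := gamePlay binit bmove pinit pmove n
      (bmove s.1 s.2, pmove (bmove s.1 s.2) s.2)

/-- `k` bodyguards have a winning strategy on `G`: they can place themselves and move so
that, against every president strategy, after finitely many rounds they occupy the whole
open neighbourhood of the president's vertex at the end of every bodyguard turn. -/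
def BodyguardsWin {V : Type*} (G : SimpleGraph V) (k : ℕ) : Prop :=
  ∃ (binit : Fin k → V) (bmove : (Fin k → V) → V → Fin k → V),
    (∀ bs p i, stepRel G (bs i) (bmove bs p i)) ∧
    ∀ (pinit : (Fin k → V) → V) (pmove : (Fin k → V) → V → V),
      (∀ bs p, stepRel G p (pmove bs p)) →
      ∃ N, ∀ n, N ≤ n →
        ∀ v, G.Adj (gamePlay binit bmove pinit pmove n).2 v →
          ∃ i, (gamePlay binit bmove pinit pmove (n + 1)).1 i = v

/-- The bodyguard number of a finite graph. -/
noncomputable def bodyguardNumber {V : Type*} (G : SimpleGraph V) [Fintype V] : ℕ :=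
  sInf {k | BodyguardsWin G k}

/-- `k` cops have a winning strategy in classic Cops and Robber on `G`: at some point a cop
occupies the same vertex as the robber (either right after a cop move, or at the end of a
round). -/
def CopsWin {V : Type*} (G : SimpleGraph V) (k : ℕ) : Prop :=
  ∃ (cinit : Fin k → V) (cmove : (Fin k → V) → V → Fin k → V),
    (∀ cs r i, stepRel G (cs i) (cmove cs r i)) ∧
    ∀ (rinit : (Fin k → V) → V) (rmove : (Fin k → V) → V → V),
      (∀ cs r, stepRel G r (rmove cs r)) →
      ∃ n i, (gamePlay cinit cmove rinit rmove (n + 1)).1 i =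
                (gamePlay cinit cmove rinit rmove n).2 ∨
             (gamePlay cinit cmove rinit rmove n).1 i =
                (gamePlay cinit cmove rinit rmove n).2

/-- The cop number of a finite graph. -/
noncomputable def copNumber {V : Type*} (G : SimpleGraph V) [Fintype V] : ℕ :=
  sInf {k | CopsWin G k}

namespace BGP

variable {V : Type*} {G : SimpleGraph V}

/-! ### next-in-list machinery -/

def nxt [DecidableEq V] : List V → V → V
  | x :: y :: t, v => if v = x then y else nxt (y :: t) v
  | _, v => v

lemma nxt_not_mem [DecidableEq V] : ∀ (l : List V) (v : V), v ∉ l → nxt l v = v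
  | [], _, _ => rfl
  | [_], _, _ => rfl
  | x :: y :: t, v, hv => by
      have hvx : v ≠ x := fun h => hv (h ▸ List.mem_cons_self)
      have : v ∉ y :: t := fun h => hv (List.mem_cons_of_mem _ h)
      simp only [nxt, if_neg hvx]
      exact nxt_not_mem (y :: t) v this

lemma stepRel_nxt [DecidableEq V] : ∀ (l : List V), l.Chain' G.Adj → ∀ v, stepRel G v (nxt l v)
  | [], _, v => Or.inl rfl
  | [_], _, v => Or.inl rfl
  | x :: y :: t, hc, v => by
      by_cases hvx : v = x
      · subst hvx
        simp only [nxt, if_pos rfl]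
        exact Or.inr (List.isChain_cons_cons.mp hc).1
      · simp only [nxt, if_neg hvx]
        exact stepRel_nxt (y :: t) (List.isChain_cons_cons.mp hc).2 v

lemma nxt_cover [DecidableEq V] : ∀ (l : List V), l.Nodup → ∀ (a : V), l.getLast? = some a →
    ∀ u ∈ l, l.head? ≠ some u → ∃ t ∈ l, t ≠ a ∧ nxt l t = u
  | [], _, a, _, u, hu, _ => absurd hu List.not_mem_nil
  | [x], _, a, _, u, hu, hh => by
      simp only [List.mem_singleton] at hu
      exact absurd (by rw [hu]; rfl) hh
  | x :: y :: t, hn, a, hla, u, hu, hh => by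
      have hx_nmem : x ∉ y :: t := (List.nodup_cons.mp hn).1
      have hla' : (y :: t).getLast? = some a := by
        rwa [List.getLast?_cons_cons] at hla
      have hxa : x ≠ a := fun h => hx_nmem (h ▸ List.mem_of_mem_getLast? (by rw [hla']; rfl))
      by_cases huy : u = y
      · exact ⟨x, List.mem_cons_self, hxa, by simp [nxt, huy]⟩
      · have hux : u ≠ x := by
          intro h
          exact hh (by rw [List.head?_cons, h])
        have hu' : u ∈ y :: t := by
          rcases List.mem_cons.mp hu with h | h
          · exact absurd h hux
          · exact h
        have hn' : (y :: t).Nodup := (List.nodup_cons.mp hn).2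
        have hh' : (y :: t).head? ≠ some u := by
          rw [List.head?_cons]
          intro h
          exact huy (Option.some.inj h).symm
        obtain ⟨s, hs_mem, hs_ne, hs_nxt⟩ := nxt_cover (y :: t) hn' a hla' u hu' hh'
        have hsx : s ≠ x := fun h => hx_nmem (h ▸ hs_mem)
        exact ⟨s, List.mem_cons_of_mem _ hs_mem, hs_ne, by simp only [nxt, if_neg hsx]; exact hs_nxt⟩

/-- A route: a nonempty nodup adjacency-path presented as a list from `c` to `a`. -/
def Route (G : SimpleGraph V) (l : List V) (c a : V) : Prop :=
  l.head? = some c ∧ l.getLast? = some a ∧ l.Chain' G.Adj ∧ l.Nodup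

lemma Route.mem_head {l : List V} {c a : V} (h : Route G l c a) : c ∈ l :=
  List.mem_of_mem_head? (by rw [h.1]; rfl)

lemma Route.mem_last {l : List V} {c a : V} (h : Route G l c a) : a ∈ l :=
  List.mem_of_mem_getLast? (by rw [h.2.1]; rfl)

lemma Route.singleton (a : V) : Route G [a] a a := by
  refine ⟨rfl, rfl, List.isChain_singleton a, List.nodup_singleton a⟩

lemma Route.pair {a b : V} (h : G.Adj a b) : Route G [a, b] a b := by
  refine ⟨rfl, rfl, ?_, ?_⟩
  · exact List.isChain_cons_cons.mpr ⟨h, List.isChain_singleton b⟩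
  · simp [h.ne]

/-- Key move lemma: two vertex-disjoint routes, from new hole `c` to old hole `a` and
from new hole `d` to old hole `b`, give a legal simultaneous guard move. -/
lemma move_exists [DecidableEq V] {a b c d : V} {l₁ l₂ : List V}
    (h₁ : Route G l₁ c a) (h₂ : Route G l₂ d b)
    (hdisj : ∀ v ∈ l₁, v ∉ l₂) :
    ∃ f : V → V, (∀ v, stepRel G v (f v)) ∧
      (∀ u, u ≠ c → u ≠ d → ∃ t, t ≠ a ∧ t ≠ b ∧ f t = u) := by
  classical
  refine ⟨fun v => if v ∈ l₁ then nxt l₁ v else nxt l₂ v, ?_, ?_⟩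
  · intro v
    by_cases hv : v ∈ l₁
    · simp only [if_pos hv]; exact stepRel_nxt l₁ h₁.2.2.1 v
    · simp only [if_neg hv]; exact stepRel_nxt l₂ h₂.2.2.1 v
  · intro u huc hud
    by_cases hu1 : u ∈ l₁
    · obtain ⟨t, ht_mem, ht_ne, ht_nxt⟩ :=
        nxt_cover l₁ h₁.2.2.2 a h₁.2.1 u hu1
          (by rw [h₁.1]; intro h; exact huc (Option.some.inj h).symm)
      refine ⟨t, ht_ne, ?_, by simp [if_pos ht_mem, ht_nxt]⟩
      intro h; exact hdisj t ht_mem (h ▸ h₂.mem_last)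
    · by_cases hu2 : u ∈ l₂
      · obtain ⟨t, ht_mem, ht_ne, ht_nxt⟩ :=
          nxt_cover l₂ h₂.2.2.2 b h₂.2.1 u hu2
            (by rw [h₂.1]; intro h; exact hud (Option.some.inj h).symm)
        have ht1 : t ∉ l₁ := fun h => hdisj t h ht_mem
        refine ⟨t, ?_, ht_ne, by simp [if_neg ht1, ht_nxt]⟩
        intro h; exact ht1 (h ▸ h₁.mem_last)
      · refine ⟨u, ?_, ?_, ?_⟩
        · intro h; exact hu1 (h ▸ h₁.mem_last)
        · intro h; exact hu2 (h ▸ h₂.mem_last)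
        · simp only [if_neg hu1]
          exact nxt_not_mem l₂ u hu2

/-! ### Reachability avoiding a set of vertices -/

def RA (G : SimpleGraph V) (X : Set V) (u v : V) : Prop :=
  ∃ w : G.Walk u v, ∀ x ∈ w.support, x ∉ X

lemma RA.left_not_mem {X : Set V} {u v : V} (h : RA G X u v) : u ∉ X :=
  h.choose_spec u h.choose.start_mem_support

lemma RA.right_not_mem {X : Set V} {u v : V} (h : RA G X u v) : v ∉ X :=
  h.choose_spec v h.choose.end_mem_support

lemma RA.refl' {X : Set V} {u : V} (hu : u ∉ X) : RA G X u u :=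
  ⟨SimpleGraph.Walk.nil, by intro x hx; simp only [SimpleGraph.Walk.support_nil,
    List.mem_singleton] at hx; rwa [hx]⟩

lemma RA.symm {X : Set V} {u v : V} (h : RA G X u v) : RA G X v u := by
  obtain ⟨w, hw⟩ := h
  exact ⟨w.reverse, by intro x hx; rw [SimpleGraph.Walk.support_reverse] at hx
                       exact hw x (List.mem_reverse.mp hx)⟩

lemma RA.trans {X : Set V} {u v z : V} (h1 : RA G X u v) (h2 : RA G X v z) : RA G X u z := by
  obtain ⟨w1, hw1⟩ := h1
  obtain ⟨w2, hw2⟩ := h2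
  refine ⟨w1.append w2, ?_⟩
  intro x hx
  rw [SimpleGraph.Walk.support_append, List.mem_append] at hx
  rcases hx with hx | hx
  · exact hw1 x hx
  · exact hw2 x (List.mem_of_mem_tail hx)

lemma RA.adj {X : Set V} {u v : V} (h : G.Adj u v) (hu : u ∉ X) (hv : v ∉ X) : RA G X u v :=
  ⟨h.toWalk, by
    intro x hx
    rcases List.mem_cons.mp hx with h' | h'
    · rwa [h']
    · simp only [SimpleGraph.Walk.support_cons, SimpleGraph.Walk.support_nil] at hx
      rcases List.mem_cons.mp hx with h'' | h''
      · rwa [h'']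
      · simp only [List.mem_singleton] at h''
        rwa [h'']⟩

lemma RA.mono {X Y : Set V} {u v : V} (hXY : Y ⊆ X) (h : RA G X u v) : RA G Y u v := by
  obtain ⟨w, hw⟩ := h
  exact ⟨w, fun x hx hxY => hw x hx (hXY hxY)⟩

lemma RA.route [DecidableEq V] {X : Set V} {u v : V} (h : RA G X u v) :
    ∃ l : List V, Route G l u v ∧ ∀ x ∈ l, x ∉ X := by
  obtain ⟨w, hw⟩ := h
  have hp : w.bypass.IsPath := SimpleGraph.Walk.bypass_isPath w
  refine ⟨w.bypass.support, ⟨?_, ?_, ?_, ?_⟩, ?_⟩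
  · rw [SimpleGraph.Walk.support_eq_cons]; rfl
  · rw [List.getLast?_eq_getLast w.bypass.support_ne_nil,
      SimpleGraph.Walk.getLast_support]
  · exact SimpleGraph.Walk.isChain_adj_support _
  · exact hp.support_nodup
  · intro x hx
    exact hw x (SimpleGraph.Walk.support_bypass_subset w hx)

/-- If `a` reaches `u` avoiding `X` but not avoiding additionally `q`,
then `a` reaches `q` avoiding `X`. -/
lemma RA_prefix [DecidableEq V] {X : Set V} {a u q : V}
    (h : RA G X a u) (h2 : ¬ RA G (insert q X) a u) : RA G X a q := by
  obtain ⟨w, hw⟩ := h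
  have hsub := SimpleGraph.Walk.support_bypass_subset w
  by_cases hq : q ∈ w.bypass.support
  · refine ⟨w.bypass.takeUntil q hq, ?_⟩
    intro x hx
    exact hw x (hsub (SimpleGraph.Walk.support_takeUntil_subset _ hq hx))
  · exact absurd ⟨w.bypass, fun x hx hmem => by
      rcases Set.mem_insert_iff.mp hmem with h' | h'
      · exact hq (h' ▸ hx)
      · exact hw x (hsub hx) h'⟩ h2

/-- If `a` reaches `u` avoiding `X` but not avoiding additionally `q` (`q ≠ a`),
then `q` reaches `u` avoiding `X` and also avoiding `a`. -/
lemma RA_escape [DecidableEq V] {X : Set V} {a u q : V} (hqa : q ≠ a)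
    (h : RA G X a u) (h2 : ¬ RA G (insert q X) a u) : RA G (insert a X) q u := by
  obtain ⟨w, hw⟩ := h
  have hsub := SimpleGraph.Walk.support_bypass_subset w
  have hnd : w.bypass.support.Nodup := (SimpleGraph.Walk.bypass_isPath w).support_nodup
  by_cases hq : q ∈ w.bypass.support
  · refine ⟨w.bypass.dropUntil q hq, ?_⟩
    have hx_na : a ∉ (w.bypass.dropUntil q hq).support := by
      intro ha
      have hspec := SimpleGraph.Walk.take_spec w.bypass hq
      have hsupp : w.bypass.support
          = (w.bypass.takeUntil q hq).support ++ (w.bypass.dropUntil q hq).support.tail := by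
        rw [← SimpleGraph.Walk.support_append, hspec]
      have hnd' : ((w.bypass.takeUntil q hq).support
          ++ (w.bypass.dropUntil q hq).support.tail).Nodup := by rw [← hsupp]; exact hnd
      have ha_take : a ∈ (w.bypass.takeUntil q hq).support :=
        SimpleGraph.Walk.start_mem_support _
      rcases List.mem_cons.mp
          (by rw [← SimpleGraph.Walk.support_eq_cons]; exact ha :
            a ∈ q :: (w.bypass.dropUntil q hq).support.tail) with h' | h'
      · exact hqa h'.symm
      · exact (List.disjoint_of_nodup_append hnd') ha_take h'
    intro x hx hmem
    rcases Set.mem_insert_iff.mp hmem with h' | h'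
    · exact hx_na (h' ▸ hx)
    · exact hw x (hsub (SimpleGraph.Walk.support_dropUntil_subset _ hq hx)) h'
  · exact absurd ⟨w.bypass, fun x hx hmem => by
      rcases Set.mem_insert_iff.mp hmem with h' | h'
      · exact hq (h' ▸ hx)
      · exact hw x (hsub hx) h'⟩ h2

/-- Last-exit lemma: if `z` is not reachable avoiding `x` from any element of `X`,
then `x` reaches `z` avoiding `X`. -/
lemma RA_of_not_reach [DecidableEq V] (hpre : G.Preconnected) {x z : V} (X : Set V)
    (hx : x ∉ X) (hz : z ∉ X) (h : ∀ q ∈ X, ¬ RA G {x} q z) : RA G X x z := by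
  obtain ⟨w⟩ := hpre x z
  have hnd : w.bypass.support.Nodup := (SimpleGraph.Walk.bypass_isPath w).support_nodup
  refine ⟨w.bypass, ?_⟩
  intro y hy hyX
  have hyx : y ≠ x := fun h' => hx (h' ▸ hyX)
  apply h y hyX
  refine ⟨w.bypass.dropUntil y hy, ?_⟩
  intro t ht htx
  simp only [Set.mem_singleton_iff] at htx
  rw [htx] at ht
  -- x occurs in the dropUntil-walk; but x is the head of the bypass path
  have hspec := SimpleGraph.Walk.take_spec w.bypass hy
  have hsupp : w.bypass.support
      = (w.bypass.takeUntil y hy).support ++ (w.bypass.dropUntil y hy).support.tail := by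
    rw [← SimpleGraph.Walk.support_append, hspec]
  have hnd' : ((w.bypass.takeUntil y hy).support
      ++ (w.bypass.dropUntil y hy).support.tail).Nodup := by rw [← hsupp]; exact hnd
  have hx_take : x ∈ (w.bypass.takeUntil y hy).support :=
    SimpleGraph.Walk.start_mem_support _
  rcases List.mem_cons.mp
      (by rw [← SimpleGraph.Walk.support_eq_cons]; exact ht :
        x ∈ y :: (w.bypass.dropUntil y hy).support.tail) with h' | h'
  · exact hyx h'.symm
  · exact (List.disjoint_of_nodup_append hnd') hx_take h'

/-! ### Domination predicates -/

/-- `x` dominates `v`: every vertex reachable from `v` avoiding `x` is adjacent to `x`. -/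
def dom (G : SimpleGraph V) (x v : V) : Prop := ∀ u, RA G {x} v u → G.Adj x u

lemma dom_adj {x v : V} (hvx : v ≠ x) (h : dom G x v) : G.Adj x v :=
  h v (RA.refl' (by simp [hvx]))

/-- A safe hole pair: no vertex jointly dominates `a` and `b`. -/
def Upair (G : SimpleGraph V) (a b : V) : Prop :=
  ∀ x, ¬ ((x = a ∨ dom G x a) ∧ (x = b ∨ dom G x b))

lemma Upair.symm {a b : V} (h : Upair G a b) : Upair G b a :=
  fun x hx => h x ⟨hx.2, hx.1⟩

/-- `z` is at distance at least 3 from `p`. -/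
def Far3 (G : SimpleGraph V) (p z : V) : Prop :=
  z ≠ p ∧ ¬ G.Adj p z ∧ ∀ x, ¬ (G.Adj p x ∧ G.Adj x z)

lemma far3_Upair {p z : V} (h : Far3 G p z) : Upair G p z := by
  intro x hx
  by_cases hxp : x = p
  · subst hxp
    rcases hx.2 with h2 | h2
    · exact h.1 h2.symm
    · exact h.2.1 (dom_adj (Ne.symm (fun he => h.1 he.symm)) h2)
  · by_cases hxz : x = z
    · subst hxz
      rcases hx.1 with h1 | h1
      · exact hxp h1
      · exact h.2.1 (dom_adj (Ne.symm hxp) h1).symm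
    · have hadj_p : G.Adj x p := by
        rcases hx.1 with h1 | h1
        · exact absurd h1 hxp
        · exact dom_adj (Ne.symm hxp) h1
      have hadj_z : G.Adj x z := by
        rcases hx.2 with h2 | h2
        · exact absurd h2 hxz
        · exact dom_adj (Ne.symm hxz) h2
      exact h.2.2 x ⟨hadj_p.symm, hadj_z⟩

lemma far3_of_cut {x p z : V} (hxp : G.Adj x p) (hz : z ≠ x) (hnadj : ¬ G.Adj x z)
    (hcut : ¬ RA G {x} p z) : Far3 G p z := by
  have hpx : p ≠ x := hxp.ne'
  refine ⟨?_, ?_, ?_⟩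
  · intro h; exact hcut (by rw [h]; exact RA.refl' (by simp [hpx]))
  · intro h; exact hcut (RA.adj h (by simp [hpx]) (by simp [hz]))
  · rintro w ⟨hpw, hwz⟩
    have hwx : w ≠ x := fun h => hnadj (h ▸ hwz)
    exact hcut ((RA.adj hpw (by simp [hpx]) (by simp [hwx])).trans
      (RA.adj hwz (by simp [hwx]) (by simp [hz])))

def NoUniv (G : SimpleGraph V) : Prop := ∀ x, ∃ z, z ≠ x ∧ ¬ G.Adj x z

/-- Escape lemma: if `x` is adjacent to `p` and dominates `p`, then there is a far vertex
`z` (from `p`) reachable from `x` avoiding `p` and any fixed `b` in `p`'s territory. -/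
lemma escape [DecidableEq V] (hpre : G.Preconnected) (hnu : NoUniv G) {x p b : V}
    (hxp : G.Adj x p) (hdom : dom G x p) (hb : b ≠ x) (hrb : RA G {x} p b) :
    ∃ z, Far3 G p z ∧ RA G {p, b} x z := by
  obtain ⟨z, hzx, hznadj⟩ := hnu x
  have hcut : ¬ RA G {x} p z := fun h => hznadj (hdom z h)
  have hfar := far3_of_cut hxp hzx hznadj hcut
  refine ⟨z, hfar, ?_⟩
  apply RA_of_not_reach hpre
  · simp only [Set.mem_insert_iff, Set.mem_singleton_iff]
    push_neg
    exact ⟨hxp.ne, Ne.symm hb⟩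
  · simp only [Set.mem_insert_iff, Set.mem_singleton_iff]
    push_neg
    refine ⟨hfar.1, ?_⟩
    intro h
    exact hcut (h ▸ hrb)
  · intro q hq
    simp only [Set.mem_insert_iff, Set.mem_singleton_iff] at hq
    rcases hq with h | h
    · exact h ▸ hcut
    · subst h
      intro hr
      exact hcut (hrb.trans hr)

/-- Initial pair: any vertex extends to a safe nonadjacent pair. -/
lemma exists_upair (hnu : NoUniv G) (v0 : V) :
    ∃ y, y ≠ v0 ∧ ¬ G.Adj v0 y ∧ Upair G v0 y := by
  classical
  obtain ⟨y1, hy1, hny1⟩ := hnu v0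
  by_cases hU : Upair G v0 y1
  · exact ⟨y1, hy1, hny1, hU⟩
  · unfold Upair at hU
    push_neg at hU
    obtain ⟨x, hx1, hx2⟩ := hU
    by_cases hxv : x = v0
    · subst hxv
      rcases hx2 with h | h
      · exact absurd h.symm hy1
      · exact absurd (dom_adj hy1 h) hny1
    · have hdomx : dom G x v0 := by
        rcases hx1 with h | h
        · exact absurd h hxv
        · exact h
      have hadj : G.Adj x v0 := dom_adj (Ne.symm hxv) hdomx
      obtain ⟨z, hzx, hznadj⟩ := hnu x
      have hcut : ¬ RA G {x} v0 z := fun h => hznadj (hdomx z h)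
      have hfar := far3_of_cut hadj hzx hznadj hcut
      exact ⟨z, hfar.1, hfar.2.1, far3_Upair hfar⟩

/-! ### The main step lemma -/

/-- Good target second hole relative to president `p`. -/
def SGood (G : SimpleGraph V) (p s : V) : Prop := s ≠ p ∧ ¬ G.Adj p s ∧ Upair G p s

lemma step_inner [DecidableEq V] (hpre : G.Preconnected) (hnu : NoUniv G) {a b p : V}
    (hpb : G.Adj p b)
    (hA : ∀ s, SGood G p s → ¬ RA G {p, b} a s)
    {u : V} (hu : RA G {p, b} a u) (hnadju : ¬ G.Adj p u) : dom G b p := by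
  have hu_notmem := hu.right_not_mem
  simp only [Set.mem_insert_iff, Set.mem_singleton_iff] at hu_notmem
  push_neg at hu_notmem
  obtain ⟨hup, hub⟩ := hu_notmem
  have hnotU : ¬ Upair G p u := fun h => hA u ⟨hup, hnadju, h⟩ hu
  unfold Upair at hnotU
  push_neg at hnotU
  obtain ⟨x, hx1, hx2⟩ := hnotU
  by_cases hxp : x = p
  · subst hxp
    rcases hx2 with h | h
    · exact absurd h.symm hup
    · exact absurd (dom_adj hup h) hnadju
  · have hdomxp : dom G x p := by
      rcases hx1 with h | h
      · exact absurd h hxp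
      · exact h
    have hadjxp : G.Adj x p := dom_adj (Ne.symm hxp) hdomxp
    by_cases hxb : x = b
    · exact hxb ▸ hdomxp
    · exfalso
      -- build reach from u to x avoiding {p, b}
      have hxu : RA G {p, b} u x := by
        by_cases hux : u = x
        · exact hux ▸ RA.refl' (by simp [hup, hub])
        · have hadjxu : G.Adj x u := by
            rcases hx2 with h | h
            · exact absurd h.symm hux
            · exact dom_adj hux h
          exact RA.adj hadjxu.symm (by simp [hup, hub]) (by simp [hxp, hxb])
      obtain ⟨z, hzfar, hzra⟩ := escape hpre hnu hadjxp hdomxp (Ne.symm hxb)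
        (RA.adj hpb (by simp [Ne.symm hxp]) (by simp [Ne.symm hxb]))
      exact hA z ⟨hzfar.1, hzfar.2.1, far3_Upair hzfar⟩ ((hu.trans hxu).trans hzra)

lemma not_dom_of_upair {a b : V} (hU : Upair G a b) : ¬ dom G b a :=
  fun h => hU b ⟨Or.inr h, Or.inl rfl⟩

lemma step_main [DecidableEq V] (hpre : G.Preconnected) (hnu : NoUniv G) {a b p : V}
    (hab : a ≠ b) (hnadj : ¬ G.Adj a b) (hU : Upair G a b) (hpb : G.Adj p b) :
    (∃ s, SGood G p s ∧ RA G {p, b} a s) ∨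
    (G.Adj p a ∧ ∃ s, SGood G p s ∧ RA G {p, a} b s) := by
  by_contra hcon
  push_neg at hcon
  obtain ⟨hA, hB⟩ := hcon
  have hap : a ≠ p := fun h => hnadj (h ▸ hpb)
  have hbp : b ≠ p := hpb.ne'
  -- helper: from ¬ dom b a get a witness
  have hndba : ¬ dom G b a := not_dom_of_upair hU
  have hndab : ¬ dom G a b := not_dom_of_upair hU.symm
  unfold dom at hndba hndab
  push_neg at hndba hndab
  obtain ⟨u0, hu0ra, hu0na⟩ := hndba
  obtain ⟨w0, hw0ra, hw0na⟩ := hndab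
  by_cases hpa : G.Adj p a
  · -- case (1,1): both holes adjacent to p
    have hB' := hB hpa
    have hKa : ∀ u, RA G {p, b} a u → G.Adj p u := by
      intro u hu
      by_contra hnadju
      have hdombp := step_inner hpre hnu hpb hA hu hnadju
      have h1 : RA G {b} a p := RA.adj hpa.symm (by simp [hab]) (by simp [Ne.symm hbp])
      exact hu0na (hdombp u0 (h1.symm.trans hu0ra))
    have hKb : ∀ u, RA G {p, a} b u → G.Adj p u := by
      intro u hu
      by_contra hnadju
      have hdomap := step_inner hpre hnu hpa hB' hu hnadju
      have h1 : RA G {a} b p := RA.adj hpb.symm (by simp [hab.symm]) (by simp [Ne.symm hap])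
      exact hw0na (hdomap w0 (h1.symm.trans hw0ra))
    -- Upair at x = p
    have hup := hU p
    by_cases hdpa : dom G p a
    · have hdpb : ¬ dom G p b := fun h => hup ⟨Or.inr hdpa, Or.inr h⟩
      unfold dom at hdpb
      push_neg at hdpb
      obtain ⟨u1, hu1ra, hu1na⟩ := hdpb
      have hnot : ¬ RA G (insert a {p}) b u1 := by
        intro h
        exact hu1na (hKb u1 (by rwa [Set.pair_comm a p] at h))
      have := RA_escape hab hu1ra hnot
      rw [Set.pair_comm b p] at this
      exact hu1na (hKa u1 this)
    · unfold dom at hdpa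
      push_neg at hdpa
      obtain ⟨u1, hu1ra, hu1na⟩ := hdpa
      have hnot : ¬ RA G (insert b {p}) a u1 := by
        intro h
        exact hu1na (hKa u1 (by rwa [Set.pair_comm b p] at h))
      have := RA_escape hab.symm hu1ra hnot
      rw [Set.pair_comm a p] at this
      exact hu1na (hKb u1 this)
  · -- case (1,2bad): a not adjacent to p
    by_cases hUpa : Upair G p a
    · exact hA a ⟨hap, fun h => hpa h, hUpa⟩ (RA.refl' (by simp [hap, hab]))
    · have hdombp : dom G b p := by
        apply step_inner hpre hnu hpb hA (u := a) (RA.refl' (by simp [hap, hab]))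
        exact hpa
      by_cases hnr : RA G {b} a p
      · exact hu0na (hdombp u0 (hnr.symm.trans hu0ra))
      · -- u0 is a good escape for a
        have hra : RA G {p, b} a u0 := by
          by_contra h
          exact hnr (RA_prefix hu0ra h)
        have hnadj0 : ¬ G.Adj p u0 := by
          intro h
          have hu0b : u0 ∉ ({b} : Set V) := hu0ra.right_not_mem
          exact hnr (hu0ra.trans (RA.adj h.symm hu0b (by simp [Ne.symm hbp])))
        have hu0p : u0 ≠ p := by
          have := hra.right_not_mem
          simp only [Set.mem_insert_iff, Set.mem_singleton_iff] at this
          push_neg at this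
          exact this.1
        have hfar : Far3 G p u0 := by
          refine ⟨hu0p, hnadj0, ?_⟩
          rintro w ⟨hpw, hwu0⟩
          have hwb : w ≠ b := fun h => hu0na (h ▸ hwu0)
          have hu0b : u0 ∉ ({b} : Set V) := hu0ra.right_not_mem
          exact hnr (hu0ra.trans ((RA.adj hwu0.symm hu0b (by simp [hwb])).trans
            (RA.adj hpw.symm (by simp [hwb]) (by simp [Ne.symm hbp]))))
        exact hA u0 ⟨hu0p, hnadj0, far3_Upair hfar⟩ hra

/-- One-route move (single hole). -/
lemma move_one [DecidableEq V] {a c : V} {l : List V} (h₁ : Route G l c a) :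
    ∃ f : V → V, (∀ v, stepRel G v (f v)) ∧ (∀ u, u ≠ c → ∃ t, t ≠ a ∧ f t = u) := by
  refine ⟨fun v => nxt l v, fun v => stepRel_nxt l h₁.2.2.1 v, ?_⟩
  intro u huc
  by_cases hu : u ∈ l
  · obtain ⟨t, _, hne, hnxt⟩ := nxt_cover l h₁.2.2.2 a h₁.2.1 u hu
      (by rw [h₁.1]; intro hh; exact huc (Option.some.inj hh).symm)
    exact ⟨t, hne, hnxt⟩
  · exact ⟨u, fun h => hu (h ▸ h₁.mem_last), nxt_not_mem l u hu⟩

/-- The full step lemma for a connected graph with no universal vertex. -/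
lemma step_full [DecidableEq V] (hpre : G.Preconnected) (hnu : NoUniv G) {a b : V}
    (hab : a ≠ b) (hnadj : ¬ G.Adj a b) (hU : Upair G a b) (p : V) :
    ∃ c d, c ≠ d ∧ ¬ G.Adj c d ∧ Upair G c d ∧ ¬ G.Adj p c ∧ ¬ G.Adj p d ∧
      ∃ f : V → V, (∀ v, stepRel G v (f v)) ∧
        (∀ u, u ≠ c → u ≠ d → ∃ t, t ≠ a ∧ t ≠ b ∧ f t = u) := by
  -- auxiliary: the case `Adj p b`
  have aux : ∀ a b : V, a ≠ b → ¬ G.Adj a b → Upair G a b → G.Adj p b →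
      ∃ c d, c ≠ d ∧ ¬ G.Adj c d ∧ Upair G c d ∧ ¬ G.Adj p c ∧ ¬ G.Adj p d ∧
      ∃ f : V → V, (∀ v, stepRel G v (f v)) ∧
        (∀ u, u ≠ c → u ≠ d → ∃ t, t ≠ a ∧ t ≠ b ∧ f t = u) := by
    intro a b hab hnadj hU hpb
    rcases step_main hpre hnu hab hnadj hU hpb with ⟨s, hS, hra⟩ | ⟨hpa, s, hS, hra⟩
    · obtain ⟨l₁, hroute, havoid⟩ := (hra.symm).route
      have hdisj : ∀ v ∈ l₁, v ∉ [p, b] := by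
        intro v hv
        have := havoid v hv
        simp only [Set.mem_insert_iff, Set.mem_singleton_iff] at this
        push_neg at this
        simp [this.1, this.2]
      obtain ⟨f, hf1, hf2⟩ := move_exists hroute (Route.pair hpb) hdisj
      exact ⟨s, p, hS.1, fun h => hS.2.1 h.symm, hS.2.2.symm, hS.2.1, G.irrefl, f, hf1, hf2⟩
    · obtain ⟨l₁, hroute, havoid⟩ := (hra.symm).route
      have hdisj : ∀ v ∈ l₁, v ∉ [p, a] := by
        intro v hv
        have := havoid v hv
        simp only [Set.mem_insert_iff, Set.mem_singleton_iff] at this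
        push_neg at this
        simp [this.1, this.2]
      obtain ⟨f, hf1, hf2⟩ := move_exists hroute (Route.pair hpa) hdisj
      refine ⟨s, p, hS.1, fun h => hS.2.1 h.symm, hS.2.2.symm, hS.2.1, G.irrefl, f, hf1, ?_⟩
      intro u h1 h2
      obtain ⟨t, ht1, ht2, ht3⟩ := hf2 u h1 h2
      exact ⟨t, ht2, ht1, ht3⟩
  by_cases hpb : G.Adj p b
  · exact aux a b hab hnadj hU hpb
  · by_cases hpa : G.Adj p a
    · obtain ⟨c, d, h1, h2, h3, h4, h5, f, hf1, hf2⟩ :=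
        aux b a hab.symm (fun h => hnadj h.symm) hU.symm hpa
      refine ⟨c, d, h1, h2, h3, h4, h5, f, hf1, ?_⟩
      intro u hu1 hu2
      obtain ⟨t, ht1, ht2, ht3⟩ := hf2 u hu1 hu2
      exact ⟨t, ht2, ht1, ht3⟩
    · refine ⟨a, b, hab, hnadj, hU, hpa, hpb, ?_⟩
      obtain ⟨f, hf1, hf2⟩ := move_exists (Route.singleton (G := G) a)
        (Route.singleton (G := G) b) (by intro v hv; simp only [List.mem_singleton] at hv ⊢
                                         rw [hv]; simp [hab])
      exact ⟨f, hf1, hf2⟩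

end BGP

/-! ### Game plumbing -/

open BGP in
lemma winOf {V : Type*} [Fintype V] [DecidableEq V] (G : SimpleGraph V) (h : ℕ)
    (Inv : Finset V → Prop)
    (hcard : ∀ H, Inv H → H.card = h)
    (hstart : ∃ H, Inv H)
    (hstep : ∀ H p, Inv H → ∃ (f : V → V) (H' : Finset V),
      (∀ v, stepRel G v (f v)) ∧ Inv H' ∧ (∀ x ∈ H', ¬ G.Adj p x) ∧
      (∀ u, u ∉ H' → ∃ t, t ∉ H ∧ f t = u)) :
    BodyguardsWin G (Fintype.card V - h) := by
  classical
  obtain ⟨H0, hH0⟩ := hstart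
  set k := Fintype.card V - h with hk
  have hcardC : (Finset.univ \ H0).card = k := by
    rw [Finset.card_sdiff_of_subset (Finset.subset_univ H0), Finset.card_univ, hcard H0 hH0]
  let e := (Finset.univ \ H0).equivFin
  let binit : Fin k → V := fun i => (e.symm (Fin.cast hcardC.symm i) : V)
  have hbinit_cover : ∀ u, u ∉ H0 → ∃ i, binit i = u := by
    intro u hu
    have humem : u ∈ Finset.univ \ H0 := by simp [hu]
    refine ⟨Fin.cast hcardC (e ⟨u, humem⟩), ?_⟩
    simp only [binit, Fin.cast_cast, Fin.cast_eq_self]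
    simp
  let GOOD : (Fin k → V) → V → (V → V) → Prop := fun bs p f =>
    (∀ v, stepRel G v (f v)) ∧ ∃ H', Inv H' ∧ (∀ x ∈ H', ¬ G.Adj p x) ∧
      (∀ u, u ∉ H' → ∃ i, f (bs i) = u)
  let bmove : (Fin k → V) → V → Fin k → V := fun bs p =>
    if hg : ∃ f, GOOD bs p f then fun i => hg.choose (bs i) else bs
  refine ⟨binit, bmove, ?_, ?_⟩
  · intro bs p i
    by_cases hg : ∃ f, GOOD bs p f
    · simp only [bmove, dif_pos hg]
      exact hg.choose_spec.1 (bs i)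
    · simp only [bmove, dif_neg hg]
      exact Or.inl rfl
  · intro pinit pmove hpm
    have main : ∀ n, ∃ H, Inv H ∧ ∀ u, u ∉ H → ∃ i,
        (gamePlay binit bmove pinit pmove n).1 i = u := by
      intro n
      induction n with
      | zero => exact ⟨H0, hH0, hbinit_cover⟩
      | succ m ih =>
        obtain ⟨H, hI, hcov⟩ := ih
        obtain ⟨f, H', hf1, hI', havoid, hcov'⟩ :=
          hstep H (gamePlay binit bmove pinit pmove m).2 hI
        have hg : ∃ f, GOOD (gamePlay binit bmove pinit pmove m).1
            (gamePlay binit bmove pinit pmove m).2 f := by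
          refine ⟨f, hf1, H', hI', havoid, ?_⟩
          intro u hu
          obtain ⟨t, htH, htf⟩ := hcov' u hu
          obtain ⟨i, hi⟩ := hcov t htH
          exact ⟨i, by rw [hi, htf]⟩
        refine ⟨hg.choose_spec.2.choose, hg.choose_spec.2.choose_spec.1, ?_⟩
        intro u hu
        obtain ⟨i, hi⟩ := hg.choose_spec.2.choose_spec.2.2 u hu
        refine ⟨i, ?_⟩
        show (bmove (gamePlay binit bmove pinit pmove m).1
          (gamePlay binit bmove pinit pmove m).2) i = u
        simp only [bmove, dif_pos hg]
        exact hi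
    refine ⟨0, fun n _ v hv => ?_⟩
    obtain ⟨H, hI, hcov⟩ := main n
    obtain ⟨f, H', hf1, hI', havoid, hcov'⟩ :=
      hstep H (gamePlay binit bmove pinit pmove n).2 hI
    have hg : ∃ f, GOOD (gamePlay binit bmove pinit pmove n).1
        (gamePlay binit bmove pinit pmove n).2 f := by
      refine ⟨f, hf1, H', hI', havoid, ?_⟩
      intro u hu
      obtain ⟨t, htH, htf⟩ := hcov' u hu
      obtain ⟨i, hi⟩ := hcov t htH
      exact ⟨i, by rw [hi, htf]⟩
    have hvH' : v ∉ hg.choose_spec.2.choose :=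
      fun hmem => hg.choose_spec.2.choose_spec.2.1 v hmem hv
    obtain ⟨i, hi⟩ := hg.choose_spec.2.choose_spec.2.2 v hvH'
    refine ⟨i, ?_⟩
    show (bmove (gamePlay binit bmove pinit pmove n).1
      (gamePlay binit bmove pinit pmove n).2) i = v
    simp only [bmove, dif_pos hg]
    exact hi


/-! ### Strategy instantiations -/

lemma win_sub_one {V : Type*} [Fintype V] [DecidableEq V] [Nonempty V] (G : SimpleGraph V) :
    BodyguardsWin G (Fintype.card V - 1) := by
  classical
  apply winOf G 1 (fun H => ∃ a : V, H = {a})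
  · rintro H ⟨a, rfl⟩; simp
  · exact ⟨{Classical.arbitrary V}, Classical.arbitrary V, rfl⟩
  · rintro H p ⟨a, rfl⟩
    by_cases hr : G.Reachable a p
    · obtain ⟨w⟩ := hr
      have hra : BGP.RA G ∅ a p := ⟨w, by simp⟩
      obtain ⟨l, hroute, -⟩ := (hra.symm).route
      obtain ⟨f, hf1, hf2⟩ := BGP.move_one hroute
      refine ⟨f, {p}, hf1, ⟨p, rfl⟩, ?_, ?_⟩
      · intro x hx; simp only [Finset.mem_singleton] at hx; rw [hx]; exact G.irrefl
      · intro u hu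
        simp only [Finset.mem_singleton] at hu
        obtain ⟨t, ht, htf⟩ := hf2 u hu
        exact ⟨t, by simpa using ht, htf⟩
    · refine ⟨id, {a}, fun v => Or.inl rfl, ⟨a, rfl⟩, ?_, ?_⟩
      · intro x hx; simp only [Finset.mem_singleton] at hx; rw [hx]
        intro hadj; exact hr hadj.symm.reachable
      · intro u hu; simp only [Finset.mem_singleton] at hu
        exact ⟨u, by simpa using hu, rfl⟩

lemma win_sub_two_disconnected {V : Type*} [Fintype V] [DecidableEq V] (G : SimpleGraph V)
    (hd : ¬ G.Preconnected) : BodyguardsWin G (Fintype.card V - 2) := by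
  classical
  have aux : ∀ a b p : V, a ≠ b → ¬ G.Reachable a b → G.Reachable a p →
      ∃ (f : V → V) (H' : Finset V),
      (∀ v, stepRel G v (f v)) ∧
      (∃ a' b' : V, a' ≠ b' ∧ ¬ G.Reachable a' b' ∧ H' = {a', b'}) ∧
      (∀ x ∈ H', ¬ G.Adj p x) ∧
      (∀ u, u ∉ H' → ∃ t, t ∉ ({a, b} : Finset V) ∧ f t = u) := by
    intro a b p hab hnr hra
    obtain ⟨w⟩ := hra
    have hbsup : b ∉ w.support := fun hx => hnr ⟨w.takeUntil b hx⟩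
    have hra' : BGP.RA G {b} a p := ⟨w, fun x hx hxb => hbsup (by
      simp only [Set.mem_singleton_iff] at hxb; rwa [← hxb])⟩
    have hra0 : G.Reachable a p := ⟨w⟩
    have hnpb : ¬ G.Reachable p b := fun h => hnr (hra0.trans h)
    have hpb : p ≠ b := fun h => hnpb (h ▸ Reachable.refl p)
    obtain ⟨l, hroute, havoid⟩ := (hra'.symm).route
    have hdisj : ∀ v ∈ l, v ∉ [b] := by
      intro v hv
      have := havoid v hv
      simp only [Set.mem_singleton_iff] at this
      simp [this]
    obtain ⟨f, hf1, hf2⟩ := BGP.move_exists hroute (BGP.Route.singleton b) hdisj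
    refine ⟨f, {p, b}, hf1, ⟨p, b, hpb, hnpb, rfl⟩, ?_, ?_⟩
    · intro x hx
      rcases Finset.mem_insert.mp hx with h | h
      · rw [h]; exact G.irrefl
      · simp only [Finset.mem_singleton] at h; rw [h]
        intro hadj; exact hnpb hadj.reachable
    · intro u hu
      simp only [Finset.mem_insert, Finset.mem_singleton] at hu
      push_neg at hu
      obtain ⟨t, ht1, ht2, ht3⟩ := hf2 u hu.1 hu.2
      exact ⟨t, by simp [ht1, ht2], ht3⟩
  apply winOf G 2 (fun H => ∃ a b : V, a ≠ b ∧ ¬ G.Reachable a b ∧ H = {a, b})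
  · rintro H ⟨a, b, hab, -, rfl⟩; exact Finset.card_pair hab
  · unfold SimpleGraph.Preconnected at hd
    push_neg at hd
    obtain ⟨u, v, huv⟩ := hd
    exact ⟨{u, v}, u, v, fun h => huv (h ▸ Reachable.refl u), huv, rfl⟩
  · rintro H p ⟨a, b, hab, hnr, rfl⟩
    by_cases hra : G.Reachable a p
    · exact aux a b p hab hnr hra
    · by_cases hrb : G.Reachable b p
      · obtain ⟨f, H', hf1, hI, havoid, hcov⟩ :=
          aux b a p hab.symm (fun h => hnr h.symm) hrb
        refine ⟨f, H', hf1, hI, havoid, ?_⟩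
        intro u hu
        obtain ⟨t, ht1, ht2⟩ := hcov u hu
        refine ⟨t, ?_, ht2⟩
        simp only [Finset.mem_insert, Finset.mem_singleton] at ht1 ⊢
        push_neg at ht1 ⊢
        exact ⟨ht1.2, ht1.1⟩
      · refine ⟨id, {a, b}, fun v => Or.inl rfl, ⟨a, b, hab, hnr, rfl⟩, ?_, ?_⟩
        · intro x hx
          rcases Finset.mem_insert.mp hx with h | h
          · rw [h]; intro hadj; exact hra hadj.symm.reachable
          · simp only [Finset.mem_singleton] at h; rw [h]
            intro hadj; exact hrb hadj.symm.reachable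
        · intro u hu; exact ⟨u, hu, rfl⟩

lemma win_sub_two_connected {V : Type*} [Fintype V] [DecidableEq V] [Nonempty V]
    (G : SimpleGraph V) (hpre : G.Preconnected) (hnu : BGP.NoUniv G) :
    BodyguardsWin G (Fintype.card V - 2) := by
  classical
  apply winOf G 2 (fun H => ∃ a b : V, a ≠ b ∧ ¬ G.Adj a b ∧ BGP.Upair G a b ∧ H = {a, b})
  · rintro H ⟨a, b, hab, -, -, rfl⟩; exact Finset.card_pair hab
  · obtain ⟨y, hy, hny, hU⟩ := BGP.exists_upair hnu (Classical.arbitrary V)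
    exact ⟨{Classical.arbitrary V, y}, Classical.arbitrary V, y, Ne.symm hy, hny, hU, rfl⟩
  · rintro H p ⟨a, b, hab, hnadj, hU, rfl⟩
    obtain ⟨c, d, h1, h2, h3, h4, h5, f, hf1, hf2⟩ := BGP.step_full hpre hnu hab hnadj hU p
    refine ⟨f, {c, d}, hf1, ⟨c, d, h1, h2, h3, rfl⟩, ?_, ?_⟩
    · intro x hx
      rcases Finset.mem_insert.mp hx with h | h
      · rw [h]; exact h4
      · simp only [Finset.mem_singleton] at h; rw [h]; exact h5
    · intro u hu
      simp only [Finset.mem_insert, Finset.mem_singleton] at hu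
      push_neg at hu
      obtain ⟨t, ht1, ht2, ht3⟩ := hf2 u hu.1 hu.2
      exact ⟨t, by simp [ht1, ht2], ht3⟩

/-! ### Final assembly -/

lemma win_zero_of_card_le_one {V : Type*} [Fintype V] (G : SimpleGraph V)
    (h : Fintype.card V ≤ 1) : BodyguardsWin G 0 := by
  refine ⟨fun i => i.elim0, fun bs p i => i.elim0, fun bs p i => i.elim0, ?_⟩
  intro pinit pmove _
  refine ⟨0, fun n _ v hv => ?_⟩
  have hsub := Fintype.card_le_one_iff.mp h
  have heq := hsub (gamePlay (fun (i : Fin 0) => i.elim0) (fun bs p i => i.elim0)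
    pinit pmove n).2 v
  rw [heq] at hv
  exact absurd hv G.irrefl

lemma maxDegree_char {V : Type*} [Fintype V] (G : SimpleGraph V) [DecidableRel G.Adj]
    (hn : 1 ≤ Fintype.card V) :
    G.maxDegree = Fintype.card V - 1 ↔ ∃ u : V, ∀ w, w ≠ u → G.Adj u w := by
  classical
  have hne : Nonempty V := Fintype.card_pos_iff.mp hn
  constructor
  · intro h
    obtain ⟨v, hv⟩ := G.exists_maximal_degree_vertex
    refine ⟨v, ?_⟩
    have hdeg : G.degree v = Fintype.card V - 1 := by rw [← h, hv]
    have hsub : G.neighborFinset v ⊆ Finset.univ.erase v := by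
      intro w hw
      rw [SimpleGraph.mem_neighborFinset] at hw
      exact Finset.mem_erase.mpr ⟨hw.ne', Finset.mem_univ w⟩
    have hcard : (Finset.univ.erase v).card = Fintype.card V - 1 := by
      rw [Finset.card_erase_of_mem (Finset.mem_univ v), Finset.card_univ]
    have heq : G.neighborFinset v = Finset.univ.erase v :=
      Finset.eq_of_subset_of_card_le hsub (by
        rw [hcard]
        exact le_of_eq hdeg.symm)
    intro w hw
    have : w ∈ G.neighborFinset v := heq ▸ (Finset.mem_erase.mpr ⟨hw, Finset.mem_univ w⟩)
    rwa [SimpleGraph.mem_neighborFinset] at this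
  · rintro ⟨u, hu⟩
    have heq : G.neighborFinset u = Finset.univ.erase u := by
      ext w
      rw [SimpleGraph.mem_neighborFinset, Finset.mem_erase]
      constructor
      · intro h; exact ⟨h.ne', Finset.mem_univ w⟩
      · intro h; exact hu w h.1
    have hdeg : G.degree u = Fintype.card V - 1 := by
      show (G.neighborFinset u).card = _
      rw [heq, Finset.card_erase_of_mem (Finset.mem_univ u), Finset.card_univ]
    apply le_antisymm
    · apply SimpleGraph.maxDegree_le_of_forall_degree_le
      intro v
      have := G.degree_lt_card_verts v
      omega
    · rw [← hdeg]
      exact G.degree_le_maxDegree u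

lemma no_win_lt_of_universal {V : Type*} [Fintype V] (G : SimpleGraph V) {u : V}
    (hu : ∀ w, w ≠ u → G.Adj u w) {k : ℕ}
    (hk : k < Fintype.card V - 1) : ¬ BodyguardsWin G k := by
  classical
  rintro ⟨binit, bmove, hstep, hwin⟩
  obtain ⟨N, hN⟩ := hwin (fun _ => u) (fun _ p => p) (fun _ _ => Or.inl rfl)
  have hpres : ∀ n, (gamePlay binit bmove (fun _ => u) (fun _ p => p) n).2 = u := by
    intro n
    induction n with
    | zero => rfl
    | succ m ih =>
      show (gamePlay binit bmove (fun _ => u) (fun _ p => p) m).2 = u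
      exact ih
  have hcov := hN N le_rfl
  rw [hpres N] at hcov
  have hsurj : Set.SurjOn (gamePlay binit bmove (fun _ => u) (fun _ p => p) (N + 1)).1
      (Finset.univ : Finset (Fin k)) (Finset.univ.erase u) := by
    intro v hv
    simp only [Finset.coe_erase, Set.mem_diff, Set.mem_singleton_iff] at hv
    obtain ⟨i, hi⟩ := hcov v (hu v hv.2)
    exact ⟨i, by simp, hi⟩
  have hle := Finset.card_le_card_of_surjOn _ hsurj
  rw [Finset.card_erase_of_mem (Finset.mem_univ u), Finset.card_univ, Finset.card_univ,
    Fintype.card_fin] at hle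
  omega

theorem bodyguardNumber_eq_card_sub_one_iff' {V : Type*} [Fintype V] (G : SimpleGraph V)
    [DecidableRel G.Adj] :
    bodyguardNumber G = Fintype.card V - 1 ↔ G.maxDegree = Fintype.card V - 1 := by
  classical
  by_cases hcard1 : Fintype.card V ≤ 1
  · have hwin0 : BodyguardsWin G 0 := win_zero_of_card_le_one G hcard1
    have hB : bodyguardNumber G = 0 := by
      unfold bodyguardNumber
      exact Nat.sInf_eq_zero.mpr (Or.inl hwin0)
    have hM : G.maxDegree = 0 := by
      apply Nat.le_zero.mp
      apply SimpleGraph.maxDegree_le_of_forall_degree_le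
      intro v
      have := G.degree_lt_card_verts v
      omega
    rw [hB, hM]
  · push_neg at hcard1
    have hn1 : 1 ≤ Fintype.card V := by omega
    have hne : Nonempty V := Fintype.card_pos_iff.mp (by omega)
    rw [maxDegree_char G hn1]
    constructor
    · intro hB
      by_contra hnuniv
      have hnu : BGP.NoUniv G := by
        intro x
        by_contra hx
        push_neg at hx
        exact hnuniv ⟨x, fun w hw => hx w hw⟩
      have hwin : BodyguardsWin G (Fintype.card V - 2) := by
        by_cases hpre : G.Preconnected
        · exact win_sub_two_connected G hpre hnu
        · exact win_sub_two_disconnected G hpre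
      have hle : bodyguardNumber G ≤ Fintype.card V - 2 := by
        unfold bodyguardNumber
        exact Nat.sInf_le hwin
      omega
    · rintro ⟨u, hu⟩
      have hmem : Fintype.card V - 1 ∈ {k | BodyguardsWin G k} := win_sub_one G
      unfold bodyguardNumber
      apply le_antisymm
      · exact Nat.sInf_le hmem
      · apply le_csInf ⟨_, hmem⟩
        intro k hk
        by_contra hlt
        push_neg at hlt
        exact no_win_lt_of_universal G hu hlt hk

/-- For any finite graph `G` on `n` vertices, `B(G) = n - 1` iff `Δ(G) = n - 1`. -/
theorem bodyguardNumber_eq_card_sub_one_iff {V : Type*} [Fintype V] (G : SimpleGraph V)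
    [DecidableRel G.Adj] :
    bodyguardNumber G = Fintype.card V - 1 ↔ G.maxDegree = Fintype.card V - 1 := by
  exact bodyguardNumber_eq_card_sub_one_iff' G
end

section
/- If H is a retract of a graph G, then B(H) ≤ B(G). -/
open SimpleGraph

/-! ### Auxiliary material for the retract theorem -/

section Stabilize

private lemma chain_stab {X : Type*} [Fintype X] (g : ℕ → Set X) (hg : ∀ n, g n ⊆ g (n + 1)) :
    ∃ N, g (N + 1) = g N := by
  by_contra h
  push_neg at h
  have hlt : ∀ n, (g n).ncard < (g (n + 1)).ncard := fun n =>
    Set.ncard_lt_ncard (HasSubset.Subset.ssubset_of_ne (hg n) (h n).symm) (Set.toFinite _)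
  have hub : ∀ n, n ≤ (g n).ncard := by
    intro n
    induction n with
    | zero => exact Nat.zero_le _
    | succ n ih => exact Nat.lt_of_le_of_lt ih (hlt n)
  have h1 := hub (Fintype.card X + 1)
  have h2 : (g (Fintype.card X + 1)).ncard ≤ Fintype.card X := by
    have := Set.ncard_le_ncard (Set.subset_univ (g (Fintype.card X + 1))) (Set.toFinite _)
    simpa [Set.ncard_univ, Nat.card_eq_fintype_card] using this
  omega

private lemma chain_stab_anti {X : Type*} [Fintype X] (g : ℕ → Set X)
    (hg : ∀ n, g (n + 1) ⊆ g n) : ∃ N, g (N + 1) = g N := by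
  obtain ⟨N, hN⟩ := chain_stab (fun n => (g n)ᶜ) (fun n => Set.compl_subset_compl.mpr (hg n))
  exact ⟨N, by simpa [compl_inj_iff] using hN⟩

private lemma mem_lfp_exists {X : Type*} [Fintype X] (f : Set X →o Set X) {x : X}
    (hx : x ∈ OrderHom.lfp f) : ∃ i, x ∈ (⇑f)^[i] ∅ := by
  have hchain : ∀ n, (⇑f)^[n] (∅ : Set X) ⊆ (⇑f)^[n + 1] ∅ := by
    intro n
    induction n with
    | zero => simp
    | succ n ih =>
      calc (⇑f)^[n + 1] (∅ : Set X) = f ((⇑f)^[n] ∅) :=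
            Function.iterate_succ_apply' (⇑f) n (∅ : Set X)
        _ ⊆ f ((⇑f)^[n + 1] ∅) := f.monotone ih
        _ = (⇑f)^[n + 1 + 1] ∅ := (Function.iterate_succ_apply' (⇑f) (n + 1) (∅ : Set X)).symm
  obtain ⟨N, hN⟩ := chain_stab (fun n => (⇑f)^[n] (∅ : Set X)) hchain
  refine ⟨N, ?_⟩
  have hfixp : f ((⇑f)^[N] ∅) ≤ (⇑f)^[N] ∅ := by
    rw [← Function.iterate_succ_apply' (⇑f) N (∅ : Set X)]
    exact hN.le
  exact OrderHom.lfp_le f hfixp hx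

private lemma notmem_gfp_exists {X : Type*} [Fintype X] (f : Set X →o Set X) {x : X}
    (hx : x ∉ OrderHom.gfp f) : ∃ j, x ∉ (⇑f)^[j] Set.univ := by
  by_contra h
  push_neg at h
  have hchain : ∀ n, (⇑f)^[n + 1] (Set.univ : Set X) ⊆ (⇑f)^[n] Set.univ := by
    intro n
    induction n with
    | zero => simp
    | succ n ih =>
      calc (⇑f)^[n + 1 + 1] (Set.univ : Set X) = f ((⇑f)^[n + 1] Set.univ) :=
            Function.iterate_succ_apply' (⇑f) (n + 1) (Set.univ : Set X)
        _ ⊆ f ((⇑f)^[n] Set.univ) := f.monotone ih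
        _ = (⇑f)^[n + 1] Set.univ := (Function.iterate_succ_apply' (⇑f) n (Set.univ : Set X)).symm
  obtain ⟨N, hN⟩ := chain_stab_anti (fun n => (⇑f)^[n] (Set.univ : Set X)) hchain
  have hle : (⇑f)^[N] (Set.univ : Set X) ≤ f ((⇑f)^[N] Set.univ) := by
    rw [← Function.iterate_succ_apply' (⇑f) N (Set.univ : Set X)]
    exact hN.ge
  exact hx (OrderHom.le_gfp f hle (h N))

private lemma iterate_le_lfp {X : Type*} (f : Set X →o Set X) :
    ∀ i, (⇑f)^[i] ∅ ≤ OrderHom.lfp f := by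
  intro i
  induction i with
  | zero => simp
  | succ i ih =>
    rw [Function.iterate_succ_apply' (⇑f) i (∅ : Set X)]
    calc f ((⇑f)^[i] ∅) ≤ f (OrderHom.lfp f) := f.monotone ih
      _ = OrderHom.lfp f := OrderHom.map_lfp f

end Stabilize

section GameDefs

variable {U : Type*} (H : SimpleGraph U) (k : ℕ)

/-- `bs` surrounds `p`: every neighbour of `p` is occupied. -/
def surrB (bs : Fin k → U) (p : U) : Prop := ∀ v, H.Adj p v → ∃ i, bs i = v

/-- One-step operator of the surrounding game. -/
def TTB (Z A : Set ((Fin k → U) × U)) : Set ((Fin k → U) × U) :=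
  {x | ∃ bs', (∀ i, stepRel H (x.1 i) (bs' i)) ∧
    ∀ p', stepRel H x.2 p' → (surrB H k bs' x.2 ∧ (bs', p') ∈ A) ∨ (bs', p') ∈ Z}

lemma TTB_mono {Z Z' A A' : Set ((Fin k → U) × U)} (hZ : Z ⊆ Z') (hA : A ⊆ A') :
    TTB H k Z A ⊆ TTB H k Z' A' := by
  rintro x ⟨bs', hleg, hstep⟩
  refine ⟨bs', hleg, fun p' hp' => ?_⟩
  rcases hstep p' hp' with ⟨h1, h2⟩ | h
  · exact Or.inl ⟨h1, hA h2⟩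
  · exact Or.inr (hZ h)

/-- The inner (safety) operator. -/
def innerFB (Z : Set ((Fin k → U) × U)) : Set ((Fin k → U) × U) →o Set ((Fin k → U) × U) :=
  ⟨fun A => TTB H k Z A, fun _ _ h => TTB_mono H k subset_rfl h⟩

/-- The outer (reachability) operator. -/
def outerFB : Set ((Fin k → U) × U) →o Set ((Fin k → U) × U) :=
  ⟨fun Z => OrderHom.gfp (innerFB H k Z), by
    intro Z Z' h
    exact OrderHom.gfp.monotone (OrderHom.le_def.mpr fun A => TTB_mono H k h subset_rfl)⟩

/-- The bodyguards' winning region. -/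
def WsetB : Set ((Fin k → U) × U) := OrderHom.lfp (outerFB H k)

lemma WsetB_eq_gfp : WsetB H k = OrderHom.gfp (innerFB H k (WsetB H k)) :=
  (OrderHom.map_lfp (outerFB H k)).symm

lemma ZB_succ (i : ℕ) :
    (outerFB H k)^[i + 1] ∅ = TTB H k ((outerFB H k)^[i] ∅) ((outerFB H k)^[i + 1] ∅) := by
  conv_lhs => rw [Function.iterate_succ_apply']
  conv_rhs => rw [Function.iterate_succ_apply']
  exact (OrderHom.map_gfp (innerFB H k ((outerFB H k)^[i] ∅))).symm

lemma SB_succ (j : ℕ) :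
    (innerFB H k (WsetB H k))^[j + 1] Set.univ =
      TTB H k (WsetB H k) ((innerFB H k (WsetB H k))^[j] Set.univ) := by
  rw [Function.iterate_succ_apply']
  rfl

lemma ZB_le_W (i : ℕ) : (outerFB H k)^[i] ∅ ⊆ WsetB H k := iterate_le_lfp _ i

end GameDefs

/-- Positive side: if the guards can start inside the winning region against every
president placement, then they win. -/
lemma pos_winB {U : Type*} [Fintype U] (H : SimpleGraph U) (k : ℕ)
    (bs₀ : Fin k → U) (hbs₀ : ∀ p, (bs₀, p) ∈ WsetB H k) : BodyguardsWin H k := by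
  classical
  set lev : (Fin k → U) × U → ℕ := fun x => sInf {i | x ∈ (outerFB H k)^[i] ∅} with hlevdef
  have key : ∀ x : (Fin k → U) × U, x ∈ WsetB H k → ∃ bs', (∀ i, stepRel H (x.1 i) (bs' i)) ∧
      ∀ p', stepRel H x.2 p' →
        ((bs', p') ∈ WsetB H k ∧ lev (bs', p') ≤ lev x ∧
          (¬ surrB H k bs' x.2 → lev (bs', p') < lev x)) := by
    intro x hx
    have hne : {i | x ∈ (outerFB H k)^[i] ∅}.Nonempty := mem_lfp_exists _ hx
    have hmem : x ∈ (outerFB H k)^[lev x] ∅ := Nat.sInf_mem hne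
    have hpos : lev x ≠ 0 := by
      intro h0
      rw [h0] at hmem
      simp at hmem
    obtain ⟨l, hl⟩ : ∃ l, lev x = l + 1 := ⟨lev x - 1, by omega⟩
    rw [hl, ZB_succ] at hmem
    obtain ⟨bs', hleg, hstep⟩ := hmem
    refine ⟨bs', hleg, fun p' hp' => ?_⟩
    rcases hstep p' hp' with ⟨hs, hA⟩ | hZ
    · have hle : lev (bs', p') ≤ l + 1 := Nat.sInf_le hA
      exact ⟨ZB_le_W H k _ hA, by omega, fun hns => absurd hs hns⟩
    · have hle : lev (bs', p') ≤ l := Nat.sInf_le hZ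
      exact ⟨ZB_le_W H k _ hZ, by omega, fun _ => by omega⟩
  set bmv : (Fin k → U) → U → Fin k → U := fun bs p =>
    if h : (bs, p) ∈ WsetB H k then Classical.choose (key (bs, p) h) else bs with hbmv
  have hbleg : ∀ bs p i, stepRel H (bs i) (bmv bs p i) := by
    intro bs p i
    by_cases h : (bs, p) ∈ WsetB H k
    · have hb : bmv bs p = Classical.choose (key (bs, p) h) := dif_pos h
      rw [hb]
      exact (Classical.choose_spec (key (bs, p) h)).1 i
    · have hb : bmv bs p = bs := dif_neg h
      rw [hb]
      exact Or.inl rfl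
  refine ⟨bs₀, bmv, hbleg, ?_⟩
  intro pinit pmove hpm
  set play := gamePlay bs₀ bmv pinit pmove with hplay
  have hplay1 : ∀ n, play (n + 1) =
      (bmv (play n).1 (play n).2, pmove (bmv (play n).1 (play n).2) (play n).2) := by
    intro n
    rw [hplay]
    rfl
  have hstep : ∀ n, play n ∈ WsetB H k →
      play (n + 1) ∈ WsetB H k ∧ lev (play (n + 1)) ≤ lev (play n) ∧
        (¬ surrB H k (play (n + 1)).1 (play n).2 → lev (play (n + 1)) < lev (play n)) := by
    intro n hn
    have hb : bmv (play n).1 (play n).2 = Classical.choose (key (play n) hn) := dif_pos hn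
    have hsp := (Classical.choose_spec (key (play n) hn)).2
    have hq : stepRel H (play n).2 (pmove (bmv (play n).1 (play n).2) (play n).2) := hpm _ _
    have hres := hsp (pmove (bmv (play n).1 (play n).2) (play n).2) hq
    have hpe : play (n + 1) =
        (Classical.choose (key (play n) hn),
          pmove (bmv (play n).1 (play n).2) (play n).2) := by
      rw [hplay1 n, hb]
    rw [hpe]
    exact ⟨hres.1, hres.2.1, hres.2.2⟩
  have hinv : ∀ n, play n ∈ WsetB H k := by
    intro n
    induction n with
    | zero => exact hbs₀ _
    | succ n ih => exact (hstep n ih).1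
  have hmono : ∀ n, lev (play (n + 1)) ≤ lev (play n) := fun n => (hstep n (hinv n)).2.1
  have hanti : ∀ a b, a ≤ b → lev (play b) ≤ lev (play a) := by
    intro a b hab
    induction b with
    | zero => simp_all
    | succ b ih =>
      rcases Nat.lt_or_ge a (b + 1) with h | h
      · exact (hmono b).trans (ih (by omega))
      · have : a = b + 1 := by omega
        rw [this]
  have hrne : (Set.range fun n => lev (play n)).Nonempty := ⟨lev (play 0), ⟨0, rfl⟩⟩
  obtain ⟨N, hN⟩ := Nat.sInf_mem hrne
  have hN' : lev (play N) = sInf (Set.range fun n => lev (play n)) := hN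
  refine ⟨N, fun n hn v hv => ?_⟩
  have hlevn : ∀ m, N ≤ m → lev (play m) = lev (play N) := by
    intro m hm
    have h1 : lev (play m) ≤ lev (play N) := hanti N m hm
    have h2 : sInf (Set.range fun n => lev (play n)) ≤ lev (play m) := Nat.sInf_le ⟨m, rfl⟩
    omega
  have hsurr : surrB H k (play (n + 1)).1 (play n).2 := by
    by_contra hns
    have hlt := (hstep n (hinv n)).2.2 hns
    have e1 := hlevn n hn
    have e2 := hlevn (n + 1) (by omega)
    omega
  exact hsurr v hv

/-- With one guard per vertex, the bodyguards trivially win. -/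
lemma all_win {V : Type*} [Fintype V] (G : SimpleGraph V) :
    BodyguardsWin G (Fintype.card V) := by
  classical
  refine ⟨fun i => (Fintype.equivFin V).symm i, fun bs _ => bs, fun bs p i => Or.inl rfl, ?_⟩
  intro pinit pmove hpm
  have hconst : ∀ n, (gamePlay (fun i => (Fintype.equivFin V).symm i) (fun bs _ => bs)
      pinit pmove n).1 = fun i => (Fintype.equivFin V).symm i := by
    intro n
    induction n with
    | zero => rfl
    | succ n ih => simpa [gamePlay] using ih
  refine ⟨0, fun n _ v _ => ?_⟩
  rw [hconst]
  exact ⟨Fintype.equivFin V v, Equiv.symm_apply_apply _ _⟩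

/-- The key transfer lemma: a winning strategy on `G` yields one on the retract `H`. -/
lemma transferB {V : Type*} [Fintype V] (G : SimpleGraph V)
    (s : Set V) [DecidablePred (· ∈ s)] (H : SimpleGraph s)
    (hsub : ∀ a b : s, H.Adj a b → G.Adj (a : V) (b : V))
    (r : V → s)
    (hhom : ∀ a b : V, G.Adj a b → H.Adj (r a) (r b) ∨ r a = r b)
    (hfix : ∀ a : s, r (a : V) = a)
    (k : ℕ) (hG : BodyguardsWin G k) : BodyguardsWin H k := by
  classical
  by_cases hpos : ∃ bs₀ : Fin k → s, ∀ p, (bs₀, p) ∈ WsetB H k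
  · obtain ⟨bs₀, hbs₀⟩ := hpos
    exact pos_winB H k bs₀ hbs₀
  · exfalso
    push_neg at hpos
    obtain ⟨binit, bmove, hbleg, hwin⟩ := hG
    set sh : (Fin k → V) → Fin k → s := fun bs i => r (bs i) with hshdef
    set rk : (Fin k → s) × s → ℕ :=
      fun y => sInf {j | y ∉ (innerFB H k (WsetB H k))^[j] Set.univ} with hrkdef
    have hshleg : ∀ bs bs' : Fin k → V, (∀ i, stepRel G (bs i) (bs' i)) →
        ∀ i, stepRel H (sh bs i) (sh bs' i) := by
      intro bs bs' h i
      rcases h i with he | ha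
      · exact Or.inl (congrArg r he)
      · rcases hhom _ _ ha with h' | h'
        · exact Or.inr h'
        · exact Or.inl h'
    -- key fact about states outside the winning region
    have hkey : ∀ (bs : Fin k → s) (p : s) (bs' : Fin k → s),
        (bs, p) ∉ WsetB H k → (∀ i, stepRel H (bs i) (bs' i)) →
        ∃ p' : s, stepRel H p p' ∧ (bs', p') ∉ WsetB H k ∧
          (surrB H k bs' p → rk (bs', p') < rk (bs, p)) := by
      intro bs p bs' hW hleg
      have hne : {j | (bs, p) ∉ (innerFB H k (WsetB H k))^[j] Set.univ}.Nonempty := by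
        have hx : (bs, p) ∉ OrderHom.gfp (innerFB H k (WsetB H k)) := by
          rw [← WsetB_eq_gfp]; exact hW
        exact notmem_gfp_exists _ hx
      have hmem : (bs, p) ∉ (innerFB H k (WsetB H k))^[rk (bs, p)] Set.univ := Nat.sInf_mem hne
      have hpos' : rk (bs, p) ≠ 0 := by
        intro h0
        rw [h0] at hmem
        simp at hmem
      obtain ⟨j, hj⟩ : ∃ j, rk (bs, p) = j + 1 := ⟨rk (bs, p) - 1, by omega⟩
      rw [hj, SB_succ] at hmem
      simp only [TTB, Set.mem_setOf_eq] at hmem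
      push_neg at hmem
      obtain ⟨p', hp', hns, hnW⟩ := hmem bs' hleg
      refine ⟨p', hp', hnW, fun hsur => ?_⟩
      have hrle : rk (bs', p') ≤ j := Nat.sInf_le (hns hsur)
      omega
    -- the president's candidate moves
    set Cset : (Fin k → V) → s → Set s :=
      fun bs' p => {p' | stepRel H p p' ∧ (sh bs', p') ∉ WsetB H k} with hCdef
    -- the president's move, fully specified via choice
    have pmSpec : ∀ (bs' : Fin k → V) (p : V), ∃ q : V,
        stepRel G p q ∧
        ∀ hp : p ∈ s, (Cset bs' ⟨p, hp⟩).Nonempty →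
          ∃ hq : q ∈ s, (⟨q, hq⟩ : s) ∈ Cset bs' ⟨p, hp⟩ ∧
            ∀ b ∈ Cset bs' ⟨p, hp⟩, rk (sh bs', ⟨q, hq⟩) ≤ rk (sh bs', b) := by
      intro bs' p
      by_cases hp : p ∈ s
      · by_cases hne : (Cset bs' ⟨p, hp⟩).Nonempty
        · obtain ⟨m, hm, hmin⟩ :=
            Set.exists_min_image (Cset bs' ⟨p, hp⟩) (fun p' => rk (sh bs', p'))
              (Set.toFinite _) hne
          refine ⟨(m : V), ?_, ?_⟩
          · rcases hm.1 with he | ha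
            · exact Or.inl (congrArg Subtype.val he)
            · exact Or.inr (hsub _ _ ha)
          · intro hp' hne'
            refine ⟨m.2, ?_, ?_⟩
            · simpa using hm
            · intro b hb
              have : (⟨(m : V), m.2⟩ : s) = m := by simp
              rw [this]
              exact hmin b hb
        · refine ⟨p, Or.inl rfl, fun hp' hne' => absurd hne' hne⟩
      · exact ⟨p, Or.inl rfl, fun hp' _ => absurd hp' hp⟩
    set pmove : (Fin k → V) → V → V := fun bs' p => Classical.choose (pmSpec bs' p) with hpmdef
    set pinit : (Fin k → V) → V := fun bs => ((hpos (sh bs)).choose : V) with hpidef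
    have hpleg : ∀ bs p, stepRel G p (pmove bs p) := fun bs p =>
      (Classical.choose_spec (pmSpec bs p)).1
    obtain ⟨Nw, hNw⟩ := hwin pinit pmove hpleg
    set play := gamePlay binit bmove pinit pmove with hplaydef
    set yn : ℕ → (Fin k → s) × s := fun n => (sh (play n).1, r ((play n).2)) with hyndef
    have hplay1 : ∀ n, play (n + 1) =
        (bmove (play n).1 (play n).2, pmove (bmove (play n).1 (play n).2) (play n).2) := by
      intro n
      rw [hplaydef]
      rfl
    -- the main step lemma
    have stepMain : ∀ n, (play n).2 ∈ s → yn n ∉ WsetB H k →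
        ((play (n + 1)).2 ∈ s ∧ yn (n + 1) ∉ WsetB H k ∧
          (surrB H k (sh (play (n + 1)).1) (r ((play n).2)) →
            rk (yn (n + 1)) < rk (yn n))) := by
      intro n hp hnW
      have hrp : r ((play n).2) = ⟨(play n).2, hp⟩ := hfix ⟨(play n).2, hp⟩
      have hlegH := hshleg (play n).1 (bmove (play n).1 (play n).2)
        (fun i => hbleg (play n).1 (play n).2 i)
      have hnW' : (sh (play n).1, (⟨(play n).2, hp⟩ : s)) ∉ WsetB H k := by
        rw [← hrp]; exact hnW
      obtain ⟨p'₀, hs₀, hW₀, hr₀⟩ := hkey (sh (play n).1) ⟨(play n).2, hp⟩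
        (sh (bmove (play n).1 (play n).2)) hnW' hlegH
      have hne : (Cset (bmove (play n).1 (play n).2) ⟨(play n).2, hp⟩).Nonempty :=
        ⟨p'₀, hs₀, hW₀⟩
      have hspec := (Classical.choose_spec (pmSpec (bmove (play n).1 (play n).2)
        ((play n).2))).2 hp hne
      obtain ⟨hq, hmemC, hmin⟩ := hspec
      have h1 : (play (n + 1)).1 = bmove (play n).1 (play n).2 := by
        rw [hplay1 n]
      have hqv : (play (n + 1)).2 = Classical.choose (pmSpec (bmove (play n).1 (play n).2)
          ((play n).2)) := by
        rw [hplay1 n]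
      have hps : (play (n + 1)).2 ∈ s := by rw [hqv]; exact hq
      have hry : r ((play (n + 1)).2) =
          (⟨Classical.choose (pmSpec (bmove (play n).1 (play n).2) ((play n).2)), hq⟩ : s) := by
        rw [hqv]
        exact hfix ⟨_, hq⟩
      have hyn1 : yn (n + 1) = (sh (bmove (play n).1 (play n).2),
          (⟨Classical.choose (pmSpec (bmove (play n).1 (play n).2) ((play n).2)), hq⟩ : s)) := by
        show (sh (play (n + 1)).1, r ((play (n + 1)).2)) = _
        rw [h1, hry]
      refine ⟨hps, ?_, ?_⟩
      · rw [hyn1]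
        exact hmemC.2
      · intro hsur
        have hsur' : surrB H k (sh (bmove (play n).1 (play n).2)) (⟨(play n).2, hp⟩ : s) := by
          rw [← hrp, ← h1]
          exact hsur
        have hlt := hr₀ hsur'
        have hle := hmin p'₀ ⟨hs₀, hW₀⟩
        rw [hyn1]
        have hyneq : yn n = (sh (play n).1, (⟨(play n).2, hp⟩ : s)) := by
          show (sh (play n).1, r ((play n).2)) = _
          rw [hrp]
        rw [hyneq]
        omega
    have main : ∀ n, (play n).2 ∈ s ∧ yn n ∉ WsetB H k := by
      intro n
      induction n with
      | zero =>
        have h2 : (play 0).2 = ((hpos (sh binit)).choose : V) := rfl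
        have hps : (play 0).2 ∈ s := by rw [h2]; exact (hpos (sh binit)).choose.2
        refine ⟨hps, ?_⟩
        have hry : r ((play 0).2) = (hpos (sh binit)).choose := by
          rw [h2]; exact hfix _
        have hy0 : yn 0 = (sh binit, (hpos (sh binit)).choose) := by
          show (sh (play 0).1, r ((play 0).2)) = _
          rw [hry]
          rfl
        rw [hy0]
        exact (hpos (sh binit)).choose_spec
      | succ n ih =>
        obtain ⟨hp, hnW⟩ := ih
        obtain ⟨h1, h2, _⟩ := stepMain n hp hnW
        exact ⟨h1, h2⟩
    -- surrounding in G transfers to surrounding of the shadows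
    have hsurrn : ∀ n, Nw ≤ n → surrB H k (sh (play (n + 1)).1) (r ((play n).2)) := by
      intro n hn v hadj
      have hp := (main n).1
      have hrp : r ((play n).2) = ⟨(play n).2, hp⟩ := hfix ⟨(play n).2, hp⟩
      have hadj' : H.Adj (⟨(play n).2, hp⟩ : s) v := by rwa [hrp] at hadj
      have hadjG : G.Adj (play n).2 (v : V) := hsub _ _ hadj'
      obtain ⟨i, hi⟩ := hNw n hn (v : V) hadjG
      refine ⟨i, ?_⟩
      show r ((play (n + 1)).1 i) = v
      rw [hi]
      exact hfix v
    have hdec : ∀ n, Nw ≤ n → rk (yn (n + 1)) < rk (yn n) := by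
      intro n hn
      exact (stepMain n (main n).1 (main n).2).2.2 (hsurrn n hn)
    have hbound : ∀ t, rk (yn (Nw + t)) + t ≤ rk (yn Nw) := by
      intro t
      induction t with
      | zero => simp
      | succ t ih =>
        have := hdec (Nw + t) (by omega)
        have he : Nw + (t + 1) = (Nw + t) + 1 := by omega
        rw [he]
        omega
    have := hbound (rk (yn Nw) + 1)
    omega

/-- If `H` is a retract of `G` (a subgraph of `G` together with a retraction
`r : V(G) → V(H)` which fixes `V(H)` pointwise and preserves adjacency-or-equality),
then `B(H) ≤ B(G)`. -/
theorem bodyguardNumber_le_of_retract {V : Type*} [Fintype V] (G : SimpleGraph V)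
    (s : Set V) [DecidablePred (· ∈ s)] (H : SimpleGraph s)
    (hsub : ∀ a b : s, H.Adj a b → G.Adj (a : V) (b : V))
    (r : V → s)
    (hhom : ∀ a b : V, G.Adj a b → H.Adj (r a) (r b) ∨ r a = r b)
    (hfix : ∀ a : s, r (a : V) = a) :
    bodyguardNumber H ≤ bodyguardNumber G := by
  classical
  have hne : {k | BodyguardsWin G k}.Nonempty := ⟨Fintype.card V, all_win G⟩
  have hmem : BodyguardsWin G (bodyguardNumber G) := Nat.sInf_mem hne
  have hH : BodyguardsWin H (bodyguardNumber G) :=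
    transferB G s H hsub r hhom hfix _ hmem
  exact Nat.sInf_le hH
end

section
/- The bodyguard number is not monotone with respect to connected subgraphs: there exists a graph G with a connected subgraph H such that B(H) > B(G). -/
open SimpleGraph

/-! ### Witness graphs: `GG` is the 2×3 grid, `HH` is a spanning double star of it. -/

/-- The 2×3 grid graph on `Fin 6` (rows `{0,1,2}` and `{3,4,5}`, columns mod 3). -/
def GG : SimpleGraph (Fin 6) where
  Adj a b := (a.val, b.val) ∈
    [(0,1),(1,0),(1,2),(2,1),(3,4),(4,3),(4,5),(5,4),(0,3),(3,0),(1,4),(4,1),(2,5),(5,2)]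
  symm := by
    have : ∀ a b : Fin 6, (a.val, b.val) ∈
        [(0,1),(1,0),(1,2),(2,1),(3,4),(4,3),(4,5),(5,4),(0,3),(3,0),(1,4),(4,1),(2,5),(5,2)] →
        (b.val, a.val) ∈
        [(0,1),(1,0),(1,2),(2,1),(3,4),(4,3),(4,5),(5,4),(0,3),(3,0),(1,4),(4,1),(2,5),(5,2)] := by
      decide
    exact ⟨fun a b h => this a b h⟩
  loopless := by
    have : ∀ a : Fin 6, ¬ (a.val, a.val) ∈
        [(0,1),(1,0),(1,2),(2,1),(3,4),(4,3),(4,5),(5,4),(0,3),(3,0),(1,4),(4,1),(2,5),(5,2)] := by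
      decide
    exact ⟨fun a => this a⟩

/-- The double star: centers `1` and `4`, pendants `0,2` at `1` and `3,5` at `4`. -/
def HH : SimpleGraph (Fin 6) where
  Adj a b := (a.val, b.val) ∈
    [(0,1),(1,0),(1,2),(2,1),(1,4),(4,1),(3,4),(4,3),(4,5),(5,4)]
  symm := by
    have : ∀ a b : Fin 6, (a.val, b.val) ∈
        [(0,1),(1,0),(1,2),(2,1),(1,4),(4,1),(3,4),(4,3),(4,5),(5,4)] →
        (b.val, a.val) ∈
        [(0,1),(1,0),(1,2),(2,1),(1,4),(4,1),(3,4),(4,3),(4,5),(5,4)] := by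
      decide
    exact ⟨fun a b h => this a b h⟩
  loopless := by
    have : ∀ a : Fin 6, ¬ (a.val, a.val) ∈
        [(0,1),(1,0),(1,2),(2,1),(1,4),(4,1),(3,4),(4,3),(4,5),(5,4)] := by
      decide
    exact ⟨fun a => this a⟩

instance : DecidableRel GG.Adj := fun a b =>
  inferInstanceAs (Decidable ((a.val, b.val) ∈
    [(0,1),(1,0),(1,2),(2,1),(3,4),(4,3),(4,5),(5,4),(0,3),(3,0),(1,4),(4,1),(2,5),(5,2)]))

instance : DecidableRel HH.Adj := fun a b =>
  inferInstanceAs (Decidable ((a.val, b.val) ∈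
    [(0,1),(1,0),(1,2),(2,1),(1,4),(4,1),(3,4),(4,3),(4,5),(5,4)]))

instance {V : Type*} [DecidableEq V] (G : SimpleGraph V) [DecidableRel G.Adj] (x y : V) :
    Decidable (stepRel G x y) :=
  inferInstanceAs (Decidable (x = y ∨ G.Adj x y))

/-- Target positions for the three bodyguards on the grid, given the president's vertex. -/
def T : Fin 6 → Fin 3 → Fin 6 := ![![3,1,2], ![0,4,2], ![0,1,5], ![0,4,5], ![3,1,5], ![3,4,2]]

lemma T_step : ∀ (p : Fin 6) (i : Fin 3) (v : Fin 6), v.val % 3 = i.val →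
    stepRel GG v (T p i) := by decide

lemma T_col : ∀ (p : Fin 6) (i : Fin 3), (T p i).val % 3 = i.val := by decide

lemma T_cover : ∀ (p v : Fin 6), GG.Adj p v → ∃ i, T p i = v := by decide

/-- The bodyguard move on the grid: each guard patrols its own column. -/
def gb (bs : Fin 3 → Fin 6) (p : Fin 6) (i : Fin 3) : Fin 6 :=
  if (bs i).val % 3 = i.val then T p i else bs i

lemma gb_eq (bs : Fin 3 → Fin 6) (p : Fin 6) (i : Fin 3) (h : (bs i).val % 3 = i.val) :
    gb bs p i = T p i := if_pos h

lemma gamePlay_succ {V : Type*} {k : ℕ} (binit : Fin k → V)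
    (bmove : (Fin k → V) → V → Fin k → V) (pinit : (Fin k → V) → V)
    (pmove : (Fin k → V) → V → V) (n : ℕ) :
    gamePlay binit bmove pinit pmove (n + 1) =
      (bmove (gamePlay binit bmove pinit pmove n).1 (gamePlay binit bmove pinit pmove n).2,
       pmove (bmove (gamePlay binit bmove pinit pmove n).1
          (gamePlay binit bmove pinit pmove n).2)
        (gamePlay binit bmove pinit pmove n).2) := rfl

theorem winG3 : BodyguardsWin GG 3 := by
  refine ⟨![0,1,2], gb, ?_, ?_⟩
  · intro bs p i
    by_cases h : (bs i).val % 3 = i.val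
    · rw [gb_eq bs p i h]; exact T_step p i (bs i) h
    · unfold gb; rw [if_neg h]; exact Or.inl rfl
  · intro pinit pmove _
    have inv : ∀ m i, ((gamePlay ![0,1,2] gb pinit pmove m).1 i).val % 3 = i.val := by
      intro m
      induction m with
      | zero => intro i; fin_cases i <;> rfl
      | succ m ih =>
        intro i
        have e : (gamePlay ![0,1,2] gb pinit pmove (m+1)).1 i =
            gb (gamePlay ![0,1,2] gb pinit pmove m).1
              (gamePlay ![0,1,2] gb pinit pmove m).2 i := rfl
        rw [e, gb_eq _ _ _ (ih i)]
        exact T_col _ i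
    refine ⟨0, fun n _ v hv => ?_⟩
    obtain ⟨i, hi⟩ := T_cover _ v hv
    refine ⟨i, ?_⟩
    have e : (gamePlay ![0,1,2] gb pinit pmove (n+1)).1 i =
        gb (gamePlay ![0,1,2] gb pinit pmove n).1
          (gamePlay ![0,1,2] gb pinit pmove n).2 i := rfl
    rw [e, gb_eq _ _ _ (inv n i)]
    exact hi

theorem winH6 : BodyguardsWin HH 6 := by
  refine ⟨id, fun bs _ i => bs i, fun _ _ _ => Or.inl rfl, ?_⟩
  intro pinit pmove _
  have inv : ∀ m i, (gamePlay id (fun bs _ i => bs i) pinit pmove m).1 i = i := by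
    intro m
    induction m with
    | zero => intro i; rfl
    | succ m ih => intro i; exact ih i
  exact ⟨0, fun n _ v _ => ⟨v, inv (n + 1) v⟩⟩

theorem lbH : ∀ k, BodyguardsWin HH k → 4 ≤ k := by
  intro k hk
  by_contra hlt
  push_neg at hlt
  obtain ⟨binit, bmove, hstep, hwin⟩ := hk
  have hpdec : ∀ p : Fin 6, stepRel HH p (if p = 4 then 1 else if p = 1 then 4 else p) := by
    decide
  obtain ⟨N, hN⟩ := hwin (fun _ => 1)
      (fun _ p => if p = 4 then 1 else if p = 1 then 4 else p)
      (fun _ p => hpdec p)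
  set play := gamePlay binit bmove (fun _ => (1 : Fin 6))
      (fun _ p => if p = 4 then 1 else if p = 1 then 4 else p) with hplay
  have key : ∀ n, (play (n+1)).2 =
      (if (play n).2 = 4 then 1 else if (play n).2 = 1 then 4 else (play n).2) := by
    intro n; rw [hplay]; rfl
  have p0 : (play 0).2 = 1 := by rw [hplay]; rfl
  have hpos : ∀ m, (play (2 * m)).2 = 1 ∧ (play (2 * m + 1)).2 = 4 := by
    intro m
    induction m with
    | zero =>
      refine ⟨p0, ?_⟩
      rw [show 2 * 0 + 1 = 0 + 1 from rfl, key 0, p0]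
      decide
    | succ m ih =>
      have e1 : 2 * (m + 1) = (2 * m + 1) + 1 := by ring
      have h1 : (play (2 * (m + 1))).2 = 1 := by
        rw [e1, key (2 * m + 1), ih.2]
        decide
      refine ⟨h1, ?_⟩
      rw [key (2 * (m + 1)), h1]
      decide
  have hc1 := hN (2 * N) (by omega)
  have hc2 := hN (2 * N + 1) (by omega)
  rw [(hpos N).1] at hc1
  rw [(hpos N).2] at hc2
  obtain ⟨i0, hi0⟩ := hc1 0 (by decide)
  obtain ⟨i2, hi2⟩ := hc1 2 (by decide)
  obtain ⟨i4, hi4⟩ := hc1 4 (by decide)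
  have d02 : i0.val ≠ i2.val := fun h => by
    rw [Fin.ext h, hi2] at hi0; exact absurd hi0 (by decide)
  have d04 : i0.val ≠ i4.val := fun h => by
    rw [Fin.ext h, hi4] at hi0; exact absurd hi0 (by decide)
  have d24 : i2.val ≠ i4.val := fun h => by
    rw [Fin.ext h, hi4] at hi2; exact absurd hi2 (by decide)
  have hmem : ∀ i : Fin k, i = i0 ∨ i = i2 ∨ i = i4 := by
    intro i
    have h0 := i0.isLt; have h2 := i2.isLt; have h4 := i4.isLt; have hi := i.isLt
    have : i.val = i0.val ∨ i.val = i2.val ∨ i.val = i4.val := by omega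
    rcases this with h | h | h
    · exact Or.inl (Fin.ext h)
    · exact Or.inr (Or.inl (Fin.ext h))
    · exact Or.inr (Or.inr (Fin.ext h))
  obtain ⟨j3, hj3⟩ := hc2 3 (by decide)
  obtain ⟨j5, hj5⟩ := hc2 5 (by decide)
  have hstep3 : stepRel HH ((play (2*N+1)).1 j3) ((play (2*N+1+1)).1 j3) := by
    rw [hplay, gamePlay_succ]; exact hstep _ _ j3
  have hstep5 : stepRel HH ((play (2*N+1)).1 j5) ((play (2*N+1+1)).1 j5) := by
    rw [hplay, gamePlay_succ]; exact hstep _ _ j5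
  rw [hj3] at hstep3
  rw [hj5] at hstep5
  have hj3e : j3 = i4 := by
    rcases hmem j3 with h | h | h
    · rw [h, hi0] at hstep3; exact absurd hstep3 (by decide)
    · rw [h, hi2] at hstep3; exact absurd hstep3 (by decide)
    · exact h
  have hj5e : j5 = i4 := by
    rcases hmem j5 with h | h | h
    · rw [h, hi0] at hstep5; exact absurd hstep5 (by decide)
    · rw [h, hi2] at hstep5; exact absurd hstep5 (by decide)
    · exact h
  rw [hj3e] at hj3
  rw [hj5e] at hj5
  rw [hj5] at hj3
  exact absurd hj3 (by decide)

theorem HH_le_GG : HH ≤ GG := by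
  have h : ∀ v w : Fin 6, HH.Adj v w → GG.Adj v w := by decide
  exact fun v w hvw => h v w hvw

theorem HH_connected : HH.Connected := by
  rw [connected_iff]
  refine ⟨?_, ⟨0⟩⟩
  have hub : ∀ w : Fin 6, HH.Reachable w 1 := by
    intro w
    fin_cases w
    · exact Adj.reachable (by decide)
    · exact Reachable.refl 1
    · exact Adj.reachable (by decide)
    · exact (Adj.reachable (by decide : HH.Adj 3 4)).trans
        (Adj.reachable (by decide : HH.Adj 4 1))
    · exact Adj.reachable (by decide)
    · exact (Adj.reachable (by decide : HH.Adj 5 4)).trans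
        (Adj.reachable (by decide : HH.Adj 4 1))
  intro u v
  exact (hub u).trans (hub v).symm

/-- The bodyguard number is not monotone with respect to connected subgraphs: there is a
graph `G` with a connected subgraph `H` such that `B(H) > B(G)`. -/
theorem exists_connected_subgraph_bodyguardNumber_gt :
    ∃ (G H : SimpleGraph (Fin 6)), H ≤ G ∧ H.Connected ∧
      bodyguardNumber G < bodyguardNumber H := by
  refine ⟨GG, HH, HH_le_GG, HH_connected, ?_⟩
  have h1 : bodyguardNumber GG ≤ 3 := Nat.sInf_le winG3
  have h2 : 4 ≤ bodyguardNumber HH :=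
    lbH _ (Nat.sInf_mem (⟨6, winH6⟩ : Set.Nonempty {k | BodyguardsWin HH k}))
  omega
end

section
/- For the cycle C_n on n ≥ 3 vertices, B(C_n) = 2 if n ≤ 5 and B(C_n) = 3 if n > 5. -/
open SimpleGraph

-- ===== auxiliary development =====
open Fin.CommRing
namespace BGaux

lemma gp1 {V : Type*} {k : ℕ} (b : Fin k → V) (bm : (Fin k → V) → V → Fin k → V)
    (pi : (Fin k → V) → V) (pm : (Fin k → V) → V → V) (t : ℕ) :
    (gamePlay b bm pi pm (t+1)).1 = bm (gamePlay b bm pi pm t).1 (gamePlay b bm pi pm t).2 := by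
  rw [gamePlay]

lemma gp2 {V : Type*} {k : ℕ} (b : Fin k → V) (bm : (Fin k → V) → V → Fin k → V)
    (pi : (Fin k → V) → V) (pm : (Fin k → V) → V → V) (t : ℕ) :
    (gamePlay b bm pi pm (t+1)).2
      = pm (bm (gamePlay b bm pi pm t).1 (gamePlay b bm pi pm t).2)
          (gamePlay b bm pi pm t).2 := by
  rw [gamePlay]

instance {V : Type*} (G : SimpleGraph V) [DecidableEq V] [DecidableRel G.Adj] :
    DecidableRel (stepRel G) := fun _ _ => inferInstanceAs (Decidable (_ ∨ _))

lemma mod2cases {a n : ℕ} (h : a < 2*n) :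
    (a % n = a ∧ a < n) ∨ (a % n = a - n ∧ n ≤ a) := by
  rcases Nat.lt_or_ge a n with h'|h'
  · exact Or.inl ⟨Nat.mod_eq_of_lt h', h'⟩
  · refine Or.inr ⟨?_, h'⟩
    rw [Nat.mod_eq_sub_mod h', Nat.mod_eq_of_lt (by omega)]

lemma descent (Q : ℕ → Prop) (μ : ℕ → ℕ) (t0 : ℕ)
    (h : ∀ t, t0 ≤ t → Q t → Q (t+1) → μ (t+1) + 2 ≤ μ t) : ∃ t, t0 ≤ t ∧ ¬ Q t := by
  by_contra hc
  push_neg at hc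
  have key : ∀ k, Q (t0 + k) → μ (t0 + k) + 2*k ≤ μ t0 := by
    intro k
    induction k with
    | zero => simp
    | succ k ih =>
      intro _
      have hq : Q (t0 + k) := hc _ (by omega)
      have hq' : Q (t0 + k + 1) := hc _ (by omega)
      have := h (t0 + k) (by omega) hq hq'
      have := ih hq
      have e : t0 + (k+1) = t0 + k + 1 := by omega
      rw [e]
      omega
  have := key (μ t0 + 1) (hc _ (by omega))
  omega

section Cycle
variable {m : ℕ}

lemma val0 : (0 : Fin (m+3)).val = 0 := rfl
lemma val1 : (1 : Fin (m+3)).val = 1 := rfl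
lemma val2 : (2 : Fin (m+3)).val = 2 := rfl

lemma adj_iff {p v : Fin (m+3)} : (cycleGraph (m+3)).Adj p v ↔ v = p + 1 ∨ v = p - 1 := by
  have h := @cycleGraph_adj (m+1) p v
  rw [h]
  constructor
  · rintro (h1|h1)
    · right; have h2 := sub_sub_cancel p v; rw [h1] at h2; exact h2.symm
    · left; have h2 := sub_sub_cancel v p; rw [h1] at h2
      rw [← h2]; ring
  · rintro (rfl|rfl)
    · right; ring
    · left; ring

lemma step_iff {p v : Fin (m+3)} :
    stepRel (cycleGraph (m+3)) p v ↔ v = p ∨ v = p + 1 ∨ v = p - 1 := by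
  unfold stepRel; rw [adj_iff, eq_comm]

lemma adj_succ (p : Fin (m+3)) : (cycleGraph (m+3)).Adj p (p+1) := adj_iff.2 (Or.inl rfl)
lemma adj_pred (p : Fin (m+3)) : (cycleGraph (m+3)).Adj p (p-1) := adj_iff.2 (Or.inr rfl)
lemma step_refl (p : Fin (m+3)) : stepRel (cycleGraph (m+3)) p p := Or.inl rfl
lemma step_succ (p : Fin (m+3)) : stepRel (cycleGraph (m+3)) p (p+1) := Or.inr (adj_succ p)
lemma step_pred (p : Fin (m+3)) : stepRel (cycleGraph (m+3)) p (p-1) := Or.inr (adj_pred p)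

lemma negone_val : (0 - 1 : Fin (m+3)).val = m + 2 := by
  rw [Fin.sub_def]
  show (m + 3 - (1:Fin (m+3)).val + (0:Fin (m+3)).val) % (m+3) = m + 2
  rw [val0, val1, Nat.mod_eq_of_lt (by omega)]
  omega

lemma one_ne_negone : (1 : Fin (m+3)) ≠ 0 - 1 := by
  intro h
  have := congrArg Fin.val h
  rw [val1, negone_val] at this
  omega

/-- distance-≤2 behind the president -/
def back (p x : Fin (m+3)) : Prop := (p - x).val ≤ 2
/-- distance-≤2 in front of the president -/
def front (p x : Fin (m+3)) : Prop := (x - p).val ≤ 2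

instance (p x : Fin (m+3)) : Decidable (back p x) := Nat.decLe _ _
instance (p x : Fin (m+3)) : Decidable (front p x) := Nat.decLe _ _

lemma eq_of_val_eq2 {a : Fin (m+3)} {k : ℕ} (hk : k < m+3) (h : a.val = k) :
    a = (k : Fin (m+3)) := by
  apply Fin.ext
  rw [h, Fin.val_cast_of_lt hk]

lemma back_cases {p x : Fin (m+3)} (h : back p x) : x = p ∨ x = p - 1 ∨ x = p - 2 := by
  unfold back at h
  have hx := sub_sub_cancel p x
  interval_cases hv : (p - x).val
  · left
    have : p - x = 0 := Fin.ext (by rw [hv, val0])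
    rw [this] at hx; rw [← hx]; ring
  · right; left
    have : p - x = 1 := Fin.ext (by rw [hv, val1])
    rw [this] at hx; exact hx.symm
  · right; right
    have : p - x = 2 := Fin.ext (by rw [hv, val2])
    rw [this] at hx; exact hx.symm

lemma front_cases {p x : Fin (m+3)} (h : front p x) : x = p ∨ x = p + 1 ∨ x = p + 2 := by
  unfold front at h
  have hx := sub_sub_cancel x p  -- x - (x - p) = p
  interval_cases hv : (x - p).val
  · left
    have : x - p = 0 := Fin.ext (by rw [hv, val0])
    exact sub_eq_zero.mp this
  · right; left
    have : x - p = 1 := Fin.ext (by rw [hv, val1])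
    rw [this] at hx; rw [← hx]; ring
  · right; right
    have : x - p = 2 := Fin.ext (by rw [hv, val2])
    rw [this] at hx; rw [← hx]; ring

lemma back_val {p x : Fin (m+3)} (h : x = p ∨ x = p - 1 ∨ x = p - 2) : back p x := by
  unfold back
  rcases h with rfl|rfl|rfl
  · simp
  · have : p - (p - 1) = 1 := by ring
    simp only [this, val1]; omega
  · have : p - (p - 2) = 2 := by ring
    simp only [this, val2]; omega

lemma front_val {p x : Fin (m+3)} (h : x = p ∨ x = p + 1 ∨ x = p + 2) : front p x := by
  unfold front
  rcases h with rfl|rfl|rfl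
  · simp
  · have : p + 1 - p = 1 := by ring
    simp only [this, val1]; omega
  · have : p + 2 - p = 2 := by ring
    simp only [this, val2]; omega

lemma back_iff_step {p x : Fin (m+3)} :
    back p x ↔ stepRel (cycleGraph (m+3)) x (p - 1) := by
  constructor
  · intro h
    rcases back_cases h with rfl|rfl|rfl
    · exact step_pred _
    · exact step_refl _
    · rw [show p - 1 = (p - 2) + 1 by ring]; exact step_succ _
  · intro h
    rcases step_iff.mp h with h1|h1|h1
    · exact back_val (Or.inr (Or.inl h1.symm))
    · apply back_val; right; right
      have h2 : x = p - 1 - 1 := by rw [h1]; ring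
      rw [h2]; ring
    · apply back_val; left
      exact (sub_left_inj.mp h1.symm)

lemma front_iff_step {p x : Fin (m+3)} :
    front p x ↔ stepRel (cycleGraph (m+3)) x (p + 1) := by
  constructor
  · intro h
    rcases front_cases h with rfl|rfl|rfl
    · exact step_succ _
    · exact step_refl _
    · rw [show p + 1 = (p + 2) - 1 by ring]; exact step_pred _
  · intro h
    rcases step_iff.mp h with h1|h1|h1
    · exact front_val (Or.inr (Or.inl h1.symm))
    · apply front_val; left
      exact (add_left_inj _).mp h1.symm
    · apply front_val; right; right
      have h2 : x = p + 1 + 1 := by rw [h1]; ring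
      rw [h2]; ring

end Cycle
end BGaux

-- appended to base
namespace BGaux
section Small
variable {m : ℕ}

lemma not_win_le_one {k : ℕ} (hk : k ≤ 1) : ¬ BodyguardsWin (cycleGraph (m+3)) k := by
  rintro ⟨binit, bmove, hleg, hwin⟩
  obtain ⟨N, hN⟩ := hwin (fun _ => 0) (fun _ p => p) (fun _ _ => Or.inl rfl)
  have hp : ∀ t, (gamePlay binit bmove (fun _ => (0:Fin (m+3))) (fun _ p => p) t).2 = 0 := by
    intro t
    induction t with
    | zero => rfl
    | succ t ih => rw [gp2]; exact ih
  have h1 := hN N le_rfl 1 (by rw [hp]; simpa using adj_succ (0 : Fin (m+3)))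
  have h2 := hN N le_rfl (0-1) (by rw [hp]; exact adj_pred 0)
  obtain ⟨i, hi⟩ := h1
  obtain ⟨j, hj⟩ := h2
  have hij : i = j := by
    have h1 := i.isLt
    have h2 := j.isLt
    exact Fin.ext (by omega)
  rw [hij, hj] at hi
  exact one_ne_negone hi.symm

/-- the two sandwich configurations -/
def sand (g : Fin 2 → Fin (m+3)) (p : Fin (m+3)) : Prop :=
  (g 0 = p - 1 ∧ g 1 = p + 1) ∨ (g 0 = p + 1 ∧ g 1 = p - 1)

def covers2 (g : Fin 2 → Fin (m+3)) (p : Fin (m+3)) : Prop :=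
  ∃ f : Fin 2 → Fin (m+3), (∀ i, stepRel (cycleGraph (m+3)) (g i) (f i)) ∧ sand f p

instance (g : Fin 2 → Fin (m+3)) (p : Fin (m+3)) : Decidable (sand g p) := by
  unfold sand; infer_instance

instance (g : Fin 2 → Fin (m+3)) (p : Fin (m+3)) : Decidable (covers2 g p) := by
  unfold covers2 sand; infer_instance

lemma win2_of (b0 : Fin 2 → Fin (m+3))
    (H1 : ∀ p, covers2 b0 p)
    (H2 : ∀ (g : Fin 2 → Fin (m+3)) p p', sand g p →
      stepRel (cycleGraph (m+3)) p p' → covers2 g p') :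
    BodyguardsWin (cycleGraph (m+3)) 2 := by
  classical
  let bm : (Fin 2 → Fin (m+3)) → Fin (m+3) → Fin 2 → Fin (m+3) :=
    fun g p => if h : covers2 g p then h.choose else g
  have hbm : ∀ g p (h : covers2 g p), bm g p = h.choose := by
    intro g p h
    simp only [bm, dif_pos h]
  refine ⟨b0, bm, ?_, ?_⟩
  · intro bs p i
    by_cases h : covers2 bs p
    · rw [hbm bs p h]; exact h.choose_spec.1 i
    · simp only [bm, dif_neg h]; exact Or.inl rfl
  · intro pinit pmove hpm
    have key : ∀ t, covers2 (gamePlay b0 bm pinit pmove t).1 (gamePlay b0 bm pinit pmove t).2 := by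
      intro t
      induction t with
      | zero => exact H1 _
      | succ t ih =>
        rw [gp1, hbm _ _ ih]
        apply H2 _ (gamePlay b0 bm pinit pmove t).2 _ ih.choose_spec.2
        rw [gp2, hbm _ _ ih]
        exact hpm _ _
    refine ⟨0, ?_⟩
    intro t _ v hv
    have hc := key t
    rw [gp1, hbm _ _ hc]
    rcases hc.choose_spec.2 with ⟨ha, hb⟩|⟨ha, hb⟩ <;> rcases adj_iff.mp hv with rfl|rfl
    · exact ⟨1, hb⟩
    · exact ⟨0, ha⟩
    · exact ⟨0, ha⟩
    · exact ⟨1, hb⟩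
end Small

lemma win2_3 : BodyguardsWin (cycleGraph (0+3)) 2 :=
  win2_of ![1, 2] (by decide) (by decide)

lemma win2_4 : BodyguardsWin (cycleGraph (1+3)) 2 :=
  win2_of ![1, 3] (by decide) (by decide)

lemma win2_5 : BodyguardsWin (cycleGraph (2+3)) 2 :=
  win2_of ![1, 4] (by decide) (by decide)

end BGaux

namespace BGaux
section Three
variable {m : ℕ}

-- val arithmetic helpers
lemma vsub_one_of_ge {a : Fin (m+3)} (h : 1 ≤ a.val) : (a - 1).val = a.val - 1 := by
  rw [Fin.sub_def]
  show (m + 3 - (1:Fin (m+3)).val + a.val) % (m+3) = a.val - 1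
  rw [val1]
  have := a.isLt
  rw [Nat.mod_eq_sub_mod (by omega), Nat.mod_eq_of_lt (by omega)]
  omega

lemma vsub_two_of_ge {a : Fin (m+3)} (h : 2 ≤ a.val) : (a - 2).val = a.val - 2 := by
  rw [Fin.sub_def]
  show (m + 3 - (2:Fin (m+3)).val + a.val) % (m+3) = a.val - 2
  rw [val2]
  have := a.isLt
  rw [Nat.mod_eq_sub_mod (by omega), Nat.mod_eq_of_lt (by omega)]
  omega

lemma vadd_one_cases (a : Fin (m+3)) :
    (a + 1).val = a.val + 1 ∨ (a.val = m + 2 ∧ (a+1).val = 0) := by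
  have := a.isLt
  rw [Fin.add_def]
  show _ ∨ (_ ∧ (a.val + (1:Fin (m+3)).val) % (m+3) = 0)
  rw [val1]
  rcases mod2cases (n := m+3) (a := a.val + 1) (by omega) with ⟨h1,h2⟩|⟨h1,h2⟩
  · left; exact h1
  · right; omega

lemma vadd_two_cases (a : Fin (m+3)) :
    (a + 2).val = a.val + 2 ∨ (m + 3 ≤ a.val + 2 ∧ (a+2).val = a.val + 2 - (m+3)) := by
  have := a.isLt
  rw [Fin.add_def]
  show _ ∨ (_ ∧ (a.val + (2:Fin (m+3)).val) % (m+3) = a.val + 2 - (m+3))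
  rw [val2]
  rcases mod2cases (n := m+3) (a := a.val + 2) (by omega) with ⟨h1,h2⟩|⟨h1,h2⟩
  · left; exact h1
  · right; omega

/-- the 3-bodyguard strategy: guard 0 chases the back zone clockwise, guard 1 chases the
front zone counterclockwise, guard 2 adapts. -/
def bmove3 (g : Fin 3 → Fin (m+3)) (p : Fin (m+3)) : Fin 3 → Fin (m+3) := fun i =>
  if i = 0 then (if back p (g 0) then p - 1 else g 0 + 1)
  else if i = 1 then (if front p (g 1) then p + 1 else g 1 - 1)
  else
    if back p (g 0) ∧ ¬ front p (g 1) then (if front p (g 2) then p + 1 else g 2 + 1)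
    else if front p (g 1) ∧ ¬ back p (g 0) then (if back p (g 2) then p - 1 else g 2 - 1)
    else g 2

lemma bm3_0 (g : Fin 3 → Fin (m+3)) (p : Fin (m+3)) :
    bmove3 g p 0 = if back p (g 0) then p - 1 else g 0 + 1 := rfl
lemma bm3_1 (g : Fin 3 → Fin (m+3)) (p : Fin (m+3)) :
    bmove3 g p 1 = if front p (g 1) then p + 1 else g 1 - 1 := rfl
lemma bm3_2 (g : Fin 3 → Fin (m+3)) (p : Fin (m+3)) :
    bmove3 g p 2 =
      if back p (g 0) ∧ ¬ front p (g 1) then (if front p (g 2) then p + 1 else g 2 + 1)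
      else if front p (g 1) ∧ ¬ back p (g 0) then (if back p (g 2) then p - 1 else g 2 - 1)
      else g 2 := rfl

lemma bmove3_leg : ∀ (g : Fin 3 → Fin (m+3)) p i,
    stepRel (cycleGraph (m+3)) (g i) (bmove3 g p i) := by
  intro g p i
  fin_cases i
  · rw [show (⟨0, by omega⟩ : Fin 3) = 0 from rfl, bm3_0]
    split_ifs with h
    · exact back_iff_step.mp h
    · exact step_succ _
  · rw [show (⟨1, by omega⟩ : Fin 3) = 1 from rfl, bm3_1]
    split_ifs with h
    · exact front_iff_step.mp h
    · exact step_pred _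
  · rw [show (⟨2, by omega⟩ : Fin 3) = 2 from rfl, bm3_2]
    split_ifs with h1 h2 h2 h3
    · exact front_iff_step.mp h2
    · exact step_succ _
    · exact back_iff_step.mp h3
    · exact step_pred _
    · exact step_refl _

/-- core of the 3-guard argument, abstracted from gamePlay -/
lemma three_core (g : ℕ → Fin 3 → Fin (m+3)) (P : ℕ → Fin (m+3))
    (hg : ∀ t, g (t+1) = bmove3 (g t) (P t))
    (hstep : ∀ t, P (t+1) = P t ∨ P (t+1) = P t + 1 ∨ P (t+1) = P t - 1) :
    ∃ T, ∀ t, T ≤ t → ∀ v, (cycleGraph (m+3)).Adj (P t) v → ∃ i, g (t+1) i = v := by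
  classical
  -- move evaluation
  have hm0 : ∀ t, back (P t) (g t 0) → g (t+1) 0 = P t - 1 := by
    intro t h; rw [hg, bm3_0, if_pos h]
  have hm0' : ∀ t, ¬ back (P t) (g t 0) → g (t+1) 0 = g t 0 + 1 := by
    intro t h; rw [hg, bm3_0, if_neg h]
  have hm1 : ∀ t, front (P t) (g t 1) → g (t+1) 1 = P t + 1 := by
    intro t h; rw [hg, bm3_1, if_pos h]
  have hm1' : ∀ t, ¬ front (P t) (g t 1) → g (t+1) 1 = g t 1 - 1 := by
    intro t h; rw [hg, bm3_1, if_neg h]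
  have hm2a : ∀ t, back (P t) (g t 0) → ¬ front (P t) (g t 1) → front (P t) (g t 2) →
      g (t+1) 2 = P t + 1 := by
    intro t h1 h2 h3; rw [hg, bm3_2, if_pos ⟨h1, h2⟩, if_pos h3]
  have hm2b : ∀ t, back (P t) (g t 0) → ¬ front (P t) (g t 1) → ¬ front (P t) (g t 2) →
      g (t+1) 2 = g t 2 + 1 := by
    intro t h1 h2 h3; rw [hg, bm3_2, if_pos ⟨h1, h2⟩, if_neg h3]
  have hm2c : ∀ t, front (P t) (g t 1) → ¬ back (P t) (g t 0) → back (P t) (g t 2) →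
      g (t+1) 2 = P t - 1 := by
    intro t h1 h2 h3
    rw [hg, bm3_2, if_neg (by tauto), if_pos ⟨h1, h2⟩, if_pos h3]
  have hm2d : ∀ t, front (P t) (g t 1) → ¬ back (P t) (g t 0) → ¬ back (P t) (g t 2) →
      g (t+1) 2 = g t 2 - 1 := by
    intro t h1 h2 h3
    rw [hg, bm3_2, if_neg (by tauto), if_pos ⟨h1, h2⟩, if_neg h3]
  -- zone maintenance
  have back_next : ∀ t (x : Fin (m+3)), x = P t - 1 → back (P (t+1)) x := by
    intro t x hx
    rcases hstep t with he|he|he <;> rw [he, hx] <;> apply back_val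
    · exact Or.inr (Or.inl rfl)
    · exact Or.inr (Or.inr (by ring))
    · exact Or.inl rfl
  have front_next : ∀ t (x : Fin (m+3)), x = P t + 1 → front (P (t+1)) x := by
    intro t x hx
    rcases hstep t with he|he|he <;> rw [he, hx] <;> apply front_val
    · exact Or.inr (Or.inl rfl)
    · exact Or.inl (by ring)
    · exact Or.inr (Or.inr (by ring))
  have pers_b0 : ∀ t, back (P t) (g t 0) → back (P (t+1)) (g (t+1) 0) := by
    intro t h; exact back_next t _ (hm0 t h)
  have pers_f1 : ∀ t, front (P t) (g t 1) → front (P (t+1)) (g (t+1) 1) := by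
    intro t h; exact front_next t _ (hm1 t h)
  -- the two winning configurations
  have persW : ∀ t, back (P t) (g t 0) ∧ (front (P t) (g t 1) ∨ front (P t) (g t 2)) →
      back (P (t+1)) (g (t+1) 0) ∧ (front (P (t+1)) (g (t+1) 1) ∨ front (P (t+1)) (g (t+1) 2)) := by
    rintro t ⟨hb, hf⟩
    refine ⟨pers_b0 t hb, ?_⟩
    by_cases hf1 : front (P t) (g t 1)
    · exact Or.inl (pers_f1 t hf1)
    · rcases hf with hf|hf
      · exact absurd hf hf1
      · exact Or.inr (front_next t _ (hm2a t hb hf1 hf))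
  have persW2 : ∀ t, front (P t) (g t 1) ∧ (back (P t) (g t 0) ∨ back (P t) (g t 2)) →
      front (P (t+1)) (g (t+1) 1) ∧ (back (P (t+1)) (g (t+1) 0) ∨ back (P (t+1)) (g (t+1) 2)) := by
    rintro t ⟨hf, hb⟩
    refine ⟨pers_f1 t hf, ?_⟩
    by_cases hb0 : back (P t) (g t 0)
    · exact Or.inl (pers_b0 t hb0)
    · rcases hb with hb|hb
      · exact absurd hb hb0
      · exact Or.inr (back_next t _ (hm2c t hf hb0 hb))
  have cover : ∀ t,
      (back (P t) (g t 0) ∧ (front (P t) (g t 1) ∨ front (P t) (g t 2))) ∨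
      (front (P t) (g t 1) ∧ (back (P t) (g t 0) ∨ back (P t) (g t 2))) →
      ∀ v, (cycleGraph (m+3)).Adj (P t) v → ∃ i, g (t+1) i = v := by
    intro t hW v hv
    rcases adj_iff.mp hv with rfl|rfl
    · -- v = P t + 1
      rcases hW with ⟨hb, hf⟩|⟨hf, _⟩
      · by_cases hf1 : front (P t) (g t 1)
        · exact ⟨1, hm1 t hf1⟩
        · rcases hf with hf|hf
          · exact absurd hf hf1
          · exact ⟨2, hm2a t hb hf1 hf⟩
      · exact ⟨1, hm1 t hf⟩
    · -- v = P t - 1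
      rcases hW with ⟨hb, _⟩|⟨hf, hb⟩
      · exact ⟨0, hm0 t hb⟩
      · by_cases hb0 : back (P t) (g t 0)
        · exact ⟨0, hm0 t hb0⟩
        · rcases hb with hb|hb
          · exact absurd hb hb0
          · exact ⟨2, hm2c t hf hb0 hb⟩
  -- termination: phase 0
  have drop0 : ∀ t, 0 ≤ t → (¬ back (P t) (g t 0) ∧ ¬ front (P t) (g t 1)) →
      (¬ back (P (t+1)) (g (t+1) 0) ∧ ¬ front (P (t+1)) (g (t+1) 1)) →
      (((P (t+1)) - (g (t+1) 0)).val + ((g (t+1) 1) - (P (t+1))).val) + 2 ≤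
        ((P t) - (g t 0)).val + ((g t 1) - (P t)).val := by
    rintro t _ ⟨hb, hf⟩ _
    have hu : 3 ≤ ((P t) - (g t 0)).val := by unfold back at hb; omega
    have hv : 3 ≤ ((g t 1) - (P t)).val := by unfold front at hf; omega
    have e0 := hm0' t hb
    have e1 := hm1' t hf
    rcases hstep t with he|he|he
    · have c1 : (P (t+1)) - (g (t+1) 0) = ((P t) - (g t 0)) - 1 := by rw [he, e0]; ring
      have c2 : (g (t+1) 1) - (P (t+1)) = ((g t 1) - (P t)) - 1 := by rw [he, e1]; ring
      rw [c1, c2, vsub_one_of_ge (by omega), vsub_one_of_ge (by omega)]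
      omega
    · have c1 : (P (t+1)) - (g (t+1) 0) = (P t) - (g t 0) := by rw [he, e0]; ring
      have c2 : (g (t+1) 1) - (P (t+1)) = ((g t 1) - (P t)) - 2 := by rw [he, e1]; ring
      rw [c1, c2, vsub_two_of_ge (by omega)]
      omega
    · have c1 : (P (t+1)) - (g (t+1) 0) = ((P t) - (g t 0)) - 2 := by rw [he, e0]; ring
      have c2 : (g (t+1) 1) - (P (t+1)) = (g t 1) - (P t) := by rw [he, e1]; ring
      rw [c1, c2, vsub_two_of_ge (by omega)]
      omega
  have phase0 : ∃ t0, back (P t0) (g t0 0) ∨ front (P t0) (g t0 1) := by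
    obtain ⟨t0, _, h⟩ := descent
      (fun t => ¬ back (P t) (g t 0) ∧ ¬ front (P t) (g t 1))
      (fun t => ((P t) - (g t 0)).val + ((g t 1) - (P t)).val) 0 drop0
    rcases Classical.em (back (P t0) (g t0 0)) with h1|h1
    · exact ⟨t0, Or.inl h1⟩
    · rcases Classical.em (front (P t0) (g t0 1)) with h2|h2
      · exact ⟨t0, Or.inr h2⟩
      · exact absurd ⟨h1, h2⟩ h
  obtain ⟨t0, ht0⟩ := phase0
  -- in either case we find a winning configuration
  have main : ∃ T,
      (back (P T) (g T 0) ∧ (front (P T) (g T 1) ∨ front (P T) (g T 2))) ∨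
      (front (P T) (g T 1) ∧ (back (P T) (g T 0) ∨ back (P T) (g T 2))) := by
    rcases ht0 with hb0|hf0
    · -- guard 0 is attached behind forever
      have hBall : ∀ t, t0 ≤ t → back (P t) (g t 0) := by
        intro t ht
        induction t, ht using Nat.le_induction with
        | base => exact hb0
        | succ t ht ih => exact pers_b0 t ih
      have dropB : ∀ t, t0 ≤ t → (¬ front (P t) (g t 1) ∧ ¬ front (P t) (g t 2)) →
          (¬ front (P (t+1)) (g (t+1) 1) ∧ ¬ front (P (t+1)) (g (t+1) 2)) →
          (((g (t+1) 1) - (P (t+1))).val + ((m+3) - ((g (t+1) 2) - (P (t+1))).val)) + 2 ≤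
            ((g t 1) - (P t)).val + ((m+3) - ((g t 2) - (P t)).val) := by
        rintro t ht ⟨hf1, hf2⟩ ⟨hf1', hf2'⟩
        have hv : 3 ≤ ((g t 1) - (P t)).val := by unfold front at hf1; omega
        have hwlt := ((g t 2) - (P t)).isLt
        have e1 := hm1' t hf1
        have e2 := hm2b t (hBall t ht) hf1 hf2
        have hw2' : ¬ ((g (t+1) 2) - (P (t+1))).val ≤ 2 := hf2'
        have hw1' := ((g (t+1) 2) - (P (t+1))).isLt
        rcases hstep t with he|he|he
        · have c2 : (g (t+1) 1) - (P (t+1)) = ((g t 1) - (P t)) - 1 := by rw [he, e1]; ring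
          have c3 : (g (t+1) 2) - (P (t+1)) = ((g t 2) - (P t)) + 1 := by rw [he, e2]; ring
          rw [c2, vsub_one_of_ge (by omega)]
          rw [c3] at hw2' hw1' ⊢
          rcases vadd_one_cases ((g t 2) - (P t)) with hc|⟨hc1, hc2⟩
          · rw [hc]; omega
          · rw [hc2] at hw2'; omega
        · have c2 : (g (t+1) 1) - (P (t+1)) = ((g t 1) - (P t)) - 2 := by rw [he, e1]; ring
          have c3 : (g (t+1) 2) - (P (t+1)) = (g t 2) - (P t) := by rw [he, e2]; ring
          rw [c2, vsub_two_of_ge (by omega), c3]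
          omega
        · have c2 : (g (t+1) 1) - (P (t+1)) = (g t 1) - (P t) := by rw [he, e1]; ring
          have c3 : (g (t+1) 2) - (P (t+1)) = ((g t 2) - (P t)) + 2 := by rw [he, e2]; ring
          rw [c2]
          rw [c3] at hw2' hw1' ⊢
          rcases vadd_two_cases ((g t 2) - (P t)) with hc|⟨hc1, hc2⟩
          · rw [hc]; omega
          · rw [hc2] at hw2'; omega
      obtain ⟨t1, ht1, h⟩ := descent
        (fun t => ¬ front (P t) (g t 1) ∧ ¬ front (P t) (g t 2))
        (fun t => ((g t 1) - (P t)).val + ((m+3) - ((g t 2) - (P t)).val)) t0 dropB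
      rcases Classical.em (front (P t1) (g t1 1)) with h1|h1
      · exact ⟨t1, Or.inl ⟨hBall t1 ht1, Or.inl h1⟩⟩
      · rcases Classical.em (front (P t1) (g t1 2)) with h2|h2
        · exact ⟨t1, Or.inl ⟨hBall t1 ht1, Or.inr h2⟩⟩
        · exact absurd ⟨h1, h2⟩ h
    · -- guard 1 is attached in front forever
      have hFall : ∀ t, t0 ≤ t → front (P t) (g t 1) := by
        intro t ht
        induction t, ht using Nat.le_induction with
        | base => exact hf0
        | succ t ht ih => exact pers_f1 t ih
      have dropF : ∀ t, t0 ≤ t → (¬ back (P t) (g t 0) ∧ ¬ back (P t) (g t 2)) →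
          (¬ back (P (t+1)) (g (t+1) 0) ∧ ¬ back (P (t+1)) (g (t+1) 2)) →
          (((P (t+1)) - (g (t+1) 0)).val + ((m+3) - ((P (t+1)) - (g (t+1) 2)).val)) + 2 ≤
            ((P t) - (g t 0)).val + ((m+3) - ((P t) - (g t 2)).val) := by
        rintro t ht ⟨hb0', hb2⟩ ⟨hb0'', hb2'⟩
        have hu : 3 ≤ ((P t) - (g t 0)).val := by unfold back at hb0'; omega
        have hzlt := ((P t) - (g t 2)).isLt
        have e0 := hm0' t hb0'
        have e2 := hm2d t (hFall t ht) hb0' hb2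
        have hz2' : ¬ ((P (t+1)) - (g (t+1) 2)).val ≤ 2 := hb2'
        have hz1' := ((P (t+1)) - (g (t+1) 2)).isLt
        rcases hstep t with he|he|he
        · have c1 : (P (t+1)) - (g (t+1) 0) = ((P t) - (g t 0)) - 1 := by rw [he, e0]; ring
          have c3 : (P (t+1)) - (g (t+1) 2) = ((P t) - (g t 2)) + 1 := by rw [he, e2]; ring
          rw [c1, vsub_one_of_ge (by omega)]
          rw [c3] at hz2' hz1' ⊢
          rcases vadd_one_cases ((P t) - (g t 2)) with hc|⟨hc1, hc2⟩
          · rw [hc]; omega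
          · rw [hc2] at hz2'; omega
        · have c1 : (P (t+1)) - (g (t+1) 0) = (P t) - (g t 0) := by rw [he, e0]; ring
          have c3 : (P (t+1)) - (g (t+1) 2) = ((P t) - (g t 2)) + 2 := by rw [he, e2]; ring
          rw [c1]
          rw [c3] at hz2' hz1' ⊢
          rcases vadd_two_cases ((P t) - (g t 2)) with hc|⟨hc1, hc2⟩
          · rw [hc]; omega
          · rw [hc2] at hz2'; omega
        · have c1 : (P (t+1)) - (g (t+1) 0) = ((P t) - (g t 0)) - 2 := by rw [he, e0]; ring
          have c3 : (P (t+1)) - (g (t+1) 2) = (P t) - (g t 2) := by rw [he, e2]; ring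
          rw [c1, vsub_two_of_ge (by omega), c3]
          omega
      obtain ⟨t1, ht1, h⟩ := descent
        (fun t => ¬ back (P t) (g t 0) ∧ ¬ back (P t) (g t 2))
        (fun t => ((P t) - (g t 0)).val + ((m+3) - ((P t) - (g t 2)).val)) t0 dropF
      rcases Classical.em (back (P t1) (g t1 0)) with h1|h1
      · exact ⟨t1, Or.inr ⟨hFall t1 ht1, Or.inl h1⟩⟩
      · rcases Classical.em (back (P t1) (g t1 2)) with h2|h2
        · exact ⟨t1, Or.inr ⟨hFall t1 ht1, Or.inr h2⟩⟩
        · exact absurd ⟨h1, h2⟩ h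
  obtain ⟨T, hT⟩ := main
  refine ⟨T, ?_⟩
  have hall : ∀ t, T ≤ t →
      (back (P t) (g t 0) ∧ (front (P t) (g t 1) ∨ front (P t) (g t 2))) ∨
      (front (P t) (g t 1) ∧ (back (P t) (g t 0) ∨ back (P t) (g t 2))) := by
    intro t ht
    induction t, ht using Nat.le_induction with
    | base => exact hT
    | succ t ht ih =>
      rcases ih with h|h
      · exact Or.inl (persW t h)
      · exact Or.inr (persW2 t h)
  intro t ht v hv
  exact cover t (hall t ht) v hv

lemma win3 : BodyguardsWin (cycleGraph (m+3)) 3 := by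
  refine ⟨fun _ => 0, bmove3, bmove3_leg, ?_⟩
  intro pinit pmove hpm
  have hg : ∀ t, (gamePlay (fun _ => (0:Fin (m+3))) bmove3 pinit pmove (t+1)).1
      = bmove3 (gamePlay (fun _ => (0:Fin (m+3))) bmove3 pinit pmove t).1
          (gamePlay (fun _ => (0:Fin (m+3))) bmove3 pinit pmove t).2 := fun t => gp1 _ _ _ _ t
  have hstep : ∀ t, (gamePlay (fun _ => (0:Fin (m+3))) bmove3 pinit pmove (t+1)).2
      = (gamePlay (fun _ => (0:Fin (m+3))) bmove3 pinit pmove t).2 ∨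
      (gamePlay (fun _ => (0:Fin (m+3))) bmove3 pinit pmove (t+1)).2
      = (gamePlay (fun _ => (0:Fin (m+3))) bmove3 pinit pmove t).2 + 1 ∨
      (gamePlay (fun _ => (0:Fin (m+3))) bmove3 pinit pmove (t+1)).2
      = (gamePlay (fun _ => (0:Fin (m+3))) bmove3 pinit pmove t).2 - 1 := by
    intro t
    rw [gp2]
    exact step_iff.mp (hpm _ _)
  obtain ⟨T, hT⟩ := three_core (fun t => (gamePlay (fun _ => (0:Fin (m+3))) bmove3 pinit pmove t).1)
    (fun t => (gamePlay (fun _ => (0:Fin (m+3))) bmove3 pinit pmove t).2) hg hstep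
  exact ⟨T, hT⟩

end Three
end BGaux

namespace BGaux
section Lower
variable {k : ℕ}

lemma val3' : (3 : Fin (k+3+3)).val = 3 := rfl

lemma Bp_iff (p x : Fin (k+3+3)) :
    back p x ↔ ((x - p).val = 0 ∨ k + 4 ≤ (x - p).val) := by
  have hd := (x - p).isLt
  unfold back
  have e : p - x = 0 - (x - p) := by ring
  rw [e, Fin.sub_def]
  show ((k+3+3) - (x - p).val + (0 : Fin (k+3+3)).val) % (k+3+3) ≤ 2 ↔ _
  rw [val0]
  rcases mod2cases (n := k+3+3) (a := (k+3+3) - (x - p).val + 0) (by omega) with ⟨h1,_⟩|⟨h1,h2⟩ <;>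
    rw [h1] <;> omega

lemma Bp1_iff (p x : Fin (k+3+3)) :
    back (p+1) x ↔ ((x - p).val ≤ 1 ∨ (x - p).val = k + 5) := by
  have hd := (x - p).isLt
  unfold back
  have e : (p + 1) - x = 1 - (x - p) := by ring
  rw [e, Fin.sub_def]
  show ((k+3+3) - (x - p).val + (1 : Fin (k+3+3)).val) % (k+3+3) ≤ 2 ↔ _
  rw [val1]
  rcases mod2cases (n := k+3+3) (a := (k+3+3) - (x - p).val + 1) (by omega) with ⟨h1,h2⟩|⟨h1,h2⟩ <;>
    rw [h1] <;> omega

lemma Fp1_iff (p x : Fin (k+3+3)) :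
    front (p+1) x ↔ (1 ≤ (x - p).val ∧ (x - p).val ≤ 3) := by
  have hd := (x - p).isLt
  unfold front
  have e : x - (p + 1) = (x - p) - 1 := by ring
  rw [e, Fin.sub_def]
  show ((k+3+3) - (1 : Fin (k+3+3)).val + (x - p).val) % (k+3+3) ≤ 2 ↔ _
  rw [val1]
  rcases mod2cases (n := k+3+3) (a := (k+3+3) - 1 + (x - p).val) (by omega) with ⟨h1,h2⟩|⟨h1,h2⟩ <;>
    rw [h1] <;> omega

lemma Bm1_iff (p x : Fin (k+3+3)) :
    back (p-1) x ↔ (k + 3 ≤ (x - p).val) := by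
  have hd := (x - p).isLt
  unfold back
  have e : (p - 1) - x = (0 - 1) - (x - p) := by ring
  rw [e, Fin.sub_def]
  show ((k+3+3) - (x - p).val + ((0:Fin (k+3+3)) - 1).val) % (k+3+3) ≤ 2 ↔ _
  rw [negone_val]
  rcases mod2cases (n := k+3+3) (a := (k+3+3) - (x - p).val + (k+3+2)) (by omega) with ⟨h1,h2⟩|⟨h1,h2⟩ <;>
    rw [h1] <;> omega

lemma Fm1_iff (p x : Fin (k+3+3)) :
    front (p-1) x ↔ ((x - p).val ≤ 1 ∨ (x - p).val = k + 5) := by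
  have hd := (x - p).isLt
  unfold front
  have e : x - (p - 1) = (x - p) + 1 := by ring
  rw [e, Fin.add_def]
  show ((x - p).val + (1 : Fin (k+3+3)).val) % (k+3+3) ≤ 2 ↔ _
  rw [val1]
  rcases mod2cases (n := k+3+3) (a := (x - p).val + 1) (by omega) with ⟨h1,h2⟩|⟨h1,h2⟩ <;>
    rw [h1] <;> omega

/-- the configurations from which the two guards can cover both neighbours -/
def Unsafe (g : Fin 2 → Fin (k+3+3)) (p : Fin (k+3+3)) : Prop :=
  (back p (g 0) ∧ front p (g 1)) ∨ (back p (g 1) ∧ front p (g 0))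

lemma diff_val_one {p x : Fin (k+3+3)} (h : (x - p).val = 1) : x = p + 1 := by
  have e : x - p = 1 := Fin.ext (by rw [h, val1])
  have e2 : p + (x - p) = x := by ring
  rw [e] at e2
  exact e2.symm

lemma diff_val_negone {p x : Fin (k+3+3)} (h : (x - p).val = k + 5) : x = p - 1 := by
  have e : x - p = 0 - 1 := Fin.ext (by rw [h, negone_val])
  have e2 : p + (x - p) = x := by ring
  rw [e] at e2
  rw [← e2]; ring

lemma sustain (g g' : Fin 2 → Fin (k+3+3)) (p : Fin (k+3+3))
    (hS : ¬ Unsafe g p) (hst : ∀ i, stepRel (cycleGraph (k+3+3)) (g i) (g' i)) :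
    ∃ q, stepRel (cycleGraph (k+3+3)) p q ∧ ¬ Unsafe g' q := by
  by_contra hc
  push_neg at hc
  have hU0 := hc p (step_refl p)
  have hU1 := hc (p+1) (step_succ p)
  have hU2 := hc (p-1) (step_pred p)
  have hd0 := ((g' 0) - p).isLt
  have hd1 := ((g' 1) - p).isLt
  unfold Unsafe at hU0 hU1 hU2
  rw [Bp_iff, Bp_iff] at hU0
  rw [Bp1_iff, Bp1_iff, Fp1_iff, Fp1_iff] at hU1
  rw [Bm1_iff, Bm1_iff, Fm1_iff, Fm1_iff] at hU2
  unfold front at hU0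
  have hkey : (((g' 0) - p).val = k + 5 ∧ ((g' 1) - p).val = 1) ∨
      (((g' 1) - p).val = k + 5 ∧ ((g' 0) - p).val = 1) := by omega
  apply hS
  unfold Unsafe
  rcases hkey with ⟨h0, h1⟩|⟨h1, h0⟩
  · left
    constructor
    · apply back_iff_step.mpr
      rw [← diff_val_negone h0]
      exact hst 0
    · apply front_iff_step.mpr
      rw [← diff_val_one h1]
      exact hst 1
  · right
    constructor
    · apply back_iff_step.mpr
      rw [← diff_val_negone h1]
      exact hst 1
    · apply front_iff_step.mpr
      rw [← diff_val_one h0]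
      exact hst 0

lemma safe_start (g : Fin 2 → Fin (k+3+3)) : ¬ Unsafe g (g 0 + 3) := by
  rintro (⟨hb, _⟩|⟨_, hf⟩)
  · unfold back at hb
    rw [show (g 0 + 3) - g 0 = 3 by ring, val3'] at hb
    omega
  · unfold front at hf
    rw [show g 0 - (g 0 + 3) = 0 - 3 by ring, Fin.sub_def] at hf
    have : ((k+3+3) - (3 : Fin (k+3+3)).val + (0 : Fin (k+3+3)).val) % (k+3+3) ≤ 2 := hf
    rw [val0, val3', Nat.mod_eq_of_lt (by omega)] at this
    omega

lemma not_win2 : ¬ BodyguardsWin (cycleGraph (k+3+3)) 2 := by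
  classical
  rintro ⟨binit, bmove, hleg, hwin⟩
  let pm : (Fin 2 → Fin (k+3+3)) → Fin (k+3+3) → Fin (k+3+3) := fun g p =>
    if h : ∃ q, stepRel (cycleGraph (k+3+3)) p q ∧ ¬ Unsafe g q then h.choose else p
  have hpm : ∀ g p, stepRel (cycleGraph (k+3+3)) p (pm g p) := by
    intro g p
    by_cases h : ∃ q, stepRel (cycleGraph (k+3+3)) p q ∧ ¬ Unsafe g q
    · simp only [pm, dif_pos h]; exact h.choose_spec.1
    · simp only [pm, dif_neg h]; exact Or.inl rfl
  have hpm2 : ∀ g p (h : ∃ q, stepRel (cycleGraph (k+3+3)) p q ∧ ¬ Unsafe g q),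
      pm g p = h.choose := by
    intro g p h
    simp only [pm, dif_pos h]
  obtain ⟨N, hN⟩ := hwin (fun g => g 0 + 3) pm hpm
  set s := gamePlay binit bmove (fun g => g 0 + 3) pm with hs
  have key : ∀ t, ¬ Unsafe (s t).1 (s t).2 := by
    intro t
    induction t with
    | zero => exact safe_start binit
    | succ t ih =>
      have hsus := sustain (s t).1 (bmove (s t).1 (s t).2) (s t).2 ih (fun i => hleg _ _ i)
      have e1 : (s (t+1)).1 = bmove (s t).1 (s t).2 := gp1 _ _ _ _ t
      have e2 : (s (t+1)).2 = pm (bmove (s t).1 (s t).2) (s t).2 := gp2 _ _ _ _ t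
      rw [e1, e2, hpm2 _ _ hsus]
      exact hsus.choose_spec.2
  have hcov1 := hN N le_rfl ((s N).2 - 1) (adj_pred _)
  have hcov2 := hN N le_rfl ((s N).2 + 1) (adj_succ _)
  obtain ⟨i, hi⟩ := hcov1
  obtain ⟨j, hj⟩ := hcov2
  have e1 : (s (N+1)).1 = bmove (s N).1 (s N).2 := gp1 _ _ _ _ N
  have hb : back (s N).2 ((s N).1 i) := by
    apply back_iff_step.mpr
    rw [← hi, e1]
    exact hleg _ _ i
  have hf : front (s N).2 ((s N).1 j) := by
    apply front_iff_step.mpr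
    rw [← hj, e1]
    exact hleg _ _ j
  have hij : i ≠ j := by
    intro h
    rw [h, hj] at hi
    have h2 : (1 : Fin (k+3+3)) = 0 - 1 := by
      calc (1 : Fin (k+3+3)) = (s N).2 + 1 - (s N).2 := by ring
        _ = (s N).2 - 1 - (s N).2 := by rw [hi]
        _ = 0 - 1 := by ring
    exact one_ne_negone h2
  have hvij : (i = 0 ∧ j = 1) ∨ (i = 1 ∧ j = 0) := by
    have h1 := i.isLt
    have h2 := j.isLt
    have h3 : i.val ≠ j.val := fun hh => hij (Fin.ext hh)
    rcases Nat.lt_or_ge i.val 1 with h4|h4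
    · left
      exact ⟨Fin.ext (by omega), Fin.ext (by omega)⟩
    · right
      exact ⟨Fin.ext (by omega), Fin.ext (by omega)⟩
  apply key N
  unfold Unsafe
  rcases hvij with ⟨rfl, rfl⟩|⟨rfl, rfl⟩
  · exact Or.inl ⟨hb, hf⟩
  · exact Or.inr ⟨hb, hf⟩
end Lower
end BGaux


/-- For the cycle `C_n` on `n ≥ 3` vertices, `B(C_n) = 2` if `n ≤ 5` and `B(C_n) = 3`
if `n > 5`. -/
theorem bodyguardNumber_cycleGraph (n : ℕ) (hn : 3 ≤ n) :
    bodyguardNumber (SimpleGraph.cycleGraph n) = if n ≤ 5 then 2 else 3 := by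
  obtain ⟨m, rfl⟩ : ∃ m, n = m + 3 := ⟨n - 3, by omega⟩
  have hset : bodyguardNumber (SimpleGraph.cycleGraph (m+3))
      = sInf {k | BodyguardsWin (SimpleGraph.cycleGraph (m+3)) k} := rfl
  rw [hset]
  by_cases h5 : m + 3 ≤ 5
  · rw [if_pos h5]
    have hm2 : m ≤ 2 := by omega
    have hwin : BodyguardsWin (SimpleGraph.cycleGraph (m+3)) 2 := by
      interval_cases m
      · exact BGaux.win2_3
      · exact BGaux.win2_4
      · exact BGaux.win2_5
    have hmem : 2 ∈ {k | BodyguardsWin (SimpleGraph.cycleGraph (m+3)) k} := hwin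
    apply le_antisymm
    · exact Nat.sInf_le hmem
    · apply le_csInf ⟨2, hmem⟩
      intro b hb
      by_contra hlt
      push_neg at hlt
      exact BGaux.not_win_le_one (by omega) hb
  · rw [if_neg h5]
    obtain ⟨j, rfl⟩ : ∃ j, m = j + 3 := ⟨m - 3, by omega⟩
    have hmem : 3 ∈ {k | BodyguardsWin (SimpleGraph.cycleGraph (j+3+3)) k} := BGaux.win3
    apply le_antisymm
    · exact Nat.sInf_le hmem
    · apply le_csInf ⟨3, hmem⟩
      intro b hb
      by_contra hlt
      push_neg at hlt
      interval_cases b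
      · exact BGaux.not_win_le_one (by omega) hb
      · exact BGaux.not_win_le_one (by omega) hb
      · exact BGaux.not_win2 hb
end

section
/- For positive integers n_1 ≤ n_2 ≤ ⋯ ≤ n_k, the bodyguard number of the complete multipartite graph K_{n_1,...,n_k} equals n_2 + n_3 + ⋯ + n_k. -/
open SimpleGraph

noncomputable section BGAux
open scoped Classical

variable {k : ℕ} (n : Fin k → ℕ)

/-- vertices outside part 0 -/
def BSub (hk : 0 < k) := {v : (i : Fin k) × Fin (n i) // v.1 ≠ ⟨0, hk⟩}

noncomputable instance (hk : 0 < k) : Fintype (BSub n hk) := by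
  unfold BSub; infer_instance

def fiberEquiv (z : Fin k) : {v : (i : Fin k) × Fin (n i) // v.1 = z} ≃ Fin (n z) where
  toFun v := v.2 ▸ v.1.2
  invFun x := ⟨⟨z, x⟩, rfl⟩
  left_inv := by rintro ⟨⟨i, x⟩, rfl⟩; rfl
  right_inv := by intro x; rfl

theorem card_BSub (hk : 0 < k) :
    Fintype.card (BSub n hk) = (∑ i, n i) - n ⟨0, hk⟩ := by
  have h1 : Fintype.card {v : (i : Fin k) × Fin (n i) // v.1 = ⟨0, hk⟩} = n ⟨0, hk⟩ := by
    rw [Fintype.card_congr (fiberEquiv n ⟨0, hk⟩), Fintype.card_fin]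
  have h2 := Fintype.card_subtype_compl (p := fun v : (i : Fin k) × Fin (n i) => v.1 = ⟨0, hk⟩)
  have h3 : Fintype.card (BSub n hk) =
      Fintype.card {v : (i : Fin k) × Fin (n i) // ¬ v.1 = ⟨0, hk⟩} := by
    apply Fintype.card_congr; unfold BSub; rfl
  rw [h3, h2, h1, Fintype.card_sigma]
  simp

variable {hk : 0 < k} {hpos : ∀ i, 0 < n i}
variable (hk hpos)

/-- parking spot in part 0 for bodyguard `j` -/
def park (j : BSub n hk) : (i : Fin k) × Fin (n i) :=
  ⟨⟨0, hk⟩, if h : (j.1.2 : ℕ) < n ⟨0, hk⟩ then ⟨j.1.2, h⟩ else ⟨0, hpos _⟩⟩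

/-- target position of bodyguard `j` when president is at `p` -/
def dF (p : (i : Fin k) × Fin (n i)) (j : BSub n hk) : (i : Fin k) × Fin (n i) :=
  if p.1 = j.1.1 then park n hk hpos j else j.1

lemma dF_cases (p : (i : Fin k) × Fin (n i)) (j : BSub n hk) :
    dF n hk hpos p j = j.1 ∨ dF n hk hpos p j = park n hk hpos j := by
  unfold dF; split <;> simp

lemma key (j : BSub n hk) (x t : (i : Fin k) × Fin (n i))
    (hx : x = j.1 ∨ x = park n hk hpos j) (ht : t = j.1 ∨ t = park n hk hpos j) :
    x = t ∨ x.1 ≠ t.1 := by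
  rcases hx with rfl | rfl <;> rcases ht with rfl | rfl
  · exact Or.inl rfl
  · exact Or.inr j.2
  · exact Or.inr fun h => j.2 h.symm
  · exact Or.inl rfl

lemma cover (hmono : Monotone n) (p v : (i : Fin k) × Fin (n i)) (hv : v.1 ≠ p.1) :
    ∃ j : BSub n hk, dF n hk hpos p j = v := by
  by_cases h0 : v.1 = ⟨0, hk⟩
  · obtain ⟨i, b⟩ := v
    simp only at h0
    subst h0
    have hle : n ⟨0, hk⟩ ≤ n p.1 := hmono (by simp [Fin.le_def])
    have hb : (b : ℕ) < n p.1 := lt_of_lt_of_le b.isLt hle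
    refine ⟨⟨⟨p.1, ⟨b, hb⟩⟩, fun h => hv h.symm⟩, ?_⟩
    unfold dF
    rw [if_pos rfl]
    unfold park
    simp only
    rw [dif_pos (show ((⟨(b : ℕ), hb⟩ : Fin (n p.1)) : ℕ) < n ⟨0, hk⟩ from b.isLt)]
  · exact ⟨⟨v, h0⟩, by unfold dF; rw [if_neg fun h => hv h.symm]⟩

theorem upper (hk : 0 < k) (hpos : ∀ i, 0 < n i) (hmono : Monotone n) :
    BodyguardsWin (completeMultipartiteGraph fun i => Fin (n i)) ((∑ i, n i) - n ⟨0, hk⟩) := by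
  set G := completeMultipartiteGraph fun i => Fin (n i) with hG
  have hadj : ∀ x t : (i : Fin k) × Fin (n i), x.1 ≠ t.1 → G.Adj x t := by
    intro x t h; simp only [hG, comap_adj, top_adj]; exact h
  obtain e : Fin ((∑ i, n i) - n ⟨0, hk⟩) ≃ BSub n hk :=
    (Fintype.equivFinOfCardEq (card_BSub n hk)).symm
  refine ⟨fun i => (e i).1,
    fun bs p i =>
      if (bs i).1 = (dF n hk hpos p (e i)).1 ∧ bs i ≠ dF n hk hpos p (e i)
      then bs i else dF n hk hpos p (e i), ?_, ?_⟩
  · intro bs p i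
    dsimp only
    split
    · exact Or.inl rfl
    · rename_i h
      rw [not_and_or, not_ne_iff] at h
      rcases h with h | h
      · exact Or.inr (hadj _ _ h)
      · exact Or.inl h
  · intro pinit pmove _
    set bmove : (Fin ((∑ i, n i) - n ⟨0, hk⟩) → (i : Fin k) × Fin (n i)) →
        ((i : Fin k) × Fin (n i)) → Fin ((∑ i, n i) - n ⟨0, hk⟩) → (i : Fin k) × Fin (n i) :=
      fun bs p i =>
        if (bs i).1 = (dF n hk hpos p (e i)).1 ∧ bs i ≠ dF n hk hpos p (e i)
        then bs i else dF n hk hpos p (e i) with hbm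
    set binit : Fin ((∑ i, n i) - n ⟨0, hk⟩) → (i : Fin k) × Fin (n i) :=
      fun i => (e i).1 with hbi
    have bmove_eq : ∀ bs p, (∀ i, bs i = (e i).1 ∨ bs i = park n hk hpos (e i)) →
        ∀ i, bmove bs p i = dF n hk hpos p (e i) := by
      intro bs p hinv i
      have := key n hk hpos (e i) (bs i) (dF n hk hpos p (e i)) (hinv i)
        (dF_cases n hk hpos p (e i))
      rw [hbm]
      simp only
      split
      · rename_i h
        rcases this with h1 | h1
        · exact h1
        · exact absurd h.1 h1
      · rfl
    have inv : ∀ m, ∀ i, (gamePlay binit bmove pinit pmove m).1 i = (e i).1 ∨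
        (gamePlay binit bmove pinit pmove m).1 i = park n hk hpos (e i) := by
      intro m
      induction m with
      | zero => exact fun i => Or.inl rfl
      | succ m ih =>
        intro i
        have hh : (gamePlay binit bmove pinit pmove (m + 1)).1 i =
            dF n hk hpos (gamePlay binit bmove pinit pmove m).2 (e i) := bmove_eq _ _ ih i
        rw [hh]
        exact dF_cases n hk hpos _ (e i)
    refine ⟨0, fun m _ v hv => ?_⟩
    rw [hG] at hv
    simp only [comap_adj, top_adj] at hv
    have hv' : v.1 ≠ (gamePlay binit bmove pinit pmove m).2.1 := fun h => hv h.symm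
    obtain ⟨j, hj⟩ := cover n hk hpos hmono (gamePlay binit bmove pinit pmove m).2 v hv'
    refine ⟨e.symm j, ?_⟩
    show bmove (gamePlay binit bmove pinit pmove m).1
      (gamePlay binit bmove pinit pmove m).2 (e.symm j) = v
    rw [bmove_eq _ _ (inv m), Equiv.apply_symm_apply, hj]

theorem lower (hk : 0 < k) (hpos : ∀ i, 0 < n i) (m : ℕ)
    (hwin : BodyguardsWin (completeMultipartiteGraph fun i => Fin (n i)) m) :
    (∑ i, n i) - n ⟨0, hk⟩ ≤ m := by
  obtain ⟨binit, bmove, _, h⟩ := hwin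
  obtain ⟨N, hN⟩ := h (fun _ => ⟨⟨0, hk⟩, ⟨0, hpos _⟩⟩) (fun _ p => p) (fun _ _ => Or.inl rfl)
  have hp : ∀ m, (gamePlay binit bmove (fun _ => ⟨⟨0, hk⟩, ⟨0, hpos _⟩⟩) (fun _ p => p) m).2 =
      ⟨⟨0, hk⟩, ⟨0, hpos _⟩⟩ := by
    intro m; induction m with
    | zero => rfl
    | succ m ih => show (fun _ p => p) _ _ = _ ; exact ih
  have hc := hN N le_rfl
  have hkey : ∀ v : BSub n hk, ∃ i,
      (gamePlay binit bmove (fun _ => ⟨⟨0, hk⟩, ⟨0, hpos _⟩⟩) (fun _ p => p) (N + 1)).1 i = v.1 := by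
    intro v
    apply hc
    rw [hp]
    simp only [comap_adj, top_adj]
    exact fun h => v.2 h.symm
  calc (∑ i, n i) - n ⟨0, hk⟩ = Fintype.card (BSub n hk) := (card_BSub n hk).symm
    _ ≤ Fintype.card (Fin m) := by
        apply Fintype.card_le_of_injective (fun v => (hkey v).choose)
        intro a b hab
        have hab' : (hkey a).choose = (hkey b).choose := hab
        have ha := (hkey a).choose_spec
        have hb := (hkey b).choose_spec
        rw [hab', hb] at ha
        exact Subtype.ext ha.symm
    _ = m := Fintype.card_fin m

end BGAux

/-- For positive integers `n 0 ≤ n 1 ≤ ⋯ ≤ n (k-1)`, the bodyguard number of the complete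
multipartite graph with part sizes `n i` equals the sum of all part sizes except the
smallest one. -/
theorem bodyguardNumber_completeMultipartiteGraph (k : ℕ) (hk : 0 < k) (n : Fin k → ℕ)
    (hpos : ∀ i, 0 < n i) (hmono : Monotone n) :
    bodyguardNumber (completeMultipartiteGraph fun i => Fin (n i)) =
      (∑ i, n i) - n ⟨0, hk⟩ := by
  apply le_antisymm
  · exact Nat.sInf_le (upper n hk hpos hmono)
  · exact le_csInf ⟨_, upper n hk hpos hmono⟩ fun m hm => lower n hk hpos m hm
end

section
/- If T is a tree on at least three vertices with ℓ leaves, then B(T) = ℓ. -/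
open SimpleGraph

set_option linter.unusedSectionVars false
set_option linter.unusedVariables false
set_option maxHeartbeats 4000000

namespace BGaux

open Finset

variable {V : Type*} [Fintype V] [DecidableEq V] {G : SimpleGraph V}

lemma path_length_eq_dist (hc : G.Connected) (ha : G.IsAcyclic) {u v : V}
    {w : G.Walk u v} (hw : w.IsPath) : w.length = G.dist u v := by
  obtain ⟨p, hp, hl⟩ := hc.exists_path_of_dist u v
  have h := ha.path_unique ⟨w, hw⟩ ⟨p, hp⟩
  have h2 : w = p := congrArg Subtype.val h
  rw [h2, hl]

lemma dist_lt_card (hc : G.Connected) (ha : G.IsAcyclic) (u v : V) :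
    G.dist u v < Fintype.card V := by
  obtain ⟨p, hp, hl⟩ := hc.exists_path_of_dist u v
  rw [← hl]; exact hp.length_lt

lemma stepRel_dist_le (hc : G.Connected) {x y : V} (h : x = y ∨ G.Adj x y) (z : V) :
    G.dist x z ≤ G.dist y z + 1 := by
  rcases h with rfl | h
  · omega
  · calc G.dist x z ≤ G.dist x y + G.dist y z := hc.dist_triangle
    _ ≤ 1 + G.dist y z := by
        have : G.dist x y = 1 := (SimpleGraph.dist_eq_one_iff_adj).mpr h
        omega
    _ = G.dist y z + 1 := by omega

lemma exists_firstStep (hc : G.Connected) {u v : V} (h : u ≠ v) :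
    ∃ w, G.Adj u w ∧ G.dist w v + 1 = G.dist u v := by
  have hd : G.dist u v ≠ 0 := by
    rw [SimpleGraph.dist_ne_zero_iff_ne_and_reachable]
    exact ⟨h, hc u v⟩
  obtain ⟨p, hp⟩ := SimpleGraph.exists_walk_of_dist_ne_zero hd
  cases p with
  | nil => exact absurd rfl h
  | cons hadj q =>
    rename_i w
    refine ⟨w, hadj, ?_⟩
    have h1 : G.dist w v ≤ q.length := SimpleGraph.dist_le q
    have h2 : G.dist u v ≤ G.dist u w + G.dist w v := hc.dist_triangle
    have h3 : G.dist u w ≤ 1 := by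
      have : G.dist u w = 1 := (SimpleGraph.dist_eq_one_iff_adj).mpr hadj
      omega
    simp only [SimpleGraph.Walk.length_cons] at hp
    omega

lemma firstStep_unique (hc : G.Connected) (ha : G.IsAcyclic) {u v w w' : V}
    (h1 : G.Adj u w) (h2 : G.Adj u w')
    (hd1 : G.dist w v + 1 = G.dist u v) (hd2 : G.dist w' v + 1 = G.dist u v) : w = w' := by
  obtain ⟨q1, hq1, hl1⟩ := hc.exists_path_of_dist w v
  obtain ⟨q2, hq2, hl2⟩ := hc.exists_path_of_dist w' v
  have hns1 : u ∉ q1.support := by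
    intro hmem
    have := SimpleGraph.dist_le (q1.dropUntil u hmem)
    have := SimpleGraph.Walk.length_dropUntil_le q1 hmem
    omega
  have hns2 : u ∉ q2.support := by
    intro hmem
    have := SimpleGraph.dist_le (q2.dropUntil u hmem)
    have := SimpleGraph.Walk.length_dropUntil_le q2 hmem
    omega
  have hp1 : (SimpleGraph.Walk.cons h1 q1).IsPath := hq1.cons hns1
  have hp2 : (SimpleGraph.Walk.cons h2 q2).IsPath := hq2.cons hns2
  have heq := ha.path_unique ⟨_, hp1⟩ ⟨_, hp2⟩
  have heq2 : (SimpleGraph.Walk.cons h1 q1) = (SimpleGraph.Walk.cons h2 q2) :=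
    congrArg Subtype.val heq
  have hsup := congrArg SimpleGraph.Walk.support heq2
  rw [SimpleGraph.Walk.support_cons, SimpleGraph.Walk.support_cons,
    q1.support_eq_cons, q2.support_eq_cons] at hsup
  have := List.cons.inj hsup
  exact (List.cons.inj this.2).1

open scoped Classical in
noncomputable def fs (G : SimpleGraph V) (u v : V) : V :=
  if h : ∃ w, G.Adj u w ∧ G.dist w v + 1 = G.dist u v then h.choose else u

lemma fs_spec (hc : G.Connected) {u v : V} (h : u ≠ v) :
    G.Adj u (fs G u v) ∧ G.dist (fs G u v) v + 1 = G.dist u v := by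
  have he := exists_firstStep hc h
  rw [fs, dif_pos he]
  exact he.choose_spec

lemma fs_adj (hc : G.Connected) {u v : V} (h : u ≠ v) : G.Adj u (fs G u v) :=
  (fs_spec hc h).1

lemma fs_dist (hc : G.Connected) {u v : V} (h : u ≠ v) :
    G.dist (fs G u v) v + 1 = G.dist u v := (fs_spec hc h).2

lemma ne_of_dist_pos (hc : G.Connected) {u v : V} (h : G.dist u v ≠ 0) : u ≠ v := by
  rintro rfl; simp [SimpleGraph.dist_self] at h

lemma dist_pos_of_ne (hc : G.Connected) {u v : V} (h : u ≠ v) : 0 < G.dist u v :=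
  hc.pos_dist_of_ne h

lemma fs_eq (hc : G.Connected) (ha : G.IsAcyclic) {u v w : V}
    (h1 : G.Adj u w) (hd : G.dist w v + 1 = G.dist u v) : fs G u v = w := by
  have hne : u ≠ v := ne_of_dist_pos hc (by omega)
  exact firstStep_unique hc ha (fs_adj hc hne) h1 (fs_dist hc hne) hd

lemma adj_dist_ne (hc : G.Connected) (ha : G.IsAcyclic) {p p' : V} (h : G.Adj p p') (v : V) :
    G.dist p v ≠ G.dist p' v := by
  obtain ⟨w, hw, hl⟩ := hc.exists_path_of_dist p v
  by_cases hmem : p' ∈ w.support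
  · have hsplit := SimpleGraph.Walk.take_spec w hmem
    have hlen : (w.takeUntil p' hmem).length + (w.dropUntil p' hmem).length = w.length := by
      rw [← SimpleGraph.Walk.length_append, hsplit]
    have h1 : G.dist p' v ≤ (w.dropUntil p' hmem).length := SimpleGraph.dist_le _
    have h2 : 1 ≤ (w.takeUntil p' hmem).length := by
      have := SimpleGraph.dist_le (w.takeUntil p' hmem)
      have hpp : G.dist p p' = 1 := (SimpleGraph.dist_eq_one_iff_adj).mpr h
      omega
    omega
  · have hpath : (SimpleGraph.Walk.cons h.symm w).IsPath := hw.cons hmem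
    have := path_length_eq_dist hc ha hpath
    rw [SimpleGraph.Walk.length_cons, hl] at this
    omega

lemma adj_dist_cases (hc : G.Connected) (ha : G.IsAcyclic) {u w : V} (h : G.Adj u w) (v : V) :
    G.dist w v + 1 = G.dist u v ∨ G.dist u v + 1 = G.dist w v := by
  have h1 : G.dist u v ≤ G.dist w v + 1 := stepRel_dist_le hc (Or.inr h) v
  have h2 : G.dist w v ≤ G.dist u v + 1 := stepRel_dist_le hc (Or.inr h.symm) v
  have h3 := adj_dist_ne hc ha h v
  omega

/-- If the first steps from `p` toward `x` and toward `y` differ, `p` is between `x` and `y`. -/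
lemma dist_add_of_fs_ne (hc : G.Connected) (ha : G.IsAcyclic) {p x y : V}
    (hx : x ≠ p) (hy : y ≠ p) (hne : fs G p x ≠ fs G p y) :
    G.dist x y = G.dist x p + G.dist p y := by
  suffices H : ∀ n (p : V), x ≠ p → y ≠ p → fs G p x ≠ fs G p y → G.dist p x = n →
      G.dist x y = G.dist x p + G.dist p y by
    exact H _ p hx hy hne rfl
  clear hx hy hne p
  intro n
  induction n with
  | zero =>
    intro p hx hy hne hd
    exact absurd (hc.dist_eq_zero_iff.mp hd) (Ne.symm hx)
  | succ n ih =>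
    intro p hx hy hne hd
    have hdx : 0 < G.dist p x := dist_pos_of_ne hc (Ne.symm hx)
    have hpx : p ≠ x := Ne.symm hx
    rcases Nat.eq_zero_or_pos n with rfl | hn
    · -- p adjacent to x : fs p x = x
      have hadj : G.Adj p x := by
        rw [← SimpleGraph.dist_eq_one_iff_adj]; omega
      have hfx : fs G p x = x := fs_eq hc ha hadj (by simp [SimpleGraph.dist_self]; omega)
      rcases adj_dist_cases hc ha hadj.symm y with hcase | hcase
      · -- d p y + 1 = d x y
        have : G.dist x p = 1 := by
          rw [SimpleGraph.dist_comm, SimpleGraph.dist_eq_one_iff_adj]; exact hadj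
        omega
      · -- d x y + 1 = d p y : x is closer nbr of p toward y
        exfalso
        have : fs G p y = x := fs_eq hc ha hadj (by omega)
        rw [hfx, this] at hne; exact hne rfl
    · set u := fs G p x with hu
      have hadj : G.Adj p u := fs_adj hc hpx
      have hdu : G.dist u x + 1 = G.dist p x := fs_dist hc hpx
      have hux : u ≠ x := by
        intro h; rw [h] at hdu; simp [SimpleGraph.dist_self] at hdu; omega
      -- d u y = d p y + 1
      have hduy : G.dist p y + 1 = G.dist u y := by
        rcases adj_dist_cases hc ha hadj y with hcase | hcase
        · exfalso
          have : fs G p y = u := fs_eq hc ha hadj hcase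
          rw [this] at hne; exact hne rfl
        · exact hcase
      have huy : y ≠ u := by
        intro h; rw [h] at hduy; simp [SimpleGraph.dist_self] at hduy
      have hfsu : fs G u y = p := fs_eq hc ha hadj.symm (by omega)
      have hfsx : fs G u x ≠ p := by
        intro h
        have h2 : G.Adj u p := hadj.symm
        have : G.dist (fs G u x) x + 1 = G.dist u x := fs_dist hc hux
        rw [h] at this
        omega
      have := ih u (Ne.symm hux) huy (by rw [hfsu]; exact hfsx) (by omega)
      have h1 : G.dist x u = G.dist u x := SimpleGraph.dist_comm ..
      have h2 : G.dist x p = G.dist p x := SimpleGraph.dist_comm ..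
      omega

/-- comparability of two points between a and b (tree betweenness). -/
lemma between_trans (hc : G.Connected) (ha : G.IsAcyclic) {a b x y : V}
    (hx : G.dist a x + G.dist x b = G.dist a b)
    (hy : G.dist a y + G.dist y b = G.dist a b) :
    G.dist a x + G.dist x y = G.dist a y ∨ G.dist a y + G.dist y x = G.dist a x := by
  suffices H : ∀ n (a : V), G.dist a x + G.dist x b = G.dist a b →
      G.dist a y + G.dist y b = G.dist a b → G.dist a x = n →
      G.dist a x + G.dist x y = G.dist a y ∨ G.dist a y + G.dist y x = G.dist a x by
    exact H _ a hx hy rfl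
  clear hx hy a
  intro n
  induction n with
  | zero =>
    intro a hx hy hd
    have : a = x := hc.dist_eq_zero_iff.mp hd
    subst this; left; omega
  | succ n ih =>
    intro a hx hy hd
    have hax : a ≠ x := by
      intro h; subst h; simp [SimpleGraph.dist_self] at hd
    by_cases hay : a = y
    · subst hay; right; rw [SimpleGraph.dist_comm]; omega
    have hab : a ≠ b := by
      intro h; subst h
      have h0 : G.dist a a = 0 := SimpleGraph.dist_self
      omega
    -- fs a x = fs a b and fs a y = fs a b
    have key : ∀ z : V, z ≠ a → G.dist a z + G.dist z b = G.dist a b → fs G a z = fs G a b := by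
      intro z hz hbz
      by_contra hne
      have := dist_add_of_fs_ne hc ha hz (Ne.symm hab) hne
      have h1 : G.dist z a = G.dist a z := SimpleGraph.dist_comm ..
      have h2 : G.dist z b = G.dist b z := SimpleGraph.dist_comm ..
      have h3 : G.dist a b = G.dist b a := SimpleGraph.dist_comm ..
      have hz0 : 0 < G.dist a z := dist_pos_of_ne hc (Ne.symm hz)
      rw [SimpleGraph.dist_comm] at this
      omega
    set u := fs G a b with hu
    have hfx : fs G a x = u := key x (Ne.symm hax) hx
    have hfy : fs G a y = u := key y (Ne.symm hay) hy
    have hdx : G.dist (fs G a x) x + 1 = G.dist a x := fs_dist hc hax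
    have hdy : G.dist (fs G a y) y + 1 = G.dist a y := fs_dist hc hay
    have hdb : G.dist u b + 1 = G.dist a b := fs_dist hc hab
    rw [hfx] at hdx; rw [hfy] at hdy
    have := ih u (by omega) (by omega) (by omega)
    omega

lemma fs_of_adj (hc : G.Connected) (ha : G.IsAcyclic) {u v : V} (h : G.Adj u v) :
    fs G u v = v := by
  apply fs_eq hc ha h
  have h1 : G.dist v v = 0 := SimpleGraph.dist_self
  have h2 : G.dist u v = 1 := (SimpleGraph.dist_eq_one_iff_adj).mpr h
  omega

noncomputable def nbr (G : SimpleGraph V) [DecidableRel G.Adj] (v : V) : V :=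
  if h : (G.neighborFinset v).Nonempty then h.choose else v

variable [DecidableRel G.Adj]

lemma nbr_adj {v : V} (h : 0 < G.degree v) : G.Adj v (nbr G v) := by
  rw [← SimpleGraph.card_neighborFinset_eq_degree] at h
  have hne : (G.neighborFinset v).Nonempty := Finset.card_pos.mp h
  rw [nbr, dif_pos hne]
  have := hne.choose_spec
  rwa [SimpleGraph.mem_neighborFinset] at this

lemma leaf_unique {v a : V} (hdeg : G.degree v = 1) (h : G.Adj v a) : a = nbr G v := by
  have hcard : (G.neighborFinset v).card = 1 := by
    rwa [SimpleGraph.card_neighborFinset_eq_degree]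
  obtain ⟨w, hw⟩ := Finset.card_eq_one.mp hcard
  have h1 : a ∈ G.neighborFinset v := (SimpleGraph.mem_neighborFinset _ _ _).mpr h
  have h2 : nbr G v ∈ G.neighborFinset v := by
    have : G.Adj v (nbr G v) := nbr_adj (by rw [← SimpleGraph.card_neighborFinset_eq_degree, hcard]; omega)
    exact (SimpleGraph.mem_neighborFinset _ _ _).mpr this
  rw [hw, Finset.mem_singleton] at h1 h2
  rw [h1, h2]

lemma degree_pos (hc : G.Connected) (hcard : 2 ≤ Fintype.card V) (v : V) : 0 < G.degree v := by
  obtain ⟨u, hu⟩ := Fintype.exists_ne_of_one_lt_card (by omega) v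
  obtain ⟨w, hw, _⟩ := exists_firstStep hc (Ne.symm hu)
  rw [← SimpleGraph.card_neighborFinset_eq_degree]
  exact Finset.card_pos.mpr ⟨w, (SimpleGraph.mem_neighborFinset _ _ _).mpr hw⟩

lemma exists_nonleaf (hc : G.Connected) (h3 : 3 ≤ Fintype.card V) :
    ∃ p : V, G.degree p ≠ 1 := by
  by_contra hall
  push_neg at hall
  obtain ⟨v⟩ := hc.nonempty
  set u := nbr G v with hu
  have hvu : G.Adj v u := nbr_adj (by rw [hall v]; omega)
  have hwalk : ∀ (x w : V) (p : G.Walk x w), (x = v ∨ x = u) → (w = v ∨ w = u) := by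
    intro x w p
    induction p with
    | nil => exact fun h => h
    | @cons a b c hadj q ih =>
      intro hx
      apply ih
      rcases hx with h | h
      · right
        have h1 : b = nbr G a := leaf_unique (hall a) hadj
        rw [h] at h1
        rw [hu, h1]
      · left
        have h1 : b = nbr G a := leaf_unique (hall a) hadj
        have h2 : v = nbr G a := by
          rw [h]; exact leaf_unique (hall u) hvu.symm
        rw [h1, ← h2]
  have hsub : (Finset.univ : Finset V) ⊆ {v, u} := by
    intro w _
    have := hwalk v w (hc v w).some (Or.inl rfl)
    rcases this with rfl | rfl <;> simp
  have := Finset.card_le_card hsub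
  have h2 : ({v, u} : Finset V).card ≤ 2 := Finset.card_insert_le _ _ |>.trans (by simp)
  simp only [Finset.card_univ] at this
  omega

/-- Surjectivity: every neighbour of `p` is the first step toward some leaf. -/
lemma exists_leaf_tgt (hc : G.Connected) (ha : G.IsAcyclic) (hcard : 2 ≤ Fintype.card V)
    {p v : V} (hadj : G.Adj p v) :
    ∃ ℓ, G.degree ℓ = 1 ∧ (if p = ℓ then nbr G ℓ else fs G p ℓ) = v := by
  by_cases hp : G.degree p = 1
  · exact ⟨p, hp, by rw [if_pos rfl]; exact (leaf_unique hp hadj).symm⟩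
  · obtain ⟨ℓ, hmem, hmax⟩ := Finset.exists_max_image
      (Finset.univ.filter (fun x => G.dist v x + 1 = G.dist p x)) (fun x => G.dist v x)
      ⟨v, by simp [SimpleGraph.dist_self, (SimpleGraph.dist_eq_one_iff_adj).mpr hadj]⟩
    simp only [Finset.mem_filter, Finset.mem_univ, true_and] at hmem
    have hlp : ℓ ≠ p := by
      intro h; rw [h] at hmem; simp [SimpleGraph.dist_self] at hmem
    have hfs : fs G p ℓ = v := fs_eq hc ha hadj hmem
    refine ⟨ℓ, ?_, by rw [if_neg (Ne.symm hlp)]; exact hfs⟩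
    -- show ℓ is a leaf
    by_contra hdeg
    have hpos : 0 < G.degree ℓ := degree_pos hc hcard ℓ
    have h2 : 2 ≤ (G.neighborFinset ℓ).card := by
      rw [SimpleGraph.card_neighborFinset_eq_degree]; omega
    have hw0 : G.Adj ℓ (fs G ℓ p) := fs_adj hc hlp
    obtain ⟨y, hy, hyne⟩ := Finset.exists_mem_ne (s := G.neighborFinset ℓ) (by omega) (fs G ℓ p)
    rw [SimpleGraph.mem_neighborFinset] at hy
    -- y is a neighbour of ℓ distinct from the first step toward p
    have hdy : G.dist ℓ p + 1 = G.dist y p := by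
      rcases adj_dist_cases hc ha hy p with hcase | hcase
      · exact absurd (fs_eq hc ha hy hcase) (Ne.symm hyne)
      · exact hcase
    have hdvy : G.dist v y = G.dist v ℓ + 1 := by
      have htri : G.dist y p ≤ G.dist y v + G.dist v p := hc.dist_triangle
      have hvp : G.dist v p = 1 := by
        rw [SimpleGraph.dist_comm]; exact (SimpleGraph.dist_eq_one_iff_adj).mpr hadj
      have hyv : G.dist y v = G.dist v y := SimpleGraph.dist_comm ..
      have hlv : G.dist ℓ v = G.dist v ℓ := SimpleGraph.dist_comm ..
      have hpl : G.dist ℓ p = G.dist p ℓ := SimpleGraph.dist_comm ..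
      rcases adj_dist_cases hc ha hy v with hcase | hcase
      · -- d y v + 1 = d ℓ v : impossible
        omega
      · omega
    have hymem : G.dist v y + 1 = G.dist p y := by
      have h1 : G.dist p y ≤ G.dist p ℓ + 1 := by
        have htri : G.dist p y ≤ G.dist p ℓ + G.dist ℓ y := hc.dist_triangle
        have hly : G.dist ℓ y = 1 := (SimpleGraph.dist_eq_one_iff_adj).mpr hy
        omega
      have hpy : G.dist ℓ p = G.dist p ℓ := SimpleGraph.dist_comm ..
      have hyp : G.dist y p = G.dist p y := SimpleGraph.dist_comm ..
      omega
    have := hmax y (by simp [hymem])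
    omega

lemma guard_two_branches (hc : G.Connected) (ha : G.IsAcyclic) {g p ℓ ℓ' : V}
    (h1 : G.dist g ℓ < G.dist p ℓ) (h2 : G.dist g ℓ' < G.dist p ℓ')
    (hne : fs G p ℓ ≠ fs G p ℓ') : False := by
  have hl : ℓ ≠ p := by rintro rfl; simp [SimpleGraph.dist_self] at h1
  have hl' : ℓ' ≠ p := by rintro rfl; simp [SimpleGraph.dist_self] at h2
  have hadd := dist_add_of_fs_ne hc ha hl hl' hne
  have htri : G.dist ℓ ℓ' ≤ G.dist ℓ g + G.dist g ℓ' := hc.dist_triangle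
  have c1 : G.dist ℓ g = G.dist g ℓ := SimpleGraph.dist_comm ..
  have c2 : G.dist ℓ p = G.dist p ℓ := SimpleGraph.dist_comm ..
  omega

open scoped Classical in
noncomputable def Gam (G : SimpleGraph V) {k : ℕ} (b : Fin k → V) (p : V) (S : Finset V) :
    Finset (Fin k) :=
  Finset.univ.filter (fun i => ∃ ℓ ∈ S, G.dist (b i) ℓ < G.dist p ℓ)

open scoped Classical in
lemma mem_Gam {k : ℕ} {b : Fin k → V} {p : V} {S : Finset V} {i : Fin k} :
    i ∈ Gam G b p S ↔ ∃ ℓ ∈ S, G.dist (b i) ℓ < G.dist p ℓ := by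
  simp [Gam]

def Viol (G : SimpleGraph V) [DecidableRel G.Adj] {k : ℕ} (b : Fin k → V) (p u : V)
    (S : Finset V) : Prop :=
  G.Adj p u ∧ S ⊆ Finset.univ.filter (fun v => G.degree v = 1) ∧
    (∀ ℓ ∈ S, G.dist u ℓ + 1 = G.dist p ℓ) ∧ (Gam G b p S).card < S.card

variable [DecidableRel G.Adj]

/-- Claim 1: at a non-leaf vertex with fewer guards than leaves, a violation exists. -/
lemma viol_exists (hc : G.Connected) (ha : G.IsAcyclic) {k : ℕ} (b : Fin k → V) {p : V}
    (hp : G.degree p ≠ 1)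
    (hk : k < (Finset.univ.filter fun v => G.degree v = 1).card) :
    ∃ u S, Viol G b p u S := by
  classical
  by_contra hno
  push_neg at hno
  set Lv := (Finset.univ.filter fun v => G.degree v = 1) with hLv
  have hnp : ∀ ℓ ∈ Lv, ℓ ≠ p := by
    intro ℓ hℓ h
    rw [hLv, Finset.mem_filter] at hℓ
    exact hp (h ▸ hℓ.2)
  set F : V → V := fun ℓ => fs G p ℓ with hF
  set t := Lv.image F with ht
  have hmapsto : ∀ ℓ ∈ Lv, F ℓ ∈ t := fun ℓ hℓ => Finset.mem_image_of_mem F hℓ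
  have hcardsum : Lv.card = ∑ u ∈ t, (Lv.filter fun ℓ => F ℓ = u).card :=
    Finset.card_eq_sum_card_fiberwise hmapsto
  have hbig : ∀ u ∈ t, (Lv.filter fun ℓ => F ℓ = u).card ≤
      (Gam G b p (Lv.filter fun ℓ => F ℓ = u)).card := by
    intro u hu
    rw [ht, Finset.mem_image] at hu
    obtain ⟨ℓ₀, hℓ₀, hFℓ₀⟩ := hu
    by_contra hlt
    push_neg at hlt
    apply hno u (Lv.filter fun ℓ => F ℓ = u)
    refine ⟨?_, Finset.filter_subset _ _ |>.trans (by rw [hLv]), ?_, hlt⟩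
    · rw [← hFℓ₀]; exact fs_adj hc (Ne.symm (hnp ℓ₀ hℓ₀))
    · intro ℓ hℓ
      rw [Finset.mem_filter] at hℓ
      have hd := fs_dist hc (Ne.symm (hnp ℓ hℓ.1))
      have h2 : fs G p ℓ = u := hℓ.2
      rwa [h2] at hd
  have hdisj : ∀ u ∈ t, ∀ u' ∈ t, u ≠ u' →
      Disjoint (Gam G b p (Lv.filter fun ℓ => F ℓ = u))
        (Gam G b p (Lv.filter fun ℓ => F ℓ = u')) := by
    intro u hu u' hu' hne
    rw [Finset.disjoint_left]
    intro i hi hi'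
    rw [mem_Gam] at hi hi'
    obtain ⟨ℓ, hℓ, hd⟩ := hi
    obtain ⟨ℓ', hℓ', hd'⟩ := hi'
    rw [Finset.mem_filter] at hℓ hℓ'
    have e1 : fs G p ℓ = u := hℓ.2
    have e2 : fs G p ℓ' = u' := hℓ'.2
    exact guard_two_branches hc ha hd hd' (by rw [e1, e2]; exact hne)
  have hunion : ∑ u ∈ t, (Gam G b p (Lv.filter fun ℓ => F ℓ = u)).card =
      (t.biUnion fun u => Gam G b p (Lv.filter fun ℓ => F ℓ = u)).card :=
    (Finset.card_biUnion hdisj).symm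
  have hle : (t.biUnion fun u => Gam G b p (Lv.filter fun ℓ => F ℓ = u)).card ≤ k := by
    have := Finset.card_le_card (Finset.subset_univ
      (t.biUnion fun u => Gam G b p (Lv.filter fun ℓ => F ℓ = u)))
    simpa using this
  have := Finset.sum_le_sum hbig
  omega

/-- Claim 3: at a covered state, no violation has a leaf as branch vertex. -/
lemma viol_not_leaf (hc : G.Connected) (ha : G.IsAcyclic) {k : ℕ} {b : Fin k → V} {p u : V}
    {S : Finset V} (hV : Viol G b p u S)
    (hcov : ∀ v, G.Adj p v → ∃ i, b i = v) : G.degree u ≠ 1 := by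
  intro hu
  obtain ⟨hadj, hsub, hdist, hcard⟩ := hV
  have hSu : ∀ ℓ ∈ S, ℓ = u := by
    intro ℓ hℓ
    by_contra hne
    have h1 := fs_dist hc (Ne.symm (Ne.intro hne)) -- fs G u ℓ
    have h2 : fs G u ℓ = nbr G u := leaf_unique hu (fs_adj hc (Ne.symm (Ne.intro hne)))
    have h3 : p = nbr G u := leaf_unique hu hadj.symm
    rw [h2, ← h3] at h1
    have h4 := hdist ℓ hℓ
    have c : G.dist p ℓ = G.dist p ℓ := rfl
    omega
  have hcards : S.card ≤ 1 := by
    rcases S.eq_empty_or_nonempty with rfl | ⟨x, hx⟩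
    · simp
    · have : S ⊆ {u} := fun y hy => by rw [Finset.mem_singleton]; exact hSu y hy
      exact (Finset.card_le_card this).trans (by simp)
  have huS : u ∈ S := by
    rcases S.eq_empty_or_nonempty with rfl | ⟨x, hx⟩
    · simp at hcard
    · rwa [← hSu x hx]
  obtain ⟨i, hi⟩ := hcov u hadj
  have : i ∈ Gam G b p S := by
    rw [mem_Gam]
    refine ⟨u, huS, ?_⟩
    rw [hi]
    have h0 : G.dist u u = 0 := SimpleGraph.dist_self
    have h1 : G.dist p u = 1 := (SimpleGraph.dist_eq_one_iff_adj).mpr hadj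
    omega
  have : 1 ≤ (Gam G b p S).card := Finset.card_pos.mpr ⟨i, this⟩
  omega

/-- Claim 2: a violation propagates into the branch with strictly smaller total distance. -/
lemma viol_step (hc : G.Connected) (ha : G.IsAcyclic) {k : ℕ} {b b' : Fin k → V} {p u : V}
    {S : Finset V} (hV : Viol G b p u S) (hu : G.degree u ≠ 1)
    (hmove : ∀ i, b i = b' i ∨ G.Adj (b i) (b' i)) :
    ∃ w S', Viol G b' u w S' ∧ S'.sum (G.dist u) < S.sum (G.dist p) := by
  classical
  obtain ⟨hadj, hsub, hdist, hcard⟩ := hV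
  have hSleaf : ∀ ℓ ∈ S, G.degree ℓ = 1 := by
    intro ℓ hℓ
    have := hsub hℓ
    rw [Finset.mem_filter] at this
    exact this.2
  have hSne_u : ∀ ℓ ∈ S, ℓ ≠ u := by
    intro ℓ hℓ h
    exact hu (h ▸ hSleaf ℓ hℓ)
  have hune : ∀ ℓ ∈ S, u ≠ ℓ := fun ℓ hℓ => Ne.symm (hSne_u ℓ hℓ)
  set F : V → V := fun ℓ => fs G u ℓ with hF
  set W := S.image F with hW
  have hmapsto : ∀ ℓ ∈ S, F ℓ ∈ W := fun ℓ hℓ => Finset.mem_image_of_mem F hℓ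
  have hcardsum : S.card = ∑ w ∈ W, (S.filter fun ℓ => F ℓ = w).card :=
    Finset.card_eq_sum_card_fiberwise hmapsto
  have hdisj : ∀ w ∈ W, ∀ w' ∈ W, w ≠ w' →
      Disjoint (Gam G b' u (S.filter fun ℓ => F ℓ = w))
        (Gam G b' u (S.filter fun ℓ => F ℓ = w')) := by
    intro w hw w' hw' hne
    rw [Finset.disjoint_left]
    intro i hi hi'
    rw [mem_Gam] at hi hi'
    obtain ⟨ℓ, hℓ, hd⟩ := hi
    obtain ⟨ℓ', hℓ', hd'⟩ := hi'
    rw [Finset.mem_filter] at hℓ hℓ'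
    have e1 : fs G u ℓ = w := hℓ.2
    have e2 : fs G u ℓ' = w' := hℓ'.2
    exact guard_two_branches hc ha hd hd' (by rw [e1, e2]; exact hne)
  have hsubU : ∀ w ∈ W, Gam G b' u (S.filter fun ℓ => F ℓ = w) ⊆ Gam G b p S := by
    intro w hw i hi
    rw [mem_Gam] at hi ⊢
    obtain ⟨ℓ, hℓ, hd⟩ := hi
    rw [Finset.mem_filter] at hℓ
    refine ⟨ℓ, hℓ.1, ?_⟩
    have h1 : G.dist (b i) ℓ ≤ G.dist (b' i) ℓ + 1 := stepRel_dist_le hc (hmove i) ℓ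
    have h2 := hdist ℓ hℓ.1
    omega
  have hbiun : W.biUnion (fun w => Gam G b' u (S.filter fun ℓ => F ℓ = w)) ⊆ Gam G b p S := by
    intro i hi
    rw [Finset.mem_biUnion] at hi
    obtain ⟨w, hw, hi⟩ := hi
    exact hsubU w hw hi
  have hsum_le : ∑ w ∈ W, (Gam G b' u (S.filter fun ℓ => F ℓ = w)).card ≤
      (Gam G b p S).card := by
    rw [← Finset.card_biUnion hdisj]
    exact Finset.card_le_card hbiun
  have hex : ∃ w ∈ W, (Gam G b' u (S.filter fun ℓ => F ℓ = w)).card <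
      (S.filter fun ℓ => F ℓ = w).card := by
    by_contra hcon
    push_neg at hcon
    have := Finset.sum_le_sum (fun w hw => hcon w hw)
    omega
  obtain ⟨w, hwW, hwlt⟩ := hex
  rw [hW, Finset.mem_image] at hwW
  obtain ⟨ℓ₀, hℓ₀, hFℓ₀⟩ := hwW
  set S' := S.filter fun ℓ => F ℓ = w with hS'
  have hS'dist : ∀ ℓ ∈ S', G.dist w ℓ + 1 = G.dist u ℓ := by
    intro ℓ hℓ
    rw [hS', Finset.mem_filter] at hℓ
    have hdd := fs_dist hc (hune ℓ hℓ.1)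
    have h2 : fs G u ℓ = w := hℓ.2
    rwa [h2] at hdd
  refine ⟨w, S', ⟨?_, ?_, hS'dist, hwlt⟩, ?_⟩
  · rw [← hFℓ₀]; exact fs_adj hc (hune ℓ₀ hℓ₀)
  · exact (Finset.filter_subset _ _).trans hsub
  · -- sum strictly decreases
    have hne : S'.Nonempty := by
      rcases S'.eq_empty_or_nonempty with h | h
      · rw [h] at hwlt; simp at hwlt
      · exact h
    have h1 : S'.sum (G.dist u) + S'.card = S'.sum (G.dist p) := by
      rw [Finset.card_eq_sum_ones S', ← Finset.sum_add_distrib]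
      apply Finset.sum_congr rfl
      intro ℓ hℓ
      rw [hS', Finset.mem_filter] at hℓ
      have := hdist ℓ hℓ.1
      omega
    have h2 : S'.sum (G.dist p) ≤ S.sum (G.dist p) :=
      Finset.sum_le_sum_of_subset (Finset.filter_subset _ _)
    have h3 : 1 ≤ S'.card := Finset.card_pos.mpr hne
    omega

noncomputable def tgt (G : SimpleGraph V) [DecidableRel G.Adj] (ℓ p : V) : V :=
  if p = ℓ then nbr G ℓ else fs G p ℓ

noncomputable def stp (G : SimpleGraph V) (g x : V) : V :=
  if g = x then g else fs G g x

noncomputable def psi (G : SimpleGraph V) [DecidableRel G.Adj] [Fintype V] (ℓ g p : V) : ℕ :=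
  if g = tgt G ℓ p then 0
  else if g = p then G.dist p ℓ + 1
  else 2 * Fintype.card V - G.dist ℓ g

lemma tgt_of_ne {ℓ p : V} (hp : p ≠ ℓ) : tgt G ℓ p = fs G p ℓ := if_neg hp

lemma tgt_of_eq {ℓ : V} : tgt G ℓ ℓ = nbr G ℓ := if_pos rfl

lemma tgt_adj (hc : G.Connected) {ℓ p : V} (hl : G.degree ℓ = 1) : G.Adj p (tgt G ℓ p) := by
  rw [tgt]
  split_ifs with h
  · subst h; exact nbr_adj (by omega)
  · exact fs_adj hc h

lemma tgt_dist (hc : G.Connected) {ℓ p : V} (hp : p ≠ ℓ) :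
    G.dist (tgt G ℓ p) ℓ + 1 = G.dist p ℓ := by
  rw [tgt_of_ne hp]; exact fs_dist hc hp

lemma stp_eq_self {g : V} (x : V) (h : g = x) : stp G g x = g := if_pos h

lemma stp_near (hc : G.Connected) (ha : G.IsAcyclic) {g x : V} (h : G.dist g x ≤ 1) :
    stp G g x = x := by
  by_cases he : g = x
  · rw [stp, if_pos he]; exact he
  · rw [stp, if_neg he]
    have h1 : 0 < G.dist g x := dist_pos_of_ne hc he
    have h2 : G.Adj g x := by rw [← SimpleGraph.dist_eq_one_iff_adj]; omega
    exact fs_of_adj hc ha h2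

lemma stp_step (hc : G.Connected) (g x : V) : g = stp G g x ∨ G.Adj g (stp G g x) := by
  by_cases he : g = x
  · left; rw [stp, if_pos he]
  · right; rw [stp, if_neg he]; exact fs_adj hc he

lemma step_between (hc : G.Connected) (ha : G.IsAcyclic) {ℓ g x : V}
    (hbet : G.dist ℓ g + G.dist g x = G.dist ℓ x) (hg : g ≠ x) :
    G.dist ℓ (stp G g x) + G.dist (stp G g x) x = G.dist ℓ x ∧
    G.dist ℓ (stp G g x) = G.dist ℓ g + 1 ∧
    G.dist (stp G g x) x + 1 = G.dist g x := by
  rw [stp, if_neg hg]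
  have h1 : G.dist (fs G g x) x + 1 = G.dist g x := fs_dist hc hg
  have h2 : G.Adj g (fs G g x) := fs_adj hc hg
  have h3 : G.dist g (fs G g x) = 1 := (SimpleGraph.dist_eq_one_iff_adj).mpr h2
  have h4 : G.dist ℓ (fs G g x) ≤ G.dist ℓ g + G.dist g (fs G g x) := hc.dist_triangle
  have h5 : G.dist ℓ x ≤ G.dist ℓ (fs G g x) + G.dist (fs G g x) x := hc.dist_triangle
  omega

lemma psi_pos (hc : G.Connected) (ha : G.IsAcyclic) {ℓ g p : V} (hg : g ≠ tgt G ℓ p) :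
    0 < psi G ℓ g p := by
  rw [psi, if_neg hg]
  split_ifs with h
  · omega
  · have := dist_lt_card hc ha ℓ g
    omega

lemma psi_le (hc : G.Connected) (ha : G.IsAcyclic) (ℓ g p : V) :
    psi G ℓ g p ≤ 2 * Fintype.card V := by
  rw [psi]
  split_ifs with h h2
  · omega
  · have := dist_lt_card hc ha p ℓ
    omega
  · omega


lemma stp_far {g x : V} (h : g ≠ x) : stp G g x = fs G g x := if_neg h

lemma tgt_spec (G : SimpleGraph V) [DecidableRel G.Adj] (ℓ p : V) :
    tgt G ℓ p = if p = ℓ then nbr G ℓ else fs G p ℓ := rfl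

lemma psi_eval_caught {ℓ g p : V} (h : g = tgt G ℓ p) : psi G ℓ g p = 0 := by
  rw [psi, if_pos h]

lemma psi_eval_p {ℓ g p : V} (h1 : g ≠ tgt G ℓ p) (h2 : g = p) :
    psi G ℓ g p = G.dist p ℓ + 1 := by
  rw [psi, if_neg h1, if_pos h2]

lemma psi_eval_far {ℓ g p : V} (h1 : g ≠ tgt G ℓ p) (h2 : g ≠ p) :
    psi G ℓ g p = 2 * Fintype.card V - G.dist ℓ g := by
  rw [psi, if_neg h1, if_neg h2]

lemma dist_zero_eq (hc : G.Connected) {u v : V} (h : G.dist u v = 0) : u = v :=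
  hc.dist_eq_zero_iff.mp h

lemma ub_step (hc : G.Connected) (ha : G.IsAcyclic) (hcard : 2 ≤ Fintype.card V)
    {ℓ g p p' : V} (hl : G.degree ℓ = 1) (hstep : p = p' ∨ G.Adj p p')
    (hΦ : g = p ∨ G.dist ℓ g + G.dist g (tgt G ℓ p) = G.dist ℓ (tgt G ℓ p)) :
    (stp G g (tgt G ℓ p') = p' ∨
      G.dist ℓ (stp G g (tgt G ℓ p')) + G.dist (stp G g (tgt G ℓ p')) (tgt G ℓ p') =
        G.dist ℓ (tgt G ℓ p')) ∧
    (g = tgt G ℓ p → stp G g (tgt G ℓ p') = tgt G ℓ p') ∧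
    (g ≠ tgt G ℓ p → psi G ℓ (stp G g (tgt G ℓ p')) p' < psi G ℓ g p) := by
  have htadj : G.Adj p (tgt G ℓ p) := tgt_adj hc hl
  have ht'adj : G.Adj p' (tgt G ℓ p') := tgt_adj hc hl
  have hpt : p ≠ tgt G ℓ p := G.ne_of_adj htadj
  have hpt' : p' ≠ tgt G ℓ p' := G.ne_of_adj ht'adj
  have hWg : G.dist ℓ g < Fintype.card V := dist_lt_card hc ha ℓ g
  rcases hstep with rfl | hadj
  · -- president stays: target unchanged
    rcases hΦ with rfl | hbet
    · -- guard on president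
      have hd1 : G.dist g (tgt G ℓ g) = 1 := (SimpleGraph.dist_eq_one_iff_adj).mpr htadj
      have hg' : stp G g (tgt G ℓ g) = tgt G ℓ g := stp_near hc ha (by omega)
      rw [hg']
      refine ⟨Or.inr (by simp [SimpleGraph.dist_self]), fun h => (hpt h).elim, fun hne => ?_⟩
      have h1 : psi G ℓ (tgt G ℓ g) g = 0 := psi_eval_caught rfl
      have h2 : 0 < psi G ℓ g g := psi_pos hc ha hne
      omega
    · by_cases hcaught : g = tgt G ℓ p
      · have hg' : stp G g (tgt G ℓ p) = g := stp_eq_self _ hcaught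
        exact ⟨Or.inr (by rw [hg']; exact hbet), fun _ => by rw [hg']; exact hcaught,
          fun hne => (hne hcaught).elim⟩
      · obtain ⟨hb1, hb2, hb3⟩ := step_between hc ha hbet hcaught
        refine ⟨Or.inr hb1, fun h => (hcaught h).elim, fun _ => ?_⟩
        have hold_pos : 0 < psi G ℓ g p := psi_pos hc ha hcaught
        by_cases hc1 : stp G g (tgt G ℓ p) = tgt G ℓ p
        · rw [psi_eval_caught hc1]; omega
        · have hWg' : G.dist ℓ (stp G g (tgt G ℓ p)) < Fintype.card V := dist_lt_card hc ha _ _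
          by_cases hc2 : stp G g (tgt G ℓ p) = p
          · rw [psi_eval_p hc1 hc2]
            by_cases hgp : g = p
            · -- impossible: g' = p = g but dist increased
              exfalso
              have : G.dist ℓ (stp G g (tgt G ℓ p)) = G.dist ℓ g := by rw [hc2, ← hgp]
              omega
            · rw [psi_eval_far hcaught hgp]
              have e1 : G.dist p ℓ = G.dist ℓ p := SimpleGraph.dist_comm ..
              have e2 : G.dist ℓ (stp G g (tgt G ℓ p)) = G.dist ℓ p := by rw [hc2]
              omega
          · rw [psi_eval_far hc1 hc2]
            by_cases hgp : g = p
            · -- between ∧ g = p forces p = ℓ, and then the step catches the target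
              exfalso
              by_cases hpl : p = ℓ
              · have : G.dist ℓ g = 0 := by
                  rw [hgp, hpl]; exact SimpleGraph.dist_self
                have hd1 : G.dist g (tgt G ℓ p) = 1 := by
                  rw [hgp]; exact (SimpleGraph.dist_eq_one_iff_adj).mpr htadj
                exact hc1 (stp_near hc ha (by omega))
              · have h1 := tgt_dist hc hpl
                have e1 : G.dist ℓ g = G.dist g ℓ := SimpleGraph.dist_comm ..
                have e2 : G.dist ℓ (tgt G ℓ p) = G.dist (tgt G ℓ p) ℓ := SimpleGraph.dist_comm ..
                have hd1 : G.dist g (tgt G ℓ p) = 1 := by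
                  rw [hgp]; exact (SimpleGraph.dist_eq_one_iff_adj).mpr htadj
                rw [hgp] at hbet e1
                omega
            · rw [psi_eval_far hcaught hgp]
              omega
  · -- president moves along an edge
    have hpp' : p ≠ p' := G.ne_of_adj hadj
    have hdpp' : G.dist p p' = 1 := (SimpleGraph.dist_eq_one_iff_adj).mpr hadj
    rcases adj_dist_cases hc ha hadj ℓ with hW1 | hW2
    · -- president moved toward the leaf : p' = tgt ℓ p
      have hpℓ : p ≠ ℓ := by
        intro h; rw [h] at hW1; simp [SimpleGraph.dist_self] at hW1
      have hteq : tgt G ℓ p = p' := by rw [tgt_of_ne hpℓ]; exact fs_eq hc ha hadj hW1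
      by_cases hp'ℓ : p' = ℓ
      · -- reached the leaf
        have hℓp : G.Adj ℓ p := by rw [← hp'ℓ]; exact hadj.symm
        have ht' : tgt G ℓ p' = p := by
          rw [hp'ℓ, tgt_of_eq]; exact (leaf_unique hl hℓp).symm
        rcases hΦ with rfl | hbet
        · have hg' : stp G g (tgt G ℓ p') = g := stp_eq_self _ (by rw [ht'])
          refine ⟨Or.inr ?_, fun h => (hpt h).elim, fun hne => ?_⟩
          · rw [hg', ht']; simp [SimpleGraph.dist_self]
          · rw [psi_eval_caught (by rw [hg', ht'])]
            exact psi_pos hc ha hne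
        · by_cases hcaught : g = tgt G ℓ p
          · have hgp' : g = p' := hcaught.trans hteq
            have hd1 : G.dist g (tgt G ℓ p') = 1 := by
              rw [hgp', ht', SimpleGraph.dist_comm]; exact hdpp'
            have hg' : stp G g (tgt G ℓ p') = tgt G ℓ p' := stp_near hc ha (by omega)
            exact ⟨Or.inr (by rw [hg']; simp [SimpleGraph.dist_self]), fun _ => hg',
              fun hne => (hne hcaught).elim⟩
          · -- impossible: target is the leaf itself
            exfalso
            have h0 : G.dist ℓ (tgt G ℓ p) = 0 := by
              rw [hteq, hp'ℓ]; exact SimpleGraph.dist_self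
            have : G.dist g (tgt G ℓ p) = 0 := by omega
            exact hcaught (dist_zero_eq hc this)
      · -- new target one step further toward the leaf
        have ht'_dist : G.dist (tgt G ℓ p') ℓ + 1 = G.dist p' ℓ := tgt_dist hc hp'ℓ
        have ht_dist : G.dist (tgt G ℓ p) ℓ + 1 = G.dist p ℓ := tgt_dist hc hpℓ
        have hq1 : 0 < G.dist p' ℓ := dist_pos_of_ne hc hp'ℓ
        have hd_p't' : G.dist p' (tgt G ℓ p') = 1 := (SimpleGraph.dist_eq_one_iff_adj).mpr ht'adj
        rcases hΦ with rfl | hbet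
        · -- guard on president
          have hd_gt' : G.dist g (tgt G ℓ p') = 2 := by
            have htr1 : G.dist g ℓ ≤ G.dist g (tgt G ℓ p') + G.dist (tgt G ℓ p') ℓ :=
              hc.dist_triangle
            have htr2 : G.dist g (tgt G ℓ p') ≤ G.dist g p' + G.dist p' (tgt G ℓ p') :=
              hc.dist_triangle
            have e1 : G.dist g p' = 1 := hdpp'
            omega
          have hne_gt' : g ≠ tgt G ℓ p' := by
            intro h; rw [h] at hd_gt'; simp [SimpleGraph.dist_self] at hd_gt'
          have hg' : stp G g (tgt G ℓ p') = p' := by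
            rw [stp_far hne_gt']
            exact fs_eq hc ha hadj (by omega)
          rw [hg']
          refine ⟨Or.inl rfl, fun h => (hpt h).elim, fun hne => ?_⟩
          rw [psi_eval_p hpt' rfl, psi_eval_p hne rfl]
          omega
        · by_cases hcaught : g = tgt G ℓ p
          · have hgp' : g = p' := hcaught.trans hteq
            have hd1 : G.dist g (tgt G ℓ p') = 1 := by rw [hgp']; exact hd_p't'
            have hg' : stp G g (tgt G ℓ p') = tgt G ℓ p' := stp_near hc ha (by omega)
            exact ⟨Or.inr (by rw [hg']; simp [SimpleGraph.dist_self]), fun _ => hg',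
              fun hne => (hne hcaught).elim⟩
          · -- not caught; use betweenness of t' on the segment ℓ–t
            have hm : 0 < G.dist g (tgt G ℓ p) := dist_pos_of_ne hc hcaught
            have e1 : G.dist ℓ (tgt G ℓ p) = G.dist (tgt G ℓ p) ℓ := SimpleGraph.dist_comm ..
            have e2 : G.dist ℓ (tgt G ℓ p') = G.dist (tgt G ℓ p') ℓ := SimpleGraph.dist_comm ..
            have e3 : G.dist (tgt G ℓ p') (tgt G ℓ p) = 1 := by
              rw [hteq, SimpleGraph.dist_comm]; exact hd_p't'
            have hbetT : G.dist ℓ (tgt G ℓ p') + G.dist (tgt G ℓ p') (tgt G ℓ p) =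
                G.dist ℓ (tgt G ℓ p) := by
              rw [e3, e1, e2, hteq]
              omega
            rcases between_trans hc ha hbet hbetT with hi | hii
            · -- g between ℓ and t'
              by_cases hgt' : g = tgt G ℓ p'
              · have hg' : stp G g (tgt G ℓ p') = g := stp_eq_self _ hgt'
                refine ⟨Or.inr ?_, fun h => (hcaught h).elim, fun _ => ?_⟩
                · rw [hg', hgt']; simp [SimpleGraph.dist_self]
                · rw [psi_eval_caught (by rw [hg']; exact hgt')]
                  exact psi_pos hc ha hcaught
              · obtain ⟨hb1, hb2, hb3⟩ := step_between hc ha hi hgt'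
                refine ⟨Or.inr hb1, fun h => (hcaught h).elim, fun _ => ?_⟩
                have hold_pos : 0 < psi G ℓ g p := psi_pos hc ha hcaught
                by_cases hc1 : stp G g (tgt G ℓ p') = tgt G ℓ p'
                · rw [psi_eval_caught hc1]; omega
                · by_cases hc2 : stp G g (tgt G ℓ p') = p'
                  · -- impossible : g' would be t, too far from ℓ
                    exfalso
                    have hx : G.dist ℓ (stp G g (tgt G ℓ p')) = G.dist ℓ p' := by rw [hc2]
                    have hy : G.dist ℓ p' = G.dist p' ℓ := SimpleGraph.dist_comm ..
                    omega
                  · rw [psi_eval_far hc1 hc2]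
                    by_cases hgp : g = p
                    · exfalso
                      have ea : G.dist ℓ g = G.dist ℓ p := by rw [hgp]
                      have eb : G.dist ℓ p = G.dist p ℓ := SimpleGraph.dist_comm ..
                      have ec : G.dist g (tgt G ℓ p) = 1 := by
                        rw [hgp]; exact (SimpleGraph.dist_eq_one_iff_adj).mpr htadj
                      omega
                    · rw [psi_eval_far hcaught hgp]
                      omega
            · -- t' between ℓ and g : forces g = t'
              have hgt' : g = tgt G ℓ p' := by
                have : G.dist (tgt G ℓ p') g = 0 := by omega
                exact (dist_zero_eq hc this).symm
              have hg' : stp G g (tgt G ℓ p') = g := stp_eq_self _ hgt'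
              refine ⟨Or.inr ?_, fun h => (hcaught h).elim, fun _ => ?_⟩
              · rw [hg', hgt']; simp [SimpleGraph.dist_self]
              · rw [psi_eval_caught (by rw [hg']; exact hgt')]
                exact psi_pos hc ha hcaught
    · -- president moved away from the leaf : t' = p
      have hp'ℓ : p' ≠ ℓ := by
        intro h; rw [h] at hW2
        have := SimpleGraph.dist_self (G := G) (v := ℓ)
        omega
      have ht' : tgt G ℓ p' = p := by
        rw [tgt_of_ne hp'ℓ]; exact fs_eq hc ha hadj.symm hW2
      rcases hΦ with rfl | hbet
      · have hg' : stp G g (tgt G ℓ p') = g := stp_eq_self _ (by rw [ht'])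
        refine ⟨Or.inr ?_, fun h => (hpt h).elim, fun hne => ?_⟩
        · rw [hg', ht']; simp [SimpleGraph.dist_self]
        · rw [psi_eval_caught (by rw [hg', ht'])]
          exact psi_pos hc ha hne
      · by_cases hcaught : g = tgt G ℓ p
        · have hd1 : G.dist g (tgt G ℓ p') = 1 := by
            rw [hcaught, ht', SimpleGraph.dist_comm]
            exact (SimpleGraph.dist_eq_one_iff_adj).mpr htadj
          have hg' : stp G g (tgt G ℓ p') = tgt G ℓ p' := stp_near hc ha (by omega)
          exact ⟨Or.inr (by rw [hg']; simp [SimpleGraph.dist_self]), fun _ => hg',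
            fun hne => (hne hcaught).elim⟩
        · by_cases hpℓ : p = ℓ
          · -- president was on the leaf; the guard must be on the leaf too
            have hd_lt : G.dist ℓ (tgt G ℓ p) = 1 := by
              have h1 : G.dist p (tgt G ℓ p) = 1 := (SimpleGraph.dist_eq_one_iff_adj).mpr htadj
              calc G.dist ℓ (tgt G ℓ p) = G.dist p (tgt G ℓ p) := by rw [hpℓ]
              _ = 1 := h1
            have hm : 0 < G.dist g (tgt G ℓ p) := dist_pos_of_ne hc hcaught
            have hgl : G.dist ℓ g = 0 := by omega
            have hgeq : g = tgt G ℓ p' := by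
              rw [ht', hpℓ]
              exact (dist_zero_eq hc hgl).symm
            have hg' : stp G g (tgt G ℓ p') = g := stp_eq_self _ hgeq
            refine ⟨Or.inr ?_, fun h => (hcaught h).elim, fun _ => ?_⟩
            · rw [hg', hgeq]; simp [SimpleGraph.dist_self]
            · rw [psi_eval_caught (by rw [hg']; exact hgeq)]
              exact psi_pos hc ha hcaught
          · -- main case: guard strictly between ℓ and p
            have ht_dist : G.dist (tgt G ℓ p) ℓ + 1 = G.dist p ℓ := tgt_dist hc hpℓ
            have e1 : G.dist ℓ (tgt G ℓ p) = G.dist (tgt G ℓ p) ℓ := SimpleGraph.dist_comm ..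
            have e2 : G.dist ℓ p = G.dist p ℓ := SimpleGraph.dist_comm ..
            have hm : 0 < G.dist g (tgt G ℓ p) := dist_pos_of_ne hc hcaught
            have hd_tp : G.dist (tgt G ℓ p) p = 1 := by
              rw [SimpleGraph.dist_comm]; exact (SimpleGraph.dist_eq_one_iff_adj).mpr htadj
            have hgp_ge : G.dist g (tgt G ℓ p) + 1 ≤ G.dist g p := by
              have htr : G.dist ℓ p ≤ G.dist ℓ g + G.dist g p := hc.dist_triangle
              omega
            have hgp_le : G.dist g p ≤ G.dist g (tgt G ℓ p) + 1 := by
              have htr : G.dist g p ≤ G.dist g (tgt G ℓ p) + G.dist (tgt G ℓ p) p :=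
                hc.dist_triangle
              omega
            have hgp : g ≠ p := by
              intro h
              rw [h] at hgp_ge
              have : G.dist p p = 0 := SimpleGraph.dist_self
              omega
            have hbetp : G.dist ℓ g + G.dist g p = G.dist ℓ p := by omega
            obtain ⟨hb1, hb2, hb3⟩ := step_between hc ha hbetp hgp
            refine ⟨Or.inr (by rw [ht']; exact hb1), fun h => (hcaught h).elim, fun _ => ?_⟩
            by_cases hc1 : stp G g p = tgt G ℓ p'
            · exfalso
              rw [ht'] at hc1
              have : G.dist (stp G g p) p = 0 := by rw [hc1]; exact SimpleGraph.dist_self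
              omega
            · by_cases hc2 : stp G g p = p'
              · exfalso
                have hx : G.dist ℓ (stp G g p) = G.dist ℓ p' := by rw [hc2]
                have hy : G.dist ℓ p' = G.dist p' ℓ := SimpleGraph.dist_comm ..
                omega
              · have hgoal1 : psi G ℓ (stp G g p) p' = 2 * Fintype.card V -
                    G.dist ℓ (stp G g p) := psi_eval_far hc1 hc2
                have hgoal2 : psi G ℓ g p = 2 * Fintype.card V - G.dist ℓ g :=
                  psi_eval_far hcaught hgp
                rw [ht', hgoal1, hgoal2]
                omega

lemma lower_bound (hc : G.Connected) (ha : G.IsAcyclic) (h3 : 3 ≤ Fintype.card V) {k : ℕ}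
    (hk : k < (Finset.univ.filter fun v => G.degree v = 1).card) :
    ¬ BodyguardsWin G k := by
  rintro ⟨binit, bmove, hleg, hwin⟩
  classical
  obtain ⟨p₀, hp₀⟩ := exists_nonleaf hc h3
  let mu : (Fin k → V) → V → ℕ := fun b p =>
    sInf {m | ∃ u S, Viol G b p u S ∧ S.sum (G.dist p) = m}
  let pm : (Fin k → V) → V → V := fun b p =>
    if (∃ v, G.Adj p v ∧ ∀ i, b i ≠ v) then p
    else if h : ∃ u, ∃ S, Viol G b p u S ∧ S.sum (G.dist p) = mu b p then h.choose else p
  have hpmleg : ∀ bs p, stepRel G p (pm bs p) := by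
    intro bs p
    simp only [pm]
    split_ifs with h1 h2
    · exact Or.inl rfl
    · exact Or.inr h2.choose_spec.choose_spec.1.1
    · exact Or.inl rfl
  obtain ⟨N, hN⟩ := hwin (fun _ => p₀) pm hpmleg
  set play := gamePlay binit bmove (fun _ => p₀) pm with hplay
  have hmid : ∀ n, (play (n+1)).1 = bmove (play n).1 (play n).2 := fun n => rfl
  have hpres : ∀ n, (play (n+1)).2 = pm ((play (n+1)).1) ((play n).2) := fun n => rfl
  -- the president is never at a leaf
  have hinv : ∀ n, G.degree ((play n).2) ≠ 1 := by
    intro n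
    induction n with
    | zero => exact hp₀
    | succ n ih =>
      rw [hpres n]
      show G.degree (pm ((play (n+1)).1) ((play n).2)) ≠ 1
      by_cases h1 : (∃ v, G.Adj ((play n).2) v ∧ ∀ i, (play (n+1)).1 i ≠ v)
      · have : pm ((play (n+1)).1) ((play n).2) = (play n).2 := if_pos h1
        rw [this]; exact ih
      · by_cases h2 : ∃ u, ∃ S, Viol G ((play (n+1)).1) ((play n).2) u S ∧
            S.sum (G.dist ((play n).2)) = mu ((play (n+1)).1) ((play n).2)
        · have heq : pm ((play (n+1)).1) ((play n).2) = h2.choose := by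
            show (if _ then _ else _) = _
            rw [if_neg h1, dif_pos h2]
          rw [heq]
          have hcov : ∀ v, G.Adj ((play n).2) v → ∃ i, (play (n+1)).1 i = v := by
            intro v hv
            by_contra hcon
            push_neg at hcon
            exact h1 ⟨v, hv, hcon⟩
          exact viol_not_leaf hc ha h2.choose_spec.choose_spec.1 hcov
        · have : pm ((play (n+1)).1) ((play n).2) = (play n).2 := by
            show (if _ then _ else _) = _
            rw [if_neg h1, dif_neg h2]
          rw [this]; exact ih
  -- potential strictly decreases from time N on
  have hdec : ∀ n, N ≤ n →
      mu ((play (n+2)).1) ((play (n+1)).2) < mu ((play (n+1)).1) ((play n).2) := by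
    intro n hn
    have hcov : ∀ v, G.Adj ((play n).2) v → ∃ i, (play (n+1)).1 i = v := hN n hn
    have h1 : ¬ (∃ v, G.Adj ((play n).2) v ∧ ∀ i, (play (n+1)).1 i ≠ v) := by
      rintro ⟨v, hv, hvi⟩
      obtain ⟨i, hi⟩ := hcov v hv
      exact hvi i hi
    have hbad := viol_exists hc ha ((play (n+1)).1) (hinv n) hk
    have hTne : {m | ∃ u S, Viol G ((play (n+1)).1) ((play n).2) u S ∧
        S.sum (G.dist ((play n).2)) = m}.Nonempty := by
      obtain ⟨u, S, hV⟩ := hbad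
      exact ⟨S.sum (G.dist ((play n).2)), u, S, hV, rfl⟩
    have hmem := Nat.sInf_mem hTne
    have h2 : ∃ u, ∃ S, Viol G ((play (n+1)).1) ((play n).2) u S ∧
        S.sum (G.dist ((play n).2)) = mu ((play (n+1)).1) ((play n).2) := hmem
    have hq : (play (n+1)).2 = h2.choose := by
      rw [hpres n]
      simp only [pm, if_neg h1, dif_pos h2]
    obtain ⟨S₀, hV₀, hsum₀⟩ := h2.choose_spec
    have hustar : G.degree h2.choose ≠ 1 := viol_not_leaf hc ha hV₀ hcov
    have hmove : ∀ i, (play (n+1)).1 i = (play (n+2)).1 i ∨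
        G.Adj ((play (n+1)).1 i) ((play (n+2)).1 i) := by
      intro i
      rw [hmid (n+1)]
      exact hleg ((play (n+1)).1) ((play (n+1)).2) i
    obtain ⟨w, S', hV', hlt⟩ := viol_step hc ha hV₀ hustar hmove
    have hle : mu ((play (n+2)).1) ((play (n+1)).2) ≤ S'.sum (G.dist ((play (n+1)).2)) := by
      apply Nat.sInf_le
      refine ⟨w, S', ?_, rfl⟩
      rw [hq]; exact hV'
    calc mu ((play (n+2)).1) ((play (n+1)).2) ≤ S'.sum (G.dist ((play (n+1)).2)) := hle
      _ = S'.sum (G.dist h2.choose) := by rw [hq]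
      _ < S₀.sum (G.dist ((play n).2)) := hlt
      _ = mu ((play (n+1)).1) ((play n).2) := hsum₀
  -- contradiction
  have hmono : ∀ j, mu ((play (N+j+1)).1) ((play (N+j)).2) + j ≤
      mu ((play (N+1)).1) ((play N).2) := by
    intro j
    induction j with
    | zero => simp
    | succ j ih =>
      have hd := hdec (N+j) (by omega)
      rw [show N + (j+1) = N + j + 1 from rfl, show N + j + 1 + 1 = N + j + 2 from rfl]
      omega
  have := hmono (mu ((play (N+1)).1) ((play N).2) + 1)
  omega

lemma upper_bound (hc : G.Connected) (ha : G.IsAcyclic) (h3 : 3 ≤ Fintype.card V) :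
    BodyguardsWin G (Finset.univ.filter fun v => G.degree v = 1).card := by
  classical
  have hcard2 : 2 ≤ Fintype.card V := by omega
  set Lv := (Finset.univ.filter fun v => G.degree v = 1) with hLv
  set e := Lv.equivFin.symm with he
  set lf : Fin Lv.card → V := fun i => (e i).1 with hlf
  have hlfdeg : ∀ i, G.degree (lf i) = 1 := by
    intro i
    exact (Finset.mem_filter.mp (e i).2).2
  refine ⟨lf, fun bs p i => stp G (bs i) (tgt G (lf i) p), ?_, ?_⟩
  · intro bs p i; exact stp_step hc (bs i) (tgt G (lf i) p)
  · intro pinit pmove hpleg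
    set play := gamePlay lf (fun bs p i => stp G (bs i) (tgt G (lf i) p)) pinit pmove with hplay
    have hmid : ∀ n i, (play (n+1)).1 i = stp G ((play n).1 i) (tgt G (lf i) ((play n).2)) :=
      fun n i => rfl
    have hpstep : ∀ n, (play n).2 = (play (n+1)).2 ∨ G.Adj ((play n).2) ((play (n+1)).2) :=
      fun n => hpleg ((play (n+1)).1) ((play n).2)
    have hKEY : ∀ n, ∀ i,
        ((play (n+1)).1 i = (play n).2 ∨
          G.dist (lf i) ((play (n+1)).1 i) +
            G.dist ((play (n+1)).1 i) (tgt G (lf i) ((play n).2)) =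
          G.dist (lf i) (tgt G (lf i) ((play n).2))) ∧
        ((play (n+1)).1 i = tgt G (lf i) ((play n).2) ∨
          psi G (lf i) ((play (n+1)).1 i) ((play n).2) + (n+1) ≤ 2 * Fintype.card V) := by
      intro n
      induction n with
      | zero =>
        intro i
        have h0 : (play 0).1 i = lf i := rfl
        have hΦ0 : lf i = (play 0).2 ∨
            G.dist (lf i) (lf i) + G.dist (lf i) (tgt G (lf i) ((play 0).2)) =
              G.dist (lf i) (tgt G (lf i) ((play 0).2)) := by
          right
          have : G.dist (lf i) (lf i) = 0 := SimpleGraph.dist_self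
          omega
        have hstep0 : (play 0).2 = (play 0).2 ∨ G.Adj ((play 0).2) ((play 0).2) := Or.inl rfl
        have := ub_step hc ha hcard2 (hlfdeg i) hstep0 hΦ0
        refine ⟨this.1, ?_⟩
        by_cases hcaught : lf i = tgt G (lf i) ((play 0).2)
        · exact Or.inl (this.2.1 hcaught)
        · right
          have h1 := this.2.2 hcaught
          have h2 := psi_le hc ha (lf i) (lf i) ((play 0).2)
          rw [hmid 0 i, show (play 0).1 i = lf i from rfl]
          omega
      | succ n ih =>
        intro i
        obtain ⟨hΦ, hps⟩ := ih i
        have := ub_step hc ha hcard2 (hlfdeg i) (hpstep n) hΦ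
        refine ⟨this.1, ?_⟩
        by_cases hcaught : (play (n+1)).1 i = tgt G (lf i) ((play n).2)
        · exact Or.inl (this.2.1 hcaught)
        · right
          have h1 := this.2.2 hcaught
          rcases hps with h | h
          · exact absurd h hcaught
          · rw [hmid (n+1) i]
            omega
    have hCaught : ∀ n, 2 * Fintype.card V ≤ n → ∀ i,
        (play (n+1)).1 i = tgt G (lf i) ((play n).2) := by
      intro n hn i
      rcases (hKEY n i).2 with h | h
      · exact h
      · by_contra hnc
        have := psi_pos hc ha (G := G) hnc
        omega
    refine ⟨2 * Fintype.card V, ?_⟩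
    intro n hn v hadjv
    obtain ⟨ℓ, hdeg, htv⟩ := exists_leaf_tgt hc ha hcard2 hadjv
    have hmem : ℓ ∈ Lv := by rw [hLv, Finset.mem_filter]; exact ⟨Finset.mem_univ _, hdeg⟩
    refine ⟨e.symm ⟨ℓ, hmem⟩, ?_⟩
    have hlfi : lf (e.symm ⟨ℓ, hmem⟩) = ℓ := by
      rw [hlf]
      simp
    rw [hCaught n hn (e.symm ⟨ℓ, hmem⟩), hlfi, tgt_spec]
    exact htv

end BGaux

/-- If `T` is a tree on at least three vertices with `ℓ` leaves, then `B(T) = ℓ`. -/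
theorem bodyguardNumber_tree {V : Type*} [Fintype V] [DecidableEq V] (G : SimpleGraph V)
    [DecidableRel G.Adj] (hT : G.IsTree) (h3 : 3 ≤ Fintype.card V) :
    bodyguardNumber G = (Finset.univ.filter fun v => G.degree v = 1).card := by
  have hc := hT.isConnected
  have ha := hT.IsAcyclic
  have hub := BGaux.upper_bound hc ha h3
  unfold bodyguardNumber
  apply le_antisymm
  · exact Nat.sInf_le hub
  · have hne : {k | BodyguardsWin G k}.Nonempty :=
      ⟨(Finset.univ.filter fun v => G.degree v = 1).card, hub⟩
    apply le_csInf hne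
    rintro b hb
    have hwin : BodyguardsWin G b := hb
    by_contra hlt
    push_neg at hlt
    exact BGaux.lower_bound hc ha h3 hlt hwin
end
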